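/- arXiv:2211.06933 — 5 statements merged into one kernel-verified Lean document; each statement's English description precedes it below -/
import Mathlib

section
/- Let T ∈ (0, ∞) and let u be an admissible solution of the 1D diffusionless equation on [0,T). Then u is uniformly bounded on [0,T): sup over (t,x) ∈ [0,T) × ℝ of u(t,x) is finite (i.e., the L^∞ norm of u(t,·) does not blow up in finite time). -/
open MeasureTheory Set

lemma periodic_bdd {h : ℝ → ℝ} (hc : Continuous h) (hp : ∀ x, h (x + 1) = h x) :
    ∃ C : ℝ, 0 ≤ C ∧ ∀ x, |h x| ≤ C := by
  obtain ⟨C, hC⟩ := (isCompact_Icc : IsCompact (Icc (0:ℝ) 1)).exists_bound_of_continuousOn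
    hc.continuousOn
  refine ⟨max C 0, le_max_right _ _, fun x => ?_⟩
  have hper : Function.Periodic h 1 := hp
  have h2 := hper.sub_int_mul_eq (n := ⌊x⌋) (x := x)
  rw [mul_one] at h2
  rw [Int.self_sub_floor] at h2
  rw [← h2]
  have := hC (Int.fract x) ⟨Int.fract_nonneg x, (Int.fract_lt_one x).le⟩
  rw [Real.norm_eq_abs] at this
  exact this.trans (le_max_left _ _)

lemma key_bound {a α g M Ff Lf dd f₁ f₂ u₁ u₂ : ℝ} (ha : 0 < a) (hα : 0 ≤ α)
    (hg0 : 0 ≤ g) (hgM : g ≤ M) (hu₁ : 0 ≤ u₁) (hu₂ : 0 ≤ u₂)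
    (hf₁0 : 0 ≤ f₁) (hf₂0 : 0 ≤ f₂) (hf₁ : f₁ ≤ Ff) (hf₂ : f₂ ≤ Ff)
    (hdf : |f₁ - f₂| ≤ Lf * dd) :
    |(-((a * u₁ ^ 2 + α * f₁) * g - u₁) / (u₁ + 1) ^ 2) -
      (-((a * u₂ ^ 2 + α * f₂) * g - u₂) / (u₂ + 1) ^ 2)|
      ≤ (2 * a * M + 2 * α * M * Ff + 3) * |(u₁ + 1)⁻¹ - (u₂ + 1)⁻¹| + α * M * (Lf * dd) := by
  have h1 : (0:ℝ) < u₁ + 1 := by linarith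
  have h2 : (0:ℝ) < u₂ + 1 := by linarith
  set W₁ := (u₁ + 1)⁻¹ with hW₁
  set W₂ := (u₂ + 1)⁻¹ with hW₂
  have hW₁pos : 0 < W₁ := inv_pos.mpr h1
  have hW₂pos : 0 < W₂ := inv_pos.mpr h2
  have hW₁le : W₁ ≤ 1 := by rw [hW₁, inv_le_one_iff₀]; right; linarith
  have hW₂le : W₂ ≤ 1 := by rw [hW₂, inv_le_one_iff₀]; right; linarith
  set A := g * a * (2 - W₁ - W₂) - g * α * f₁ * (W₁ + W₂) + 1 - (W₁ + W₂) with hA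
  have hiden : (-((a * u₁ ^ 2 + α * f₁) * g - u₁) / (u₁ + 1) ^ 2) -
      (-((a * u₂ ^ 2 + α * f₂) * g - u₂) / (u₂ + 1) ^ 2)
      = A * (W₁ - W₂) - g * α * (f₁ - f₂) * W₂ ^ 2 := by
    rw [hA, hW₁, hW₂]
    field_simp
    ring
  rw [hiden]
  have hM0 : 0 ≤ M := le_trans hg0 hgM
  have hFf0 : 0 ≤ Ff := le_trans hf₁0 hf₁
  have hLd : 0 ≤ Lf * dd := le_trans (abs_nonneg _) hdf
  have eaM : 0 ≤ a * M := mul_nonneg ha.le hM0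
  have eαMF : 0 ≤ α * M * Ff := by positivity
  have hAbd : |A| ≤ 2 * a * M + 2 * α * M * Ff + 3 := by
    have e1 : 0 ≤ g * a * (2 - W₁ - W₂) := by
      apply mul_nonneg (mul_nonneg hg0 ha.le); linarith
    have e1' : g * a * (2 - W₁ - W₂) ≤ M * a * 2 := by
      apply mul_le_mul (mul_le_mul hgM le_rfl ha.le hM0) (by linarith) (by linarith)
        (by positivity)
    have e2 : 0 ≤ g * α * f₁ * (W₁ + W₂) := by
      apply mul_nonneg (mul_nonneg (mul_nonneg hg0 hα) hf₁0); linarith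
    have e2' : g * α * f₁ * (W₁ + W₂) ≤ M * α * Ff * 2 := by
      apply mul_le_mul (mul_le_mul (mul_le_mul hgM le_rfl hα hM0) hf₁ hf₁0
        (by positivity)) (by linarith) (by linarith) (by positivity)
    rw [abs_le]
    constructor
    · rw [hA]; linarith
    · rw [hA]; linarith
  have habs : |A * (W₁ - W₂) - g * α * (f₁ - f₂) * W₂ ^ 2|
      ≤ |A * (W₁ - W₂)| + |g * α * (f₁ - f₂) * W₂ ^ 2| := abs_sub _ _
  have hterm1 : |A * (W₁ - W₂)| ≤ (2 * a * M + 2 * α * M * Ff + 3) * |W₁ - W₂| := by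
    rw [abs_mul]
    exact mul_le_mul_of_nonneg_right hAbd (abs_nonneg _)
  have hterm2 : |g * α * (f₁ - f₂) * W₂ ^ 2| ≤ α * M * (Lf * dd) := by
    rw [abs_mul, abs_mul, abs_mul, abs_of_nonneg hg0, abs_of_nonneg hα,
      abs_of_nonneg (sq_nonneg W₂)]
    have hsq : W₂ ^ 2 ≤ 1 := by nlinarith
    calc g * α * |f₁ - f₂| * W₂ ^ 2 ≤ g * α * |f₁ - f₂| * 1 :=
          mul_le_mul_of_nonneg_left hsq (by positivity)
      _ = g * α * |f₁ - f₂| := mul_one _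
      _ ≤ M * α * (Lf * dd) := by
          apply mul_le_mul (mul_le_mul hgM le_rfl hα hM0) hdf (abs_nonneg _) (by positivity)
      _ = α * M * (Lf * dd) := by ring
  linarith

set_option maxHeartbeats 1000000 in
/-- global `L^∞` bound for the 1D diffusionless equation on `[0,T)`,
`T ∈ (0,∞)`: `sup_{(t,x) ∈ [0,T) × ℝ} u(t,x) < ∞`. -/
theorem no_blowup_Linfty_1d_no_diffusion
    (a α M T : ℝ) (ha : 0 < a) (hα : 0 ≤ α) (hM : 0 < M) (hT : 0 < T)
    (f : ℝ → ℝ) (hf : ContDiff ℝ (⊤ : ℕ∞) f)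
    (hf0 : ∀ x, 0 ≤ f x)
    (hfper : ∀ x, f (x + 1) = f x)
    (u : ℝ → ℝ → ℝ)
    (hu : ContDiffOn ℝ (⊤ : ℕ∞) (fun p : ℝ × ℝ => u p.1 p.2) (Set.Ico 0 T ×ˢ Set.univ))
    (huper : ∀ t ∈ Set.Ico 0 T, ∀ x, u t (x + 1) = u t x)
    (hupos : ∀ t ∈ Set.Ico 0 T, ∀ x, 0 ≤ u t x)
    (hmass0 : ∀ t ∈ Set.Ico 0 T, 0 ≤ ∫ x in (0:ℝ)..1, u t x)
    (hmassM : ∀ t ∈ Set.Ico 0 T, (∫ x in (0:ℝ)..1, u t x) ≤ M)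
    (hPDE : ∀ t ∈ Set.Ico 0 T, ∀ x,
      derivWithin (fun s => u s x) (Set.Ici 0) t
        = (a * u t x ^ 2 + α * f x) * (M - ∫ y in (0:ℝ)..1, u t y) - u t x)
    :
    ∃ C : ℝ, ∀ t ∈ Set.Ico 0 T, ∀ x : ℝ, u t x ≤ C := by
  classical
  have htop : (1 : WithTop ℕ∞) ≤ ((⊤ : ℕ∞) : WithTop ℕ∞) := by exact_mod_cast (le_top : (1:ℕ∞) ≤ ⊤)
  have h0T : (0:ℝ) ∈ Ico 0 T := ⟨le_rfl, hT⟩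
  -- bounds on f and its derivative
  obtain ⟨Ff, hFf0, hFfb⟩ := periodic_bdd hf.continuous hfper
  have hfd : Differentiable ℝ f := hf.differentiable (ne_of_gt (lt_of_lt_of_le zero_lt_one htop))
  have hfd_per : ∀ x, deriv f (x + 1) = deriv f x := by
    intro x
    have h1 : (fun y => f (y + 1)) = f := funext fun y => hfper y
    have h2 := deriv_comp_add_const f 1 x
    rw [h1] at h2
    exact h2.symm
  obtain ⟨Lf, hLf0, hLfb⟩ := periodic_bdd (hf.continuous_deriv htop) hfd_per
  have hfLip : ∀ x₁ x₂ : ℝ, |f x₁ - f x₂| ≤ Lf * |x₁ - x₂| := by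
    intro x₁ x₂
    have := Convex.norm_image_sub_le_of_norm_deriv_le (s := (univ : Set ℝ))
      (fun x _ => hfd x) (fun x _ => by rw [Real.norm_eq_abs]; exact hLfb x)
      convex_univ (mem_univ x₂) (mem_univ x₁)
    simpa [Real.norm_eq_abs] using this
  -- smoothness of slices
  have hslice_t : ∀ x : ℝ, ContDiffOn ℝ (⊤ : ℕ∞) (fun t => u t x) (Ico 0 T) := by
    intro x
    have h1 : ContDiffOn ℝ (⊤ : ℕ∞) (fun t : ℝ => (t, x)) (Ico 0 T) :=
      (contDiff_id.prodMk contDiff_const).contDiffOn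
    exact hu.comp h1 (fun t ht => ⟨ht, mem_univ _⟩)
  have hslice_x : ∀ t ∈ Ico 0 T, ContDiff ℝ (⊤ : ℕ∞) (u t) := by
    intro t ht
    have h1 : ContDiffOn ℝ (⊤ : ℕ∞) (fun x : ℝ => (t, x)) (univ : Set ℝ) :=
      (contDiff_const.prodMk contDiff_id).contDiffOn
    rw [← contDiffOn_univ]
    exact hu.comp h1 (fun x _ => ⟨ht, mem_univ _⟩)
  -- Lipschitz bound for u 0
  have hu0 : ContDiff ℝ (⊤ : ℕ∞) (u 0) := hslice_x 0 h0T
  have hu0d : Differentiable ℝ (u 0) := hu0.differentiable (ne_of_gt (lt_of_lt_of_le zero_lt_one htop))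
  have hu0per : ∀ x, u 0 (x + 1) = u 0 x := huper 0 h0T
  have hu0d_per : ∀ x, deriv (u 0) (x + 1) = deriv (u 0) x := by
    intro x
    have h1 : (fun y => u 0 (y + 1)) = u 0 := funext fun y => hu0per y
    have h2 := deriv_comp_add_const (u 0) 1 x
    rw [h1] at h2
    exact h2.symm
  obtain ⟨L₀, hL₀0, hL₀b⟩ := periodic_bdd (hu0.continuous_deriv htop) hu0d_per
  have hu0Lip : ∀ x₁ x₂ : ℝ, |u 0 x₁ - u 0 x₂| ≤ L₀ * |x₁ - x₂| := by
    intro x₁ x₂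
    have := Convex.norm_image_sub_le_of_norm_deriv_le (s := (univ : Set ℝ))
      (fun x _ => hu0d x) (fun x _ => by rw [Real.norm_eq_abs]; exact hL₀b x)
      convex_univ (mem_univ x₂) (mem_univ x₁)
    simpa [Real.norm_eq_abs] using this
  -- time derivative
  have hderiv : ∀ x : ℝ, ∀ t ∈ Ico 0 T, HasDerivWithinAt (fun s => u s x)
      ((a * u t x ^ 2 + α * f x) * (M - ∫ y in (0:ℝ)..1, u t y) - u t x) (Ici t) t := by
    intro x t ht
    have hEq : Ico (0:ℝ) T =ᶠ[nhds t] Ici (0:ℝ) := by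
      rw [Filter.eventuallyEq_set]
      filter_upwards [Iio_mem_nhds ht.2] with y hy
      simp only [mem_Ico, mem_Ici]
      exact ⟨fun h => h.1, fun h => ⟨h, hy⟩⟩
    have hdW : DifferentiableWithinAt ℝ (fun s => u s x) (Ico 0 T) t :=
      ((hslice_t x).differentiableOn (ne_of_gt (lt_of_lt_of_le zero_lt_one htop))) t ht
    have hdd := hdW.hasDerivWithinAt
    have hgg : HasDerivWithinAt (fun s => u s x)
        (derivWithin (fun s => u s x) (Ico 0 T) t) (Ici 0) t := hdd.congr_set hEq
    rw [derivWithin_congr_set hEq, hPDE t ht x] at hgg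
    exact hgg.mono (Ici_subset_Ici.mpr ht.1)
  -- positivity facts
  have hup1 : ∀ t ∈ Ico 0 T, ∀ x : ℝ, (0:ℝ) < u t x + 1 := by
    intro t ht x; have := hupos t ht x; linarith
  -- mass factor bounds
  have hg0 : ∀ t ∈ Ico 0 T, 0 ≤ M - ∫ y in (0:ℝ)..1, u t y :=
    fun t ht => sub_nonneg.mpr (hmassM t ht)
  have hgM : ∀ t ∈ Ico 0 T, M - (∫ y in (0:ℝ)..1, u t y) ≤ M := by
    intro t ht; have := hmass0 t ht; linarith
  -- constants
  set K : ℝ := 2 * a * M + 2 * α * M * Ff + 3 with hK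
  have hKpos : 0 < K := by
    have e1 : 0 ≤ 2 * a * M := by positivity
    have e2 : 0 ≤ 2 * α * M * Ff := by positivity
    rw [hK]; linarith
  set εc : ℝ := α * M * Lf with hεc
  have hεc0 : 0 ≤ εc := by positivity
  set B : ℝ := (L₀ + εc / K + εc / K) * Real.exp (K * T) + 1 with hB
  have hBpos : 0 < B := by
    have : 0 ≤ (L₀ + εc / K + εc / K) * Real.exp (K * T) := by positivity
    rw [hB]; linarith
  -- the W function and its Lipschitz property in x, uniform in t
  have hWlip : ∀ t ∈ Ico 0 T, ∀ x₁ x₂ : ℝ,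
      |(u t x₁ + 1)⁻¹ - (u t x₂ + 1)⁻¹| ≤ B * |x₁ - x₂| := by
    intro τ hτ x₁ x₂
    have hsub : Icc (0:ℝ) τ ⊆ Ico 0 T := fun s hs => ⟨hs.1, lt_of_le_of_lt hs.2 hτ.2⟩
    have hsub' : Ico (0:ℝ) τ ⊆ Ico 0 T := fun s hs => ⟨hs.1, lt_trans hs.2 hτ.2⟩
    -- continuity of the difference
    have hcW : ∀ x : ℝ, ContinuousOn (fun s => (u s x + 1)⁻¹) (Icc 0 τ) := by
      intro x
      apply ContinuousOn.inv₀
      · exact (((hslice_t x).continuousOn).mono hsub).add continuousOn_const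
      · intro s hs; exact (hup1 s (hsub hs) x).ne'
    have hfc : ContinuousOn (fun s => (u s x₁ + 1)⁻¹ - (u s x₂ + 1)⁻¹) (Icc 0 τ) :=
      (hcW x₁).sub (hcW x₂)
    -- derivatives
    have hWd : ∀ x : ℝ, ∀ s ∈ Ico 0 T, HasDerivWithinAt (fun r => (u r x + 1)⁻¹)
        (-((a * u s x ^ 2 + α * f x) * (M - ∫ y in (0:ℝ)..1, u s y) - u s x) /
          (u s x + 1) ^ 2) (Ici s) s := by
      intro x s hs
      exact ((hderiv x s hs).add_const 1).inv (hup1 s hs x).ne'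
    have hfd' : ∀ s ∈ Ico 0 τ, HasDerivWithinAt
        (fun r => (u r x₁ + 1)⁻¹ - (u r x₂ + 1)⁻¹)
        ((-((a * u s x₁ ^ 2 + α * f x₁) * (M - ∫ y in (0:ℝ)..1, u s y) - u s x₁) /
          (u s x₁ + 1) ^ 2) -
         (-((a * u s x₂ ^ 2 + α * f x₂) * (M - ∫ y in (0:ℝ)..1, u s y) - u s x₂) /
          (u s x₂ + 1) ^ 2)) (Ici s) s := by
      intro s hs
      exact (hWd x₁ s (hsub' hs)).sub (hWd x₂ s (hsub' hs))
    -- initial bound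
    have hinit : ‖(u 0 x₁ + 1)⁻¹ - (u 0 x₂ + 1)⁻¹‖ ≤ (L₀ + εc / K) * |x₁ - x₂| := by
      rw [Real.norm_eq_abs]
      have e1 : |(u 0 x₁ + 1)⁻¹ - (u 0 x₂ + 1)⁻¹| ≤ |u 0 x₁ - u 0 x₂| := by
        rw [inv_sub_inv (hup1 0 h0T x₁).ne' (hup1 0 h0T x₂).ne']
        rw [abs_div]
        have hden : (1:ℝ) ≤ |(u 0 x₁ + 1) * (u 0 x₂ + 1)| := by
          rw [abs_of_pos (mul_pos (hup1 0 h0T x₁) (hup1 0 h0T x₂))]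
          have h1 := hupos 0 h0T x₁; have h2 := hupos 0 h0T x₂
          nlinarith
        have : |u 0 x₂ + 1 - (u 0 x₁ + 1)| = |u 0 x₁ - u 0 x₂| := by
          rw [← abs_neg]; ring_nf
        rw [this]
        exact div_le_self (abs_nonneg _) hden
      have e2 := hu0Lip x₁ x₂
      have e3 : L₀ * |x₁ - x₂| ≤ (L₀ + εc / K) * |x₁ - x₂| := by
        apply mul_le_mul_of_nonneg_right _ (abs_nonneg _)
        have : 0 ≤ εc / K := div_nonneg hεc0 hKpos.le
        linarith
      linarith
    -- Grönwall bound hypothesis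
    have hbd : ∀ s ∈ Ico 0 τ,
        ‖(-((a * u s x₁ ^ 2 + α * f x₁) * (M - ∫ y in (0:ℝ)..1, u s y) - u s x₁) /
          (u s x₁ + 1) ^ 2) -
         (-((a * u s x₂ ^ 2 + α * f x₂) * (M - ∫ y in (0:ℝ)..1, u s y) - u s x₂) /
          (u s x₂ + 1) ^ 2)‖
        ≤ K * ‖(u s x₁ + 1)⁻¹ - (u s x₂ + 1)⁻¹‖ + εc * |x₁ - x₂| := by
      intro s hs
      have hs' := hsub' hs
      rw [Real.norm_eq_abs, Real.norm_eq_abs]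
      have := key_bound (a := a) (α := α) (g := M - ∫ y in (0:ℝ)..1, u s y) (M := M)
        (Ff := Ff) (Lf := Lf) (dd := |x₁ - x₂|) (f₁ := f x₁) (f₂ := f x₂)
        (u₁ := u s x₁) (u₂ := u s x₂) ha hα (hg0 s hs') (hgM s hs')
        (hupos s hs' x₁) (hupos s hs' x₂) (hf0 x₁) (hf0 x₂)
        ((hFfb x₁).trans' (le_abs_self _)) ((hFfb x₂).trans' (le_abs_self _))
        (hfLip x₁ x₂)
      calc _ ≤ (2 * a * M + 2 * α * M * Ff + 3) * |(u s x₁ + 1)⁻¹ - (u s x₂ + 1)⁻¹|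
            + α * M * (Lf * |x₁ - x₂|) := this
        _ = K * |(u s x₁ + 1)⁻¹ - (u s x₂ + 1)⁻¹| + εc * |x₁ - x₂| := by
            rw [hK, hεc]; ring
    -- apply Grönwall
    have hg := norm_le_gronwallBound_of_norm_deriv_right_le hfc hfd' hinit hbd
      τ ⟨hτ.1, le_rfl⟩
    rw [Real.norm_eq_abs] at hg
    refine hg.trans ?_
    rw [gronwallBound_of_K_ne_0 hKpos.ne']
    set dx := |x₁ - x₂| with hdx
    have hd0 : 0 ≤ dx := abs_nonneg _
    have hexp : Real.exp (K * (τ - 0)) ≤ Real.exp (K * T) := by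
      apply Real.exp_le_exp.mpr
      apply mul_le_mul_of_nonneg_left _ hKpos.le
      linarith [hτ.2]
    have hexpT : (0:ℝ) < Real.exp (K * T) := Real.exp_pos _
    have t1 : (L₀ + εc / K) * dx * Real.exp (K * (τ - 0))
        ≤ (L₀ + εc / K) * dx * Real.exp (K * T) := by
      apply mul_le_mul_of_nonneg_left hexp
      have : 0 ≤ εc / K := div_nonneg hεc0 hKpos.le
      positivity
    have t2 : εc * dx / K * (Real.exp (K * (τ - 0)) - 1)
        ≤ εc * dx / K * Real.exp (K * T) := by
      apply mul_le_mul_of_nonneg_left (by linarith) (by positivity)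
    have t3 : (L₀ + εc / K) * dx * Real.exp (K * T) + εc * dx / K * Real.exp (K * T)
        = ((L₀ + εc / K + εc / K) * Real.exp (K * T)) * dx := by ring
    have t4 : ((L₀ + εc / K + εc / K) * Real.exp (K * T)) * dx ≤ B * dx := by
      apply mul_le_mul_of_nonneg_right _ hd0
      rw [hB]
      have h5 : 0 ≤ εc / K := div_nonneg hεc0 hKpos.le
      nlinarith [hexpT]
    linarith
  -- final bound
  refine ⟨(Real.exp (B * (M + 1)) - 1) / B, ?_⟩
  intro t ht x
  have hcpos : 0 < (u t x + 1)⁻¹ := inv_pos.mpr (hup1 t ht x)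
  set c := (u t x + 1)⁻¹ with hc
  -- pointwise lower bound on [x, x+1]
  have hpt : ∀ y ∈ Icc x (x + 1), (c + B * (y - x))⁻¹ - 1 ≤ u t y := by
    intro y hy
    have hWy : (u t y + 1)⁻¹ ≤ c + B * (y - x) := by
      have h1 := hWlip t ht y x
      have h2 : |y - x| = y - x := abs_of_nonneg (by linarith [hy.1])
      rw [h2] at h1
      have h3 := (abs_le.mp h1).2
      linarith
    have hWypos : 0 < (u t y + 1)⁻¹ := inv_pos.mpr (hup1 t ht y)
    have h3 : (c + B * (y - x))⁻¹ ≤ ((u t y + 1)⁻¹)⁻¹ :=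
      inv_anti₀ hWypos hWy
    rw [inv_inv] at h3
    linarith
  have hcu : Continuous (u t) := (hslice_x t ht).continuous
  have hInt1 : IntervalIntegrable (u t) volume x (x + 1) := hcu.intervalIntegrable _ _
  have hlow_pos : ∀ y ∈ Icc x (x + 1), 0 < c + B * (y - x) := by
    intro y hy
    have : 0 ≤ B * (y - x) := mul_nonneg hBpos.le (by linarith [hy.1])
    linarith
  have hclow : ContinuousOn (fun y => (c + B * (y - x))⁻¹ - 1) (Icc x (x + 1)) := by
    apply ContinuousOn.sub _ continuousOn_const
    apply ContinuousOn.inv₀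
    · exact (continuous_const.add (continuous_const.mul
        (continuous_id.sub continuous_const))).continuousOn
    · exact fun y hy => (hlow_pos y hy).ne'
  have hxx1 : x ≤ x + 1 := by linarith
  have hInt2 : IntervalIntegrable (fun y => (c + B * (y - x))⁻¹ - 1) volume x (x + 1) := by
    apply ContinuousOn.intervalIntegrable
    rwa [uIcc_of_le hxx1]
  have hmono := intervalIntegral.integral_mono_on hxx1 hInt2 hInt1 hpt
  have hftc : (∫ y in x..(x + 1), ((c + B * (y - x))⁻¹ - 1))
      = ((1 / B) * Real.log (c + B * ((x + 1) - x)) - ((x + 1) - x))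
        - ((1 / B) * Real.log (c + B * (x - x)) - (x - x)) := by
    apply intervalIntegral.integral_eq_sub_of_hasDerivAt
      (f := fun y => (1 / B) * Real.log (c + B * (y - x)) - (y - x))
      (f' := fun y => (c + B * (y - x))⁻¹ - 1)
    · intro y hy
      rw [uIcc_of_le hxx1] at hy
      have hpos := hlow_pos y hy
      have hd1 : HasDerivAt (fun y => c + B * (y - x)) B y := by
        simpa using (((hasDerivAt_id y).sub_const x).const_mul B).const_add c
      have hd2 : HasDerivAt (fun y => Real.log (c + B * (y - x)))
          (B / (c + B * (y - x))) y := hd1.log hpos.ne'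
      have hd3 := (hd2.const_mul (1 / B)).sub ((hasDerivAt_id y).sub_const x)
      convert hd3 using 1
      · rfl
      rw [one_div_mul_eq_div, div_div_cancel_left' hBpos.ne']
    · exact hInt2
  have hsimp1 : c + B * ((x + 1) - x) = c + B := by ring
  have hsimp2 : c + B * (x - x) = c := by ring
  rw [hsimp1, hsimp2] at hftc
  have hper_u : Function.Periodic (u t) 1 := huper t ht
  have hshift : (∫ y in x..(x + 1), u t y) = ∫ y in (0:ℝ)..1, u t y := by
    have h6 := hper_u.intervalIntegral_add_eq x 0
    rw [zero_add] at h6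
    exact h6
  have hchain : (1 / B) * Real.log (c + B) - (1 / B) * Real.log c - 1 ≤ M := by
    have h7 := hmassM t ht
    rw [hshift] at hmono
    rw [hftc] at hmono
    have : ((1 / B) * Real.log (c + B) - ((x + 1) - x))
        - ((1 / B) * Real.log c - (x - x)) ≤ M := le_trans hmono h7
    linarith [this]
  -- from the log inequality to the final bound
  have hlogle : Real.log (c + B) ≤ Real.log (c * Real.exp (B * (M + 1))) := by
    rw [Real.log_mul hcpos.ne' (Real.exp_pos _).ne', Real.log_exp]
    have hB1 : (1:ℝ) / B > 0 := by positivity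
    have h8 : (1 / B) * (Real.log (c + B) - Real.log c) ≤ M + 1 := by linarith
    have h9 : Real.log (c + B) - Real.log c ≤ B * (M + 1) := by
      have := mul_le_mul_of_nonneg_left h8 hBpos.le
      rw [mul_comm (1/B)] at this
      rw [← mul_assoc] at this
      field_simp at this
      linarith [this]
    linarith
  have hcB : c + B ≤ c * Real.exp (B * (M + 1)) := by
    have hA0 : (0:ℝ) < c + B := by linarith
    have hB0 : (0:ℝ) < c * Real.exp (B * (M + 1)) := by positivity
    have := Real.exp_le_exp.mpr hlogle
    rwa [Real.exp_log hA0, Real.exp_log hB0] at this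
  have hEgt : (0:ℝ) < Real.exp (B * (M + 1)) - 1 := by
    have h10 : (0:ℝ) < B * (M + 1) := by positivity
    have := Real.add_one_lt_exp (ne_of_gt h10)
    linarith
  have hfin : (u t x + 1) ≤ (Real.exp (B * (M + 1)) - 1) / B := by
    have h11 : u t x + 1 = c⁻¹ := by rw [hc, inv_inv]
    rw [h11]
    rw [inv_eq_one_div, div_le_div_iff₀ hcpos hBpos]
    nlinarith [hcB]
  linarith [hfin]
end

section
/- Let T ∈ (0, ∞), let u be an admissible solution of the 1D diffusionless equation on [0,T), and define ρ(t,x) = e^{−t}/(1 + u(t,x)). Then the first spatial derivative of ρ is bounded up to time T: sup over (t,x) ∈ [0,T) × ℝ of |∂ₓρ(t,x)| is finite. -/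
open MeasureTheory Set

lemma sliceX {E : Type*} [NormedAddCommGroup E] [NormedSpace ℝ E]
    {Φ : ℝ × ℝ → E} {D : ℝ × ℝ →L[ℝ] E} {S : Set (ℝ × ℝ)} {t x : ℝ}
    (h : HasFDerivWithinAt Φ D S (t, x)) (hS : ∀ y, (t, y) ∈ S) :
    HasDerivAt (fun y => Φ (t, y)) (D (0, 1)) x := by
  have hγ : HasDerivAt (fun y : ℝ => ((t, y) : ℝ × ℝ)) ((0 : ℝ), (1 : ℝ)) x :=
    HasDerivAt.prodMk (hasDerivAt_const x t) (hasDerivAt_id x)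
  rw [← hasDerivWithinAt_univ]
  exact h.comp_hasDerivWithinAt x hγ.hasDerivWithinAt (fun y _ => hS y)

lemma sliceT {E : Type*} [NormedAddCommGroup E] [NormedSpace ℝ E]
    {Φ : ℝ × ℝ → E} {D : ℝ × ℝ →L[ℝ] E} {T t x : ℝ}
    (h : HasFDerivWithinAt Φ D (Ico 0 T ×ˢ (univ : Set ℝ)) (t, x)) :
    HasDerivWithinAt (fun s => Φ (s, x)) (D (1, 0)) (Ico 0 T) t := by
  have hγ : HasDerivAt (fun s : ℝ => ((s, x) : ℝ × ℝ)) ((1 : ℝ), (0 : ℝ)) t :=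
    HasDerivAt.prodMk (hasDerivAt_id t) (hasDerivAt_const t x)
  exact h.comp_hasDerivWithinAt t hγ.hasDerivWithinAt (fun s hs => (⟨hs, mem_univ x⟩ : (s, x) ∈ Ico 0 T ×ˢ (univ : Set ℝ)))

lemma ico_mem_nhdsWithin_Ici0 {T t : ℝ} (ht : t ∈ Ico 0 T) : Ico 0 T ∈ nhdsWithin t (Ici 0) := by
  have : Ici (0:ℝ) ∩ Iio T ∈ nhdsWithin t (Ici 0) :=
    Filter.inter_mem self_mem_nhdsWithin (mem_nhdsWithin_of_mem_nhds (Iio_mem_nhds ht.2))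
  simpa [Ici_inter_Iio] using this

lemma ico_mem_nhdsWithin_Ici {T t : ℝ} (ht : t ∈ Ico 0 T) : Ico 0 T ∈ nhdsWithin t (Ici t) := by
  have : Ici t ∩ Iio T ∈ nhdsWithin t (Ici t) :=
    Filter.inter_mem self_mem_nhdsWithin (mem_nhdsWithin_of_mem_nhds (Iio_mem_nhds ht.2))
  refine Filter.mem_of_superset this ?_
  rw [Ici_inter_Iio]
  exact Ico_subset_Ico_left ht.1

lemma per_bdd {g : ℝ → ℝ} (hc : Continuous g) (hp : ∀ y, g (y + 1) = g y) :
    ∃ C : ℝ, 0 ≤ C ∧ ∀ y, |g y| ≤ C := by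
  obtain ⟨C, hC⟩ := (isCompact_Icc (a := (0:ℝ)) (b := 1)).exists_bound_of_continuousOn
    hc.continuousOn
  refine ⟨C, le_trans (abs_nonneg _) (by simpa using hC 0 ⟨le_rfl, zero_le_one⟩), fun y => ?_⟩
  have hper : Function.Periodic g 1 := hp
  have heq : g (y - (⌊y⌋ : ℤ) * 1) = g y := hper.sub_int_mul_eq (n := ⌊y⌋)
  rw [mul_one] at heq
  have hfr : y - ⌊y⌋ ∈ Icc (0:ℝ) 1 :=
    ⟨by simpa using (Int.fract_nonneg y), le_of_lt (by simpa using Int.fract_lt_one y)⟩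
  calc |g y| = |g (y - ⌊y⌋)| := by rw [heq]
    _ ≤ C := by simpa using hC _ hfr

lemma gronwallBound_mono_time {δ K ε t T : ℝ} (hδ : 0 ≤ δ) (hε : 0 ≤ ε) (hK : 0 < K)
    (ht : 0 ≤ t) (htT : t ≤ T) : gronwallBound δ K ε t ≤ gronwallBound δ K ε T := by
  simp only [gronwallBound_of_K_ne_0 hK.ne']
  have h1 : Real.exp (K * t) ≤ Real.exp (K * T) := by
    apply Real.exp_le_exp.2
    nlinarith
  have h2 : (0:ℝ) ≤ ε / K := div_nonneg hε hK.le
  nlinarith [Real.exp_pos (K*t)]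


lemma keyid (a al P X uu ff fd B : ℝ) (hq : (1:ℝ) + uu ≠ 0) :
    ((-(P * (-1)) * X + -P * ((a * (2 * uu * X) + al * fd) * B - X)) * (1 + uu) ^ 2 -
        -P * X * ((2:ℕ) * (1 + uu) ^ (2 - 1) * ((a * uu ^ 2 + al * ff) * B - uu))) /
      ((1 + uu) ^ 2) ^ 2
    = (-2 + 2 * a * B * (uu * (1 + uu)⁻¹) - 2 * al * ff * B * (1 + uu)⁻¹
        + 2 * (uu * (1 + uu)⁻¹)) * (-P * X / (1 + uu) ^ 2)
      + -(al * B * P * ((1 + uu)⁻¹) ^ 2 * fd) := by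
  field_simp
  ring

lemma keybound (a al M Fb Fb' P X uu ff fd B : ℝ)
    (ha : 0 < a) (hal : 0 ≤ al) (hM : 0 < M) (huu : 0 ≤ uu)
    (hff0 : 0 ≤ ff) (hffb : ff ≤ Fb) (hFb0 : 0 ≤ Fb)
    (hfd : |fd| ≤ Fb') (hFb'0 : 0 ≤ Fb')
    (hB0 : 0 ≤ B) (hBM : B ≤ M) (hP0 : 0 < P) (hP1 : P ≤ 1) :
    |((-(P * (-1)) * X + -P * ((a * (2 * uu * X) + al * fd) * B - X)) * (1 + uu) ^ 2 -
        -P * X * ((2:ℕ) * (1 + uu) ^ (2 - 1) * ((a * uu ^ 2 + al * ff) * B - uu))) /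
      ((1 + uu) ^ 2) ^ 2|
    ≤ (4 + 2 * a * M + 2 * al * Fb * M) * |(-P * X / (1 + uu) ^ 2)| + al * Fb' * M := by
  have hq0 : (0:ℝ) < 1 + uu := by linarith
  have hiq0 : (0:ℝ) < (1 + uu)⁻¹ := inv_pos.2 hq0
  have hiq1 : (1 + uu)⁻¹ ≤ 1 := by
    rw [inv_le_one_iff₀]; right; linarith
  have hw0 : 0 ≤ uu * (1 + uu)⁻¹ := mul_nonneg huu hiq0.le
  have hw1 : uu * (1 + uu)⁻¹ ≤ 1 := by
    have h := (div_le_one hq0).2 (by linarith : uu ≤ 1 + uu)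
    rwa [div_eq_mul_inv] at h
  rw [keyid a al P X uu ff fd B hq0.ne']
  have hBw : B * (uu * (1 + uu)⁻¹) ≤ M := by
    have := mul_le_mul hBM hw1 hw0 hM.le
    linarith
  have hBw0 : 0 ≤ B * (uu * (1 + uu)⁻¹) := mul_nonneg hB0 hw0
  have h1 : a * (B * (uu * (1 + uu)⁻¹)) ≤ a * M := mul_le_mul_of_nonneg_left hBw ha.le
  have h1' : 0 ≤ a * (B * (uu * (1 + uu)⁻¹)) := mul_nonneg ha.le hBw0
  have hfB : ff * B ≤ Fb * M := mul_le_mul hffb hBM hB0 hFb0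
  have hfB0 : 0 ≤ ff * B := mul_nonneg hff0 hB0
  have hfBi : ff * B * (1 + uu)⁻¹ ≤ Fb * M := by
    have := mul_le_mul hfB hiq1 hiq0.le (mul_nonneg hFb0 hM.le)
    linarith
  have hfBi0 : 0 ≤ ff * B * (1 + uu)⁻¹ := mul_nonneg hfB0 hiq0.le
  have h2 : al * (ff * B * (1 + uu)⁻¹) ≤ al * (Fb * M) := mul_le_mul_of_nonneg_left hfBi hal
  have h2' : 0 ≤ al * (ff * B * (1 + uu)⁻¹) := mul_nonneg hal hfBi0
  have hc : |(-2 + 2 * a * B * (uu * (1 + uu)⁻¹) - 2 * al * ff * B * (1 + uu)⁻¹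
      + 2 * (uu * (1 + uu)⁻¹))| ≤ 4 + 2 * a * M + 2 * al * Fb * M := by
    have haM : (0:ℝ) ≤ a * M := by positivity
    rw [abs_le]
    constructor <;> linarith [h1, h1', h2, h2', hw0, hw1, haM]
  have hr : |(-(al * B * P * ((1 + uu)⁻¹) ^ 2 * fd))| ≤ al * Fb' * M := by
    have hiq2 : ((1 + uu)⁻¹) ^ 2 ≤ 1 := by nlinarith
    have hiq2' : (0:ℝ) ≤ ((1 + uu)⁻¹) ^ 2 := by positivity
    have hBP : B * P ≤ M := by nlinarith
    have hBP0 : 0 ≤ B * P := mul_nonneg hB0 hP0.le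
    have s1 : B * P * ((1 + uu)⁻¹) ^ 2 ≤ M := by
      have := mul_le_mul hBP hiq2 hiq2' hM.le
      linarith
    have s10 : 0 ≤ B * P * ((1 + uu)⁻¹) ^ 2 := mul_nonneg hBP0 hiq2'
    have hco : al * B * P * ((1 + uu)⁻¹) ^ 2 ≤ al * M := by
      have := mul_le_mul_of_nonneg_left s1 hal
      linarith [this]
    have hco0 : 0 ≤ al * B * P * ((1 + uu)⁻¹) ^ 2 := by
      have := mul_nonneg hal s10
      linarith [this]
    rw [abs_neg, abs_mul, abs_of_nonneg hco0]
    calc al * B * P * ((1 + uu)⁻¹) ^ 2 * |fd| ≤ al * M * Fb' :=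
          mul_le_mul hco hfd (abs_nonneg _) (mul_nonneg hal hM.le)
      _ = al * Fb' * M := by ring
  calc |_ + -(al * B * P * ((1 + uu)⁻¹) ^ 2 * fd)|
      ≤ |(-2 + 2 * a * B * (uu * (1 + uu)⁻¹) - 2 * al * ff * B * (1 + uu)⁻¹
          + 2 * (uu * (1 + uu)⁻¹)) * (-P * X / (1 + uu) ^ 2)|
        + |(-(al * B * P * ((1 + uu)⁻¹) ^ 2 * fd))| := abs_add_le _ _
    _ ≤ (4 + 2 * a * M + 2 * al * Fb * M) * |(-P * X / (1 + uu) ^ 2)| + al * Fb' * M := by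
        rw [abs_mul]
        have := abs_nonneg (-P * X / (1 + uu) ^ 2)
        nlinarith [hc, hr, abs_nonneg ((-2 + 2 * a * B * (uu * (1 + uu)⁻¹)
          - 2 * al * ff * B * (1 + uu)⁻¹ + 2 * (uu * (1 + uu)⁻¹)))]

/-- The transformed quantity `ρ(t,x) = e^{-t} / (1 + u(t,x))`. -/
noncomputable def rho (u : ℝ → ℝ → ℝ) (t x : ℝ) : ℝ :=
  Real.exp (-t) / (1 + u t x)

set_option maxHeartbeats 2000000 in
/-- the first spatial derivative of `ρ` is bounded up to the finite time `T`. -/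
theorem rho_first_derivative_bounded
    (a α M T : ℝ) (ha : 0 < a) (hα : 0 ≤ α) (hM : 0 < M) (hT : 0 < T)
    (f : ℝ → ℝ) (hf : ContDiff ℝ (⊤ : ℕ∞) f)
    (hf0 : ∀ x, 0 ≤ f x)
    (hfper : ∀ x, f (x + 1) = f x)
    (u : ℝ → ℝ → ℝ)
    (hu : ContDiffOn ℝ (⊤ : ℕ∞) (fun p : ℝ × ℝ => u p.1 p.2) (Set.Ico 0 T ×ˢ Set.univ))
    (huper : ∀ t ∈ Set.Ico 0 T, ∀ x, u t (x + 1) = u t x)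
    (hupos : ∀ t ∈ Set.Ico 0 T, ∀ x, 0 ≤ u t x)
    (hmass0 : ∀ t ∈ Set.Ico 0 T, 0 ≤ ∫ x in (0:ℝ)..1, u t x)
    (hmassM : ∀ t ∈ Set.Ico 0 T, (∫ x in (0:ℝ)..1, u t x) ≤ M)
    (hPDE : ∀ t ∈ Set.Ico 0 T, ∀ x,
      derivWithin (fun s => u s x) (Set.Ici 0) t
        = (a * u t x ^ 2 + α * f x) * (M - ∫ y in (0:ℝ)..1, u t y) - u t x)
    :
    ∃ C : ℝ, ∀ t ∈ Set.Ico 0 T, ∀ x : ℝ, |deriv (rho u t) x| ≤ C := by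
  classical
  set S : Set (ℝ × ℝ) := Set.Ico 0 T ×ˢ (Set.univ : Set ℝ) with hS_def
  set G : ℝ × ℝ → ℝ := fun p => u p.1 p.2 with hG_def
  have hSuniq : UniqueDiffOn ℝ S := (uniqueDiffOn_Ico 0 T).prod uniqueDiffOn_univ
  have hmemS : ∀ t ∈ Set.Ico 0 T, ∀ x : ℝ, ((t, x) : ℝ × ℝ) ∈ S :=
    fun t ht x => ⟨ht, mem_univ x⟩
  have hclos : ∀ p ∈ S, p ∈ closure (interior S) := by
    intro p hp
    have : interior S = Ioo 0 T ×ˢ (univ : Set ℝ) := by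
      rw [hS_def, interior_prod_eq, interior_Ico, interior_univ]
    rw [this, closure_prod_eq, closure_Ioo hT.ne, closure_univ]
    exact ⟨⟨hp.1.1, hp.1.2.le⟩, mem_univ _⟩
  have hGd : DifferentiableOn ℝ G S := hu.differentiableOn (by simp)
  set F : ℝ × ℝ → (ℝ × ℝ →L[ℝ] ℝ) := fderivWithin ℝ G S with hF_def
  have hF : ContDiffOn ℝ (⊤ : ℕ∞) F S := hu.fderivWithin hSuniq (by simp)
  have hFd : DifferentiableOn ℝ F S := hF.differentiableOn (by simp)
  set F2 : ℝ × ℝ → (ℝ × ℝ →L[ℝ] (ℝ × ℝ →L[ℝ] ℝ)) := fderivWithin ℝ F S with hF2_def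
  -- spatial derivative of u
  have hux : ∀ t ∈ Set.Ico 0 T, ∀ x : ℝ, HasDerivAt (u t) (F (t, x) (0, 1)) x := by
    intro t ht x
    have := sliceX (Φ := G) ((hGd _ (hmemS t ht x)).hasFDerivWithinAt) (fun y => hmemS t ht y)
    exact this
  -- time derivative of u within Ici t, and its PDE value
  have hutT : ∀ t ∈ Set.Ico 0 T, ∀ x : ℝ,
      HasDerivWithinAt (fun s => u s x) (F (t, x) (1, 0)) (Ico 0 T) t := by
    intro t ht x
    exact sliceT (Φ := G) ((hGd _ (hmemS t ht x)).hasFDerivWithinAt)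
  have hFt_eq : ∀ t ∈ Set.Ico 0 T, ∀ x : ℝ,
      F (t, x) (1, 0)
        = (a * u t x ^ 2 + α * f x) * (M - ∫ y in (0:ℝ)..1, u t y) - u t x := by
    intro t ht x
    have h0 : HasDerivWithinAt (fun s => u s x) (F (t, x) (1, 0)) (Ici 0) t :=
      (hutT t ht x).mono_of_mem_nhdsWithin (ico_mem_nhdsWithin_Ici0 ht)
    have := h0.derivWithin ((uniqueDiffOn_Ici 0) t ht.1)
    rw [← this, hPDE t ht x]
  -- second mixed derivative, t-direction of spatial derivative
  have hUXt0 : ∀ t ∈ Set.Ico 0 T, ∀ x : ℝ,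
      HasDerivWithinAt (fun s => F (s, x) (0, 1)) (F2 (t, x) (1, 0) (0, 1)) (Ici t) t := by
    intro t ht x
    have hbase : HasDerivWithinAt (fun s => F (s, x)) (F2 (t, x) (1, 0)) (Ico 0 T) t :=
      sliceT (Φ := F) ((hFd _ (hmemS t ht x)).hasFDerivWithinAt)
    have happ := hbase.clm_apply (hasDerivWithinAt_const t _ ((0:ℝ), (1:ℝ)))
    simp only [add_zero, map_zero] at happ
    exact happ.mono_of_mem_nhdsWithin (ico_mem_nhdsWithin_Ici ht)
  -- symmetry of second derivative
  have hsym : ∀ t ∈ Set.Ico 0 T, ∀ x : ℝ,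
      F2 (t, x) (1, 0) (0, 1) = F2 (t, x) (0, 1) (1, 0) := by
    intro t ht x
    have h2 : ContDiffWithinAt ℝ 2 G S (t, x) := (hu _ (hmemS t ht x)).of_le (by norm_cast)
    have := h2.isSymmSndFDerivWithinAt (by simp) hSuniq (hclos _ (hmemS t ht x)) (hmemS t ht x)
    exact this (1, 0) (0, 1)
  -- x-direction derivative of the time derivative, computed from PDE
  have hmix : ∀ t ∈ Set.Ico 0 T, ∀ x : ℝ,
      F2 (t, x) (0, 1) (1, 0)
        = (a * (2 * u t x * F (t, x) (0, 1)) + α * deriv f x)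
            * (M - ∫ y in (0:ℝ)..1, u t y) - F (t, x) (0, 1) := by
    intro t ht x
    have hbase : HasDerivAt (fun y => F (t, y)) (F2 (t, x) (0, 1)) x :=
      sliceX (Φ := F) ((hFd _ (hmemS t ht x)).hasFDerivWithinAt) (fun y => hmemS t ht y)
    have happ := hbase.clm_apply (hasDerivAt_const x ((1:ℝ), (0:ℝ)))
    simp only [add_zero, map_zero] at happ
    -- happ : HasDerivAt (fun y => F (t, y) (1, 0)) (F2 (t,x) (0,1) (1,0)) x
    have heqfun : (fun y => F (t, y) (1, 0))
        = fun y => (a * u t y ^ 2 + α * f y) * (M - ∫ z in (0:ℝ)..1, u t z) - u t y :=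
      funext fun y => hFt_eq t ht y
    rw [heqfun] at happ
    -- direct derivative of the RHS
    have hfd : HasDerivAt f (deriv f x) x := (hf.differentiable (by simp) x).hasDerivAt
    have hdirect : HasDerivAt
        (fun y => (a * u t y ^ 2 + α * f y) * (M - ∫ z in (0:ℝ)..1, u t z) - u t y)
        ((a * (2 * u t x * F (t, x) (0, 1)) + α * deriv f x)
            * (M - ∫ y in (0:ℝ)..1, u t y) - F (t, x) (0, 1)) x := by
      have h1 := (((hux t ht x).pow 2).const_mul a).add (hfd.const_mul α)
      have h2 := (h1.mul_const (M - ∫ z in (0:ℝ)..1, u t z)).sub (hux t ht x)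
      exact h2.congr_deriv (by ring)
    exact (happ.unique hdirect).symm ▸ rfl
  -- bounds on f and deriv f
  obtain ⟨Fb, hFb0, hFb⟩ := per_bdd hf.continuous hfper
  have hdfper : ∀ y, deriv f (y + 1) = deriv f y := by
    intro y
    have hfe : (fun z => f (z + 1)) = f := funext hfper
    calc deriv f (y + 1) = deriv (fun z => f (z + 1)) y := (deriv_comp_add_const ..).symm
      _ = deriv f y := by rw [hfe]
  obtain ⟨Fb', hFb'0, hFb'⟩ := per_bdd (hf.continuous_deriv (by simp)) hdfper
  set K : ℝ := 4 + 2 * a * M + 2 * α * Fb * M with hK_def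
  have hK : 0 < K := by
    have h1 : 0 ≤ 2 * a * M := by positivity
    have h2 : 0 ≤ 2 * α * Fb * M := by
      have := mul_nonneg (mul_nonneg (mul_nonneg (by norm_num : (0:ℝ) ≤ 2) hα) hFb0) hM.le
      linarith
    rw [hK_def]; linarith
  set ε : ℝ := α * Fb' * M with hε_def
  have hε : 0 ≤ ε := mul_nonneg (mul_nonneg hα hFb'0) hM.le
  have h0T : (0 : ℝ) ∈ Set.Ico 0 T := ⟨le_rfl, hT⟩
  -- initial bound, uniform in x by periodicity
  set g0 : ℝ → ℝ := fun y => -Real.exp (-(0 : ℝ)) * F (0, y) (0, 1) / (1 + u 0 y) ^ 2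
    with hg0_def
  have hg0cont : Continuous g0 := by
    have hsl : Continuous (fun y : ℝ => ((0 : ℝ), y)) := by continuity
    have hFc : Continuous (fun y : ℝ => F (0, y)) :=
      hF.continuousOn.comp_continuous hsl (fun y => hmemS 0 h0T y)
    have hXc : Continuous (fun y : ℝ => F (0, y) (0, 1)) :=
      ((ContinuousLinearMap.apply ℝ ℝ ((0 : ℝ), (1 : ℝ))).continuous).comp hFc
    have huc : Continuous (fun y : ℝ => u 0 y) :=
      hu.continuousOn.comp_continuous hsl (fun y => hmemS 0 h0T y)
    have hden : ∀ y : ℝ, (1 + u 0 y) ^ 2 ≠ 0 := by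
      intro y
      have := hupos 0 h0T y
      positivity
    exact (continuous_const.mul hXc).div ((continuous_const.add huc).pow 2) hden
  have hg0per : ∀ y, g0 (y + 1) = g0 y := by
    intro y
    have hu0e : (fun z => u 0 (z + 1)) = u 0 := funext (huper 0 h0T)
    have hder : deriv (u 0) (y + 1) = deriv (u 0) y := by
      calc deriv (u 0) (y + 1) = deriv (fun z => u 0 (z + 1)) y := (deriv_comp_add_const ..).symm
        _ = deriv (u 0) y := by rw [hu0e]
    have hXper : F (0, y + 1) (0, 1) = F (0, y) (0, 1) := by
      rw [← (hux 0 h0T (y + 1)).deriv, ← (hux 0 h0T y).deriv]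
      exact hder
    simp only [hg0_def, hXper, huper 0 h0T y]
  obtain ⟨δ, hδ0, hδ⟩ := per_bdd hg0cont hg0per
  refine ⟨gronwallBound δ K ε T, ?_⟩
  intro t ht x
  -- the function Φ and its right derivative EE, in the time variable, for this fixed x
  set Φ : ℝ → ℝ := fun s => -Real.exp (-s) * F (s, x) (0, 1) / (1 + u s x) ^ 2 with hΦ_def
  set EE : ℝ → ℝ := fun s =>
    ((-(Real.exp (-s) * (-1)) * F (s, x) (0, 1) +
        -Real.exp (-s) *
          ((a * (2 * u s x * F (s, x) (0, 1)) + α * deriv f x) *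
              (M - ∫ y in (0:ℝ)..1, u s y) - F (s, x) (0, 1))) * (1 + u s x) ^ 2 -
      -Real.exp (-s) * F (s, x) (0, 1) *
        ((2 : ℕ) * (1 + u s x) ^ (2 - 1) *
          ((a * u s x ^ 2 + α * f x) * (M - ∫ y in (0:ℝ)..1, u s y) - u s x))) /
      ((1 + u s x) ^ 2) ^ 2 with hEE_def
  -- Φ coincides with the spatial derivative of rho
  have hΦrho : ∀ s ∈ Set.Ico 0 T, deriv (rho u s) x = Φ s := by
    intro s hs
    have hne : (1 : ℝ) + u s x ≠ 0 := by
      have := hupos s hs x; positivity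
    have hd : HasDerivAt (fun y => Real.exp (-s) / (1 + u s y))
        ((0 * (1 + u s x) - Real.exp (-s) * (0 + F (s, x) (0, 1))) / (1 + u s x) ^ 2) x :=
      (hasDerivAt_const x _).div ((hasDerivAt_const x (1 : ℝ)).add (hux s hs x)) hne
    have hrr : rho u s = fun y => Real.exp (-s) / (1 + u s y) := rfl
    rw [hrr, hd.deriv, hΦ_def]
    field_simp
    ring
  -- the right derivative of Φ
  have hΦderiv : ∀ s ∈ Set.Ico 0 T, HasDerivWithinAt Φ (EE s) (Set.Ici s) s := by
    intro s hs
    have hne : (1 : ℝ) + u s x ≠ 0 := by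
      have := hupos s hs x; positivity
    have hE : HasDerivAt (fun r : ℝ => Real.exp (-r)) (Real.exp (-s) * (-1)) s := by
      simpa using ((hasDerivAt_id s).neg).exp
    have hXs : HasDerivWithinAt (fun r => F (r, x) (0, 1))
        ((a * (2 * u s x * F (s, x) (0, 1)) + α * deriv f x) *
            (M - ∫ y in (0:ℝ)..1, u s y) - F (s, x) (0, 1)) (Set.Ici s) s := by
      have h := hUXt0 s hs x
      rwa [hsym s hs x, hmix s hs x] at h
    have hut : HasDerivWithinAt (fun r => u r x)
        ((a * u s x ^ 2 + α * f x) * (M - ∫ y in (0:ℝ)..1, u s y) - u s x)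
        (Set.Ici s) s := by
      have h2 := (hutT s hs x).mono_of_mem_nhdsWithin (ico_mem_nhdsWithin_Ici hs)
      rwa [hFt_eq s hs x] at h2
    have hq : HasDerivWithinAt (fun r => (1 : ℝ) + u r x)
        ((a * u s x ^ 2 + α * f x) * (M - ∫ y in (0:ℝ)..1, u s y) - u s x)
        (Set.Ici s) s := by
      exact hut.const_add 1
    have hnum := (hE.hasDerivWithinAt.neg).mul hXs
    have hden := hq.pow 2
    have hdiv := hnum.div hden (pow_ne_zero 2 hne)
    exact hdiv
  -- the Gronwall bound hypothesis
  have hbound : ∀ s ∈ Set.Ico 0 T, ‖EE s‖ ≤ K * ‖Φ s‖ + ε := by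
    intro s hs
    simp only [hEE_def, hΦ_def, hK_def, hε_def, Real.norm_eq_abs]
    exact keybound a α M Fb Fb' (Real.exp (-s)) (F (s, x) (0, 1)) (u s x) (f x)
      (deriv f x) (M - ∫ y in (0:ℝ)..1, u s y) ha hα hM (hupos s hs x) (hf0 x)
      (le_trans (le_abs_self _) (hFb x)) hFb0 (hFb' x) hFb'0
      (by have := hmassM s hs; linarith) (by have := hmass0 s hs; linarith)
      (Real.exp_pos _) (Real.exp_le_one_iff.2 (by linarith [hs.1]))
  -- continuity of Φ on [0, t]
  have hsub : Set.Icc 0 t ⊆ Set.Ico 0 T := fun s hs => ⟨hs.1, lt_of_le_of_lt hs.2 ht.2⟩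
  have hΦcont : ContinuousOn Φ (Set.Icc 0 t) := by
    have hsl : Continuous (fun s : ℝ => (s, x)) := by continuity
    have hFc : ContinuousOn (fun s : ℝ => F (s, x)) (Set.Icc 0 t) :=
      hF.continuousOn.comp hsl.continuousOn (fun s hs => hmemS s (hsub hs) x)
    have hXc : ContinuousOn (fun s : ℝ => F (s, x) (0, 1)) (Set.Icc 0 t) :=
      ((ContinuousLinearMap.apply ℝ ℝ ((0 : ℝ), (1 : ℝ))).continuous).comp_continuousOn hFc
    have huc : ContinuousOn (fun s : ℝ => u s x) (Set.Icc 0 t) :=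
      hu.continuousOn.comp hsl.continuousOn (fun s hs => hmemS s (hsub hs) x)
    have hec : Continuous (fun s : ℝ => -Real.exp (-s)) := by continuity
    refine ContinuousOn.div ((hec.continuousOn).mul hXc)
      ((continuousOn_const.add huc).pow 2) ?_
    intro s hs
    have := hupos s (hsub hs) x
    positivity
  -- initial value
  have hinit : ‖Φ 0‖ ≤ δ := by
    have : Φ 0 = g0 x := rfl
    rw [Real.norm_eq_abs, this]
    exact hδ x
  -- apply Gronwall on [0, t]
  have hgron := norm_le_gronwallBound_of_norm_deriv_right_le (a := 0) (b := t)
    hΦcont (fun s hs => hΦderiv s ⟨hs.1, lt_trans hs.2 ht.2⟩) hinit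
    (fun s hs => hbound s ⟨hs.1, lt_trans hs.2 ht.2⟩) t ⟨ht.1, le_rfl⟩
  rw [sub_zero] at hgron
  calc |deriv (rho u t) x| = ‖Φ t‖ := by rw [hΦrho t ht, Real.norm_eq_abs]
    _ ≤ gronwallBound δ K ε t := hgron
    _ ≤ gronwallBound δ K ε T := gronwallBound_mono_time hδ0 hε hK ht.1 ht.2.le
end

section
/- Let T ∈ (0, ∞), let u be an admissible solution of the 1D diffusionless equation on [0,T), and define ρ(t,x) = e^{−t}/(1 + u(t,x)). Then all spatial derivatives of ρ are bounded up to time T: for every integer k ≥ 1, sup over (t,x) ∈ [0,T) × ℝ of |∂ₓᵏρ(t,x)| is finite. -/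
open MeasureTheory Set
open Finset



/-- Iterated "partial derivative in the second variable" of a function on `ℝ × ℝ`,
using derivatives within a set `W`. -/
noncomputable def pdx (W : Set (ℝ × ℝ)) (V : ℝ × ℝ → ℝ) : ℕ → ℝ × ℝ → ℝ
  | 0 => V
  | k + 1 => fun p => fderivWithin ℝ (pdx W V k) W p (0, 1)

lemma pdx_contDiffOn {W : Set (ℝ × ℝ)} (hW : UniqueDiffOn ℝ W) {V : ℝ × ℝ → ℝ}
    (hV : ContDiffOn ℝ (⊤ : ℕ∞) V W) : ∀ k, ContDiffOn ℝ (⊤ : ℕ∞) (pdx W V k) W := by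
  intro k
  induction k with
  | zero => exact hV
  | succ k ih =>
    have h1 : ContDiffOn ℝ (⊤ : ℕ∞) (fderivWithin ℝ (pdx W V k) W) W := by
      apply ih.fderivWithin hW
      exact le_of_eq (by simp)
    exact h1.clm_apply contDiffOn_const

lemma pdx_slice {I : Set ℝ} (hI : UniqueDiffOn ℝ (I ×ˢ (univ : Set ℝ))) {V : ℝ × ℝ → ℝ}
    (hV : ContDiffOn ℝ (⊤ : ℕ∞) V (I ×ˢ (univ : Set ℝ))) :
    ∀ k, ∀ t ∈ I, ∀ x : ℝ,
      pdx (I ×ˢ (univ : Set ℝ)) V k (t, x) = iteratedDeriv k (fun y => V (t, y)) x := by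
  set W : Set (ℝ × ℝ) := I ×ˢ (univ : Set ℝ) with hWdef
  intro k
  induction k with
  | zero => intro t ht x; simp [pdx]
  | succ k ih =>
    intro t ht x
    have hmem : ∀ y : ℝ, (t, y) ∈ W := fun y => ⟨ht, mem_univ y⟩
    -- slice of pdx k has derivative pdx (k+1)
    have hslice : ∀ y : ℝ, HasDerivAt (fun z => pdx W V k (t, z)) (pdx W V (k+1) (t, y)) y := by
      intro y
      have hdiff : DifferentiableWithinAt ℝ (pdx W V k) W (t, y) :=
        ((pdx_contDiffOn hI hV k).differentiableOn (by simp)) _ (hmem y)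
      have hF := hdiff.hasFDerivWithinAt
      have hι : HasFDerivAt (fun z : ℝ => ((t, z) : ℝ × ℝ))
          (ContinuousLinearMap.inr ℝ ℝ ℝ) y := by
        have : HasFDerivAt (fun z : ℝ => ((t, 0) : ℝ × ℝ) + (ContinuousLinearMap.inr ℝ ℝ ℝ) z)
            (ContinuousLinearMap.inr ℝ ℝ ℝ) y :=
          ((ContinuousLinearMap.inr ℝ ℝ ℝ).hasFDerivAt (x := y)).const_add _
        convert this using 2 with z
        simp
      have hmaps : MapsTo (fun z : ℝ => ((t, z) : ℝ × ℝ)) univ W := fun z _ => hmem z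
      have hcomp := hF.comp y (hι.hasFDerivWithinAt (s := univ)) hmaps
      rw [hasFDerivWithinAt_univ] at hcomp
      have := hcomp.hasDerivAt
      exact this
    have hfun : (fun z => pdx W V k (t, z)) = iteratedDeriv k (fun y => V (t, y)) := by
      funext z; exact ih t ht z
    rw [iteratedDeriv_succ, ← hfun]
    exact ((hslice x).deriv).symm

lemma hasDerivAt_slice1 {F : ℝ × ℝ → ℝ} {p : ℝ × ℝ} (h : DifferentiableAt ℝ F p) :
    HasDerivAt (fun s => F (s, p.2)) (fderiv ℝ F p (1, 0)) p.1 := by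
  have hι : HasFDerivAt (fun s : ℝ => ((s, p.2) : ℝ × ℝ))
      (ContinuousLinearMap.inl ℝ ℝ ℝ) p.1 := by
    have : HasFDerivAt (fun s : ℝ => (ContinuousLinearMap.inl ℝ ℝ ℝ) s + ((0, p.2) : ℝ × ℝ))
        (ContinuousLinearMap.inl ℝ ℝ ℝ) p.1 :=
      ((ContinuousLinearMap.inl ℝ ℝ ℝ).hasFDerivAt (x := p.1)).add_const _
    convert this using 2 with s
    simp
  have hcomp := h.hasFDerivAt.comp p.1 (by simpa using hι)
  have := hcomp.hasDerivAt
  exact this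

lemma pdx_swap {W Ω : Set (ℝ × ℝ)} (hΩ : IsOpen Ω) (hΩW : Ω ⊆ W) {V : ℝ × ℝ → ℝ}
    (hW : UniqueDiffOn ℝ W) (hV : ContDiffOn ℝ (⊤ : ℕ∞) V W) :
    ∀ k, ∀ p ∈ Ω, fderiv ℝ (pdx W V k) p (1, 0)
      = pdx Ω (fun q => fderiv ℝ V q (1, 0)) k p := by
  have hnhds : ∀ p ∈ Ω, W ∈ nhds p := fun p hp => Filter.mem_of_superset (hΩ.mem_nhds hp) hΩW
  have hGΩ : ∀ k, ContDiffOn ℝ (⊤ : ℕ∞) (pdx W V k) Ω := fun k =>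
    (pdx_contDiffOn hW hV k).mono hΩW
  have hDΩ : ∀ k, ContDiffOn ℝ (⊤ : ℕ∞) (fderiv ℝ (pdx W V k)) Ω := fun k =>
    (hGΩ k).fderiv_of_isOpen hΩ (le_of_eq (by simp))
  intro k
  induction k with
  | zero => intro p hp; simp [pdx]
  | succ k ih =>
    intro p hp
    -- pdx W V (k+1) agrees near p with q ↦ fderiv (pdx W V k) q (0,1)
    have hev : pdx W V (k+1) =ᶠ[nhds p] (fun q => fderiv ℝ (pdx W V k) q (0, 1)) := by
      filter_upwards [hΩ.mem_nhds hp] with q hq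
      show fderivWithin ℝ (pdx W V k) W q (0, 1) = _
      rw [fderivWithin_of_mem_nhds (hnhds q hq)]
    have hDdiff : DifferentiableAt ℝ (fderiv ℝ (pdx W V k)) p :=
      ((hDΩ k).contDiffAt (hΩ.mem_nhds hp)).differentiableAt (by simp)
    have hsym : ∀ v w : ℝ × ℝ,
        fderiv ℝ (fderiv ℝ (pdx W V k)) p v w = fderiv ℝ (fderiv ℝ (pdx W V k)) p w v := by
      intro v w
      apply second_derivative_symmetric_of_eventually (f := pdx W V k)
      · filter_upwards [hΩ.mem_nhds hp] with q hq
        exact (((hGΩ k).contDiffAt (hΩ.mem_nhds hq)).differentiableAt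
          (by simp)).hasFDerivAt
      · exact hDdiff.hasFDerivAt
    have hclm : ∀ v : ℝ × ℝ,
        fderiv ℝ (fun q => fderiv ℝ (pdx W V k) q v) p
          = (fderiv ℝ (fderiv ℝ (pdx W V k)) p).flip v := by
      intro v
      have := fderiv_clm_apply (𝕜 := ℝ) hDdiff (differentiableAt_const v)
      simpa using this
    calc fderiv ℝ (pdx W V (k+1)) p (1, 0)
        = fderiv ℝ (fun q => fderiv ℝ (pdx W V k) q (0, 1)) p (1, 0) := by
          rw [hev.fderiv_eq]
      _ = fderiv ℝ (fderiv ℝ (pdx W V k)) p (1, 0) (0, 1) := by rw [hclm]; rfl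
      _ = fderiv ℝ (fderiv ℝ (pdx W V k)) p (0, 1) (1, 0) := hsym _ _
      _ = fderiv ℝ (fun q => fderiv ℝ (pdx W V k) q (1, 0)) p (0, 1) := by rw [hclm]; rfl
      _ = fderiv ℝ (fun q => pdx Ω (fun q' => fderiv ℝ V q' (1, 0)) k q) p (0, 1) := by
          congr 1
          apply Filter.EventuallyEq.fderiv_eq
          filter_upwards [hΩ.mem_nhds hp] with q hq
          exact ih q hq
      _ = pdx Ω (fun q' => fderiv ℝ V q' (1, 0)) (k+1) p := by
          show _ = fderivWithin ℝ _ Ω p (0, 1)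
          rw [fderivWithin_of_isOpen hΩ hp]


lemma periodic_iteratedDeriv {g : ℝ → ℝ} (hg : Function.Periodic g 1) (n : ℕ) :
    Function.Periodic (iteratedDeriv n g) 1 := by
  induction n with
  | zero => simpa using hg
  | succ n ih =>
    intro x
    rw [iteratedDeriv_succ]
    have h1 : deriv (iteratedDeriv n g) (x + 1) = deriv (fun y => iteratedDeriv n g (y + 1)) x :=
      (deriv_comp_add_const _ _ _).symm
    have h2 : (fun y => iteratedDeriv n g (y + 1)) = iteratedDeriv n g := funext fun y => ih y
    rw [h1, h2]

lemma bounded_of_periodic_continuous {g : ℝ → ℝ} (hg : Continuous g)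
    (hper : Function.Periodic g 1) : ∃ C, 0 ≤ C ∧ ∀ x, |g x| ≤ C := by
  obtain ⟨C, hC⟩ := (isCompact_Icc (a := (0:ℝ)) (b := 1)).exists_bound_of_continuousOn
    hg.continuousOn
  refine ⟨max C 0, le_max_right _ _, fun x => ?_⟩
  obtain ⟨y, hy, hxy⟩ := hper.exists_mem_Ico₀ one_pos x
  rw [hxy]
  calc |g y| ≤ C := by simpa using hC y ⟨hy.1, hy.2.le⟩
    _ ≤ max C 0 := le_max_left _ _

lemma gronwallBound_le_of_mem {δ K ε x Tb : ℝ} (hδ : 0 ≤ δ) (hK : 0 < K) (hε : 0 ≤ ε)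
    (hx : 0 ≤ x) (hxT : x ≤ Tb) :
    gronwallBound δ K ε x ≤ (δ + ε / K) * Real.exp (K * Tb) := by
  rw [gronwallBound_of_K_ne_0 hK.ne']
  have h1 : Real.exp (K * x) ≤ Real.exp (K * Tb) :=
    Real.exp_le_exp.2 (by nlinarith)
  have h2 : (0:ℝ) < Real.exp (K * x) := Real.exp_pos _
  have h3 : 0 ≤ ε / K := div_nonneg hε hK.le
  nlinarith [Real.exp_pos (K * Tb)]

/-- Leibniz-type estimate for the `k`-th derivative of `g * g`. -/
lemma iteratedDeriv_sq_bound {g : ℝ → ℝ} (hg : ContDiff ℝ (⊤ : ℕ∞) g) {k : ℕ} (hk : 1 ≤ k)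
    {Bm : ℝ} (hBm : 1 ≤ Bm) (hb : ∀ j, j < k → ∀ y : ℝ, |iteratedDeriv j g y| ≤ Bm) (x : ℝ) :
    |iteratedDeriv k (fun y => g y * g y) x|
      ≤ 2 * Bm * |iteratedDeriv k g x| + 2 ^ k * Bm ^ 2 := by
  have hmul := norm_iteratedFDeriv_mul_le (𝕜 := ℝ) (n := k) hg hg x (by exact_mod_cast le_top)
  rw [norm_iteratedFDeriv_eq_norm_iteratedDeriv] at hmul
  simp only [norm_iteratedFDeriv_eq_norm_iteratedDeriv, Real.norm_eq_abs] at hmul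
  set w := |iteratedDeriv k g x| with hw
  have hw0 : 0 ≤ w := abs_nonneg _
  -- bound the sum
  have hsum : ∑ i ∈ range (k + 1),
      (k.choose i : ℝ) * |iteratedDeriv i g x| * |iteratedDeriv (k - i) g x|
      ≤ 2 * Bm * w + 2 ^ k * Bm ^ 2 := by
    obtain ⟨m, rfl⟩ : ∃ m, k = m + 1 := ⟨k - 1, (Nat.succ_pred_eq_of_pos hk).symm⟩
    rw [Finset.sum_range_succ, Finset.sum_range_succ']
    have hlast : (Nat.choose (m+1) (m+1) : ℝ) * |iteratedDeriv (m+1) g x|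
        * |iteratedDeriv (m+1 - (m+1)) g x| ≤ Bm * w := by
      simp only [Nat.choose_self, Nat.cast_one, one_mul, Nat.sub_self]
      have := hb 0 (Nat.succ_pos m) x
      simp only [iteratedDeriv_zero] at this ⊢
      nlinarith [abs_nonneg (iteratedDeriv (m+1) g x)]
    have hfirst : (Nat.choose (m+1) 0 : ℝ) * |iteratedDeriv 0 g x|
        * |iteratedDeriv (m+1-0) g x| ≤ Bm * w := by
      simp only [Nat.choose_zero_right, Nat.cast_one, one_mul, Nat.sub_zero]
      have := hb 0 (Nat.succ_pos m) x
      simp only [iteratedDeriv_zero] at this ⊢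
      nlinarith [abs_nonneg (iteratedDeriv (m+1) g x)]
    have hS : (∑ i ∈ range m, (Nat.choose (m+1) (i+1) : ℝ)) + 2 = 2 ^ (m+1) := by
      have h := Nat.sum_range_choose (m+1)
      have h2 : (∑ i ∈ range (m+2), (Nat.choose (m+1) i : ℝ)) = 2 ^ (m+1) := by
        exact_mod_cast congrArg (Nat.cast : ℕ → ℝ) h
      rw [Finset.sum_range_succ, Finset.sum_range_succ'] at h2
      simp only [Nat.choose_self, Nat.choose_zero_right, Nat.cast_one] at h2
      linarith
    have hmid : ∑ i ∈ range m, (Nat.choose (m+1) (i+1) : ℝ) * |iteratedDeriv (i+1) g x|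
        * |iteratedDeriv (m+1-(i+1)) g x| ≤ 2 ^ (m+1) * Bm ^ 2 := by
      have hterm : ∀ i ∈ range m, (Nat.choose (m+1) (i+1) : ℝ) * |iteratedDeriv (i+1) g x|
          * |iteratedDeriv (m+1-(i+1)) g x| ≤ (Nat.choose (m+1) (i+1) : ℝ) * Bm ^ 2 := by
        intro i hi
        rw [Finset.mem_range] at hi
        have h1 := hb (i+1) (by omega) x
        have h2 := hb (m+1-(i+1)) (by omega) x
        have hc : (0:ℝ) ≤ (Nat.choose (m+1) (i+1) : ℝ) := Nat.cast_nonneg _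
        have hprod : |iteratedDeriv (i+1) g x| * |iteratedDeriv (m+1-(i+1)) g x| ≤ Bm * Bm :=
          mul_le_mul h1 h2 (abs_nonneg _) (by linarith)
        calc (Nat.choose (m+1) (i+1) : ℝ) * |iteratedDeriv (i+1) g x|
            * |iteratedDeriv (m+1-(i+1)) g x|
            = (Nat.choose (m+1) (i+1) : ℝ)
              * (|iteratedDeriv (i+1) g x| * |iteratedDeriv (m+1-(i+1)) g x|) := by ring
          _ ≤ (Nat.choose (m+1) (i+1) : ℝ) * (Bm * Bm) := by
              exact mul_le_mul_of_nonneg_left hprod hc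
          _ = (Nat.choose (m+1) (i+1) : ℝ) * Bm ^ 2 := by ring
      calc ∑ i ∈ range m, (Nat.choose (m+1) (i+1) : ℝ) * |iteratedDeriv (i+1) g x|
          * |iteratedDeriv (m+1-(i+1)) g x|
          ≤ ∑ i ∈ range m, (Nat.choose (m+1) (i+1) : ℝ) * Bm ^ 2 := Finset.sum_le_sum hterm
        _ = (∑ i ∈ range m, (Nat.choose (m+1) (i+1) : ℝ)) * Bm ^ 2 := by
            rw [Finset.sum_mul]
        _ ≤ (2 ^ (m+1) : ℝ) * Bm ^ 2 := by nlinarith [sq_nonneg Bm]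
    linarith
  linarith
lemma itd_add {f g : ℝ → ℝ} (hf : ContDiff ℝ (⊤ : ℕ∞) f) (hg : ContDiff ℝ (⊤ : ℕ∞) g)
    (n : ℕ) (x : ℝ) :
    iteratedDeriv n (fun y => f y + g y) x = iteratedDeriv n f x + iteratedDeriv n g x := by
  rw [← iteratedDerivWithin_univ, ← iteratedDerivWithin_univ (f := f),
    ← iteratedDerivWithin_univ (f := g)]
  exact iteratedDerivWithin_add (mem_univ x) uniqueDiffOn_univ
    (hf.of_le (by exact_mod_cast le_top)).contDiffWithinAt
    (hg.of_le (by exact_mod_cast le_top)).contDiffWithinAt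

lemma itd_cmul {f : ℝ → ℝ} (hf : ContDiff ℝ (⊤ : ℕ∞) f) (c : ℝ) (n : ℕ) (x : ℝ) :
    iteratedDeriv n (fun y => c * f y) x = c * iteratedDeriv n f x := by
  rw [← iteratedDerivWithin_univ, ← iteratedDerivWithin_univ (f := f)]
  exact iteratedDerivWithin_const_mul (mem_univ x) uniqueDiffOn_univ c
    (hf.of_le (by exact_mod_cast le_top)).contDiffWithinAt

lemma itd_const_add {f : ℝ → ℝ} (c : ℝ) {n : ℕ} (hn : 0 < n) (x : ℝ) :
    iteratedDeriv n (fun y => c + f y) x = iteratedDeriv n f x := by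
  rw [← iteratedDerivWithin_univ, ← iteratedDerivWithin_univ (f := f)]
  exact iteratedDerivWithin_const_add hn c

/-- bound on the `k`-th derivative of a product when all derivatives of both factors
are bounded at `x`. -/
lemma iteratedDeriv_mul_bound {f h : ℝ → ℝ} (hf : ContDiff ℝ (⊤ : ℕ∞) f)
    (hh : ContDiff ℝ (⊤ : ℕ∞) h) (k : ℕ) {F R : ℝ} (hR : 0 ≤ R) (x : ℝ)
    (hbf : ∀ j, j ≤ k → |iteratedDeriv j f x| ≤ F)
    (hbh : ∀ j, j ≤ k → |iteratedDeriv j h x| ≤ R) :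
    |iteratedDeriv k (fun y => f y * h y) x| ≤ 2 ^ k * F * R := by
  have hF : 0 ≤ F := le_trans (abs_nonneg _) (hbf 0 (Nat.zero_le _))
  have hmul := norm_iteratedFDeriv_mul_le (𝕜 := ℝ) (n := k) hf hh x (by exact_mod_cast le_top)
  rw [norm_iteratedFDeriv_eq_norm_iteratedDeriv] at hmul
  simp only [norm_iteratedFDeriv_eq_norm_iteratedDeriv, Real.norm_eq_abs] at hmul
  have hsum : ∑ i ∈ Finset.range (k + 1),
      (k.choose i : ℝ) * |iteratedDeriv i f x| * |iteratedDeriv (k - i) h x|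
      ≤ ∑ i ∈ Finset.range (k + 1), (k.choose i : ℝ) * F * R := by
    apply Finset.sum_le_sum
    intro i hi
    rw [Finset.mem_range] at hi
    have h1 := hbf i (by omega)
    have h2 := hbh (k - i) (by omega)
    have hc : (0:ℝ) ≤ (k.choose i : ℝ) := Nat.cast_nonneg _
    have hprod : |iteratedDeriv i f x| * |iteratedDeriv (k - i) h x| ≤ F * R :=
      mul_le_mul h1 h2 (abs_nonneg _) hF
    calc (k.choose i : ℝ) * |iteratedDeriv i f x| * |iteratedDeriv (k - i) h x|
        = (k.choose i : ℝ) * (|iteratedDeriv i f x| * |iteratedDeriv (k - i) h x|) := by ring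
      _ ≤ (k.choose i : ℝ) * (F * R) := mul_le_mul_of_nonneg_left hprod hc
      _ = (k.choose i : ℝ) * F * R := by ring
  have h2k : ∑ i ∈ Finset.range (k + 1), (k.choose i : ℝ) * F * R = 2 ^ k * F * R := by
    have : (∑ i ∈ Finset.range (k + 1), (k.choose i : ℝ)) = 2 ^ k := by
      exact_mod_cast congrArg (Nat.cast : ℕ → ℝ) (Nat.sum_range_choose k)
    rw [← Finset.sum_mul, ← Finset.sum_mul, this]
  linarith


set_option maxHeartbeats 1600000

/-- all spatial derivatives of `ρ` are bounded up to the finite time `T`. -/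
theorem rho_derivatives_bounded
    (a α M T : ℝ) (ha : 0 < a) (hα : 0 ≤ α) (hM : 0 < M) (hT : 0 < T)
    (f : ℝ → ℝ) (hf : ContDiff ℝ (⊤ : ℕ∞) f)
    (hf0 : ∀ x, 0 ≤ f x)
    (hfper : ∀ x, f (x + 1) = f x)
    (u : ℝ → ℝ → ℝ)
    (hu : ContDiffOn ℝ (⊤ : ℕ∞) (fun p : ℝ × ℝ => u p.1 p.2) (Set.Ico 0 T ×ˢ Set.univ))
    (huper : ∀ t ∈ Set.Ico 0 T, ∀ x, u t (x + 1) = u t x)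
    (hupos : ∀ t ∈ Set.Ico 0 T, ∀ x, 0 ≤ u t x)
    (hmass0 : ∀ t ∈ Set.Ico 0 T, 0 ≤ ∫ x in (0:ℝ)..1, u t x)
    (hmassM : ∀ t ∈ Set.Ico 0 T, (∫ x in (0:ℝ)..1, u t x) ≤ M)
    (hPDE : ∀ t ∈ Set.Ico 0 T, ∀ x,
      derivWithin (fun s => u s x) (Set.Ici 0) t
        = (a * u t x ^ 2 + α * f x) * (M - ∫ y in (0:ℝ)..1, u t y) - u t x)
    :
    ∀ k : ℕ, 1 ≤ k → ∃ C : ℝ, ∀ t ∈ Set.Ico 0 T, ∀ x : ℝ,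
      |iteratedDeriv k (rho u t) x| ≤ C := by
  -- ## Setup
  set S : Set (ℝ × ℝ) := Set.Ico 0 T ×ˢ (univ : Set ℝ) with hSdef
  set Ω : Set (ℝ × ℝ) := Set.Ioo 0 T ×ˢ (univ : Set ℝ) with hΩdef
  have hSu : UniqueDiffOn ℝ S := (uniqueDiffOn_Ico 0 T).prod uniqueDiffOn_univ
  have hΩopen : IsOpen Ω := isOpen_Ioo.prod isOpen_univ
  have hΩS : Ω ⊆ S := prod_mono Ioo_subset_Ico_self (subset_refl _)
  set V : ℝ × ℝ → ℝ := fun p => (1 + u p.1 p.2)⁻¹ with hVdef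
  have h1u : ∀ p ∈ S, 0 < 1 + u p.1 p.2 := by
    rintro ⟨t, x⟩ ⟨ht, -⟩
    have := hupos t ht x
    simp only at this ⊢
    linarith
  have hVc : ContDiffOn ℝ (⊤ : ℕ∞) V S :=
    (contDiffOn_const.add hu).inv (fun p hp => (h1u p hp).ne')
  have hSnhds : ∀ p ∈ Ω, S ∈ nhds p := fun p hp =>
    Filter.mem_of_superset (hΩopen.mem_nhds hp) hΩS
  have hmemS : ∀ t ∈ Set.Ico 0 T, ∀ x : ℝ, ((t, x) : ℝ × ℝ) ∈ S := fun t ht x => ⟨ht, mem_univ x⟩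
  have hmemΩ : ∀ t ∈ Set.Ioo 0 T, ∀ x : ℝ, ((t, x) : ℝ × ℝ) ∈ Ω := fun t ht x => ⟨ht, mem_univ x⟩
  -- slice smoothness
  have hvt : ∀ t ∈ Set.Ico 0 T, ContDiff ℝ (⊤ : ℕ∞) (fun y => V (t, y)) := by
    intro t ht
    rw [← contDiffOn_univ]
    exact hVc.comp (contDiff_const.prodMk contDiff_id).contDiffOn
      (fun y _ => hmemS t ht y)
  -- positivity and basic bound for V
  have hVpos : ∀ p ∈ S, 0 < V p := fun p hp => by
    simp only [hVdef]; exact inv_pos.2 (h1u p hp)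
  have hVle : ∀ p ∈ S, V p ≤ 1 := by
    rintro ⟨t, x⟩ hp
    have h1 := h1u _ hp
    have h2 : (1:ℝ) ≤ 1 + u t x := by
      have := hupos t hp.1 x; linarith
    simp only [hVdef]
    rw [inv_le_one_iff₀]
    right; exact h2
  -- periodicity of slices
  have hvper : ∀ t ∈ Set.Ico 0 T, Function.Periodic (fun y => V (t, y)) 1 := by
    intro t ht y
    simp only [hVdef]
    rw [huper t ht y]
  -- the iterated spatial derivatives, jointly
  have hGc : ∀ k, ContDiffOn ℝ (⊤ : ℕ∞) (pdx S V k) S := pdx_contDiffOn hSu hVc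
  have hGslice : ∀ k, ∀ t ∈ Set.Ico 0 T, ∀ x : ℝ,
      pdx S V k (t, x) = iteratedDeriv k (fun y => V (t, y)) x := by
    intro k
    exact pdx_slice (I := Set.Ico 0 T) hSu hVc k
  -- ## the time derivative T0 and its polynomial form
  set U : ℝ → ℝ := fun t => ∫ y in (0:ℝ)..1, u t y with hUdef
  set T0 : ℝ × ℝ → ℝ := fun q => fderiv ℝ V q (1, 0) with hT0def
  have hT0c : ContDiffOn ℝ (⊤ : ℕ∞) T0 Ω := by
    apply ContDiffOn.clm_apply _ contDiffOn_const
    exact (hVc.mono hΩS).fderiv_of_isOpen hΩopen (le_of_eq (by simp))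
  have hT0poly : ∀ t ∈ Set.Ioo 0 T, ∀ x : ℝ,
      T0 (t, x) = -((M - U t) * a)
        + ((1 + 2 * (M - U t) * a) * V (t, x)
        + ((-((M - U t) * a) - 1) * (V (t, x) * V (t, x))
        + (-((M - U t) * α)) * (f x * (V (t, x) * V (t, x))))) := by
    intro t ht x
    have htIco : t ∈ Set.Ico 0 T := ⟨ht.1.le, ht.2⟩
    have hpΩ : ((t, x) : ℝ × ℝ) ∈ Ω := hmemΩ t ht x
    have hudiff : DifferentiableAt ℝ (fun p : ℝ × ℝ => u p.1 p.2) (t, x) :=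
      ((hu.contDiffAt (hSnhds _ hpΩ)).differentiableAt (by simp))
    -- derivative of the slice of u
    have hslice := hasDerivAt_slice1 (p := (t, x)) hudiff
    have hder_eq : fderiv ℝ (fun p : ℝ × ℝ => u p.1 p.2) (t, x) (1, 0)
        = (a * u t x ^ 2 + α * f x) * (M - U t) - u t x := by
      have h1 : deriv (fun s => u s x) t
          = fderiv ℝ (fun p : ℝ × ℝ => u p.1 p.2) (t, x) (1, 0) := by
        have := hslice.deriv
        simpa using this
      have h2 : derivWithin (fun s => u s x) (Set.Ici 0) t = deriv (fun s => u s x) t :=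
        derivWithin_of_mem_nhds (Ici_mem_nhds ht.1)
      rw [← h1, ← h2]
      exact hPDE t htIco x
    have hdu : HasDerivAt (fun s => u s x)
        ((a * u t x ^ 2 + α * f x) * (M - U t) - u t x) t := by
      have := hslice
      rw [hder_eq] at this
      simpa using this
    -- derivative of the slice of V
    have h1ux : (1 + u t x) ≠ 0 := (h1u _ (hmemS t htIco x)).ne'
    have hdV : HasDerivAt (fun s => (1 + u s x)⁻¹)
        (-((a * u t x ^ 2 + α * f x) * (M - U t) - u t x) / (1 + u t x) ^ 2) t := by
      have hc : HasDerivAt (fun s => 1 + u s x)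
          ((a * u t x ^ 2 + α * f x) * (M - U t) - u t x) t := by
        simpa using (hdu.const_add 1)
      exact hc.inv h1ux
    have hVdiff : DifferentiableAt ℝ V (t, x) :=
      ((hVc.contDiffAt (hSnhds _ hpΩ)).differentiableAt (by simp))
    have hsliceV := hasDerivAt_slice1 (p := (t, x)) hVdiff
    have hT0val : T0 (t, x)
        = -((a * u t x ^ 2 + α * f x) * (M - U t) - u t x) / (1 + u t x) ^ 2 := by
      have h3 : HasDerivAt (fun s => V (s, x)) (T0 (t, x)) t := by
        simpa [hT0def] using hsliceV
      have h4 : HasDerivAt (fun s => V (s, x))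
          (-((a * u t x ^ 2 + α * f x) * (M - U t) - u t x) / (1 + u t x) ^ 2) t := by
        simpa [hVdef] using hdV
      exact h3.unique h4
    rw [hT0val]
    show _ = -((M - U t) * a)
        + ((1 + 2 * (M - U t) * a) * (1 + u t x)⁻¹
        + ((-((M - U t) * a) - 1) * ((1 + u t x)⁻¹ * (1 + u t x)⁻¹)
        + (-((M - U t) * α)) * (f x * ((1 + u t x)⁻¹ * (1 + u t x)⁻¹))))
    field_simp
    ring
  -- ## swap of derivatives
  have hswap : ∀ k, ∀ p ∈ Ω, fderiv ℝ (pdx S V k) p (1, 0) = pdx Ω T0 k p :=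
    pdx_swap hΩopen hΩS hSu hVc
  have hTslice : ∀ k, ∀ t ∈ Set.Ioo 0 T, ∀ x : ℝ,
      pdx Ω T0 k (t, x) = iteratedDeriv k (fun y => T0 (t, y)) x := by
    intro k
    exact pdx_slice (I := Set.Ioo 0 T) (hΩopen.uniqueDiffOn) hT0c k
  -- ## bounds on derivatives of f
  have hfbd : ∀ j : ℕ, ∃ C, 0 ≤ C ∧ ∀ x, |iteratedDeriv j f x| ≤ C := by
    intro j
    apply bounded_of_periodic_continuous
    · exact (hf.continuous_iteratedDeriv j (by exact_mod_cast le_top))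
    · exact periodic_iteratedDeriv hfper j
  choose Cf hCf0 hCf using hfbd
  -- ## main claim by induction
  have hclaim : ∀ k : ℕ, ∃ B : ℝ, 1 ≤ B ∧ ∀ j ≤ k, ∀ t ∈ Set.Ico 0 T, ∀ x : ℝ,
      |iteratedDeriv j (fun y => V (t, y)) x| ≤ B := by
    intro k
    induction k with
    | zero =>
      refine ⟨1, le_refl 1, ?_⟩
      intro j hj t ht x
      interval_cases j
      rw [iteratedDeriv_zero]
      rw [abs_of_pos (hVpos _ (hmemS t ht x))]
      exact hVle _ (hmemS t ht x)
    | succ n ihn =>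
      obtain ⟨Bm, hBm1, hBm⟩ := ihn
      set k := n + 1 with hkdef
      have hk1 : 1 ≤ k := Nat.succ_le_succ (Nat.zero_le n)
      -- bound for derivatives of f up to order k
      set Ff : ℝ := 1 + ∑ j ∈ Finset.range (k + 1), Cf j with hFfdef
      have hsumCf : 0 ≤ ∑ j ∈ Finset.range (k + 1), Cf j :=
        Finset.sum_nonneg fun j _ => hCf0 j
      have hFf1 : 1 ≤ Ff := by simp only [hFfdef]; linarith
      have hFfb : ∀ j, j ≤ k → ∀ x, |iteratedDeriv j f x| ≤ Ff := by
        intro j hj x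
        have h1 := hCf j x
        have h2 : Cf j ≤ ∑ i ∈ Finset.range (k + 1), Cf i :=
          Finset.single_le_sum (fun i _ => hCf0 i) (Finset.mem_range.2 (by omega))
        simp only [hFfdef]; linarith
      -- the midpoint time
      set τ : ℝ := T / 2 with hτdef
      have hτ0 : 0 < τ := by simp only [hτdef]; linarith
      have hτT : τ < T := by simp only [hτdef]; linarith
      -- initial-segment bound from compactness
      have hsub : (Set.Icc (0:ℝ) τ) ×ˢ (Set.Icc (0:ℝ) 1) ⊆ S := by
        rintro ⟨s, y⟩ ⟨hs, hy⟩
        exact ⟨⟨hs.1, lt_of_le_of_lt hs.2 hτT⟩, mem_univ _⟩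
      obtain ⟨C1', hC1'⟩ := ((isCompact_Icc (a := (0:ℝ)) (b := τ)).prod
        (isCompact_Icc (a := (0:ℝ)) (b := 1))).exists_bound_of_continuousOn
        (((hGc k).continuousOn).mono hsub)
      set C1 : ℝ := max C1' 0 with hC1def
      have hC10 : 0 ≤ C1 := le_max_right _ _
      have hinit : ∀ t, 0 ≤ t → t ≤ τ → ∀ x : ℝ,
          |iteratedDeriv k (fun y => V (t, y)) x| ≤ C1 := by
        intro t h0 h1 x
        have htIco : t ∈ Set.Ico 0 T := ⟨h0, lt_of_le_of_lt h1 hτT⟩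
        have hper : Function.Periodic (iteratedDeriv k (fun y => V (t, y))) 1 :=
          periodic_iteratedDeriv (hvper t htIco) k
        obtain ⟨y, hy, hxy⟩ := hper.exists_mem_Ico₀ one_pos x
        rw [hxy, ← hGslice k t htIco y]
        have hmem : ((t, y) : ℝ × ℝ) ∈ (Set.Icc (0:ℝ) τ) ×ˢ (Set.Icc (0:ℝ) 1) :=
          ⟨⟨h0, h1⟩, ⟨hy.1, hy.2.le⟩⟩
        have := hC1' (t, y) hmem
        rw [Real.norm_eq_abs] at this
        calc |pdx S V k (t, y)| ≤ C1' := this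
          _ ≤ C1 := le_max_left _ _
      -- constants for the differential inequality
      set Q : ℝ := (M * a + 1) + M * α * 2 ^ k * Ff with hQdef
      have hQ1 : 1 ≤ Q := by
        have h1 : 0 ≤ M * α * 2 ^ k * Ff := by positivity
        have h2 : 0 < M * a := by positivity
        simp only [hQdef]; nlinarith
      set K : ℝ := (1 + 2 * M * a) + 2 * Q * Bm with hKdef
      have hK0 : 0 < K := by
        have h2 : 0 < M * a := by positivity
        simp only [hKdef]; nlinarith
      set ε : ℝ := Q * 2 ^ (k + 1) * Bm ^ 2 with hεdef
      have hε0 : 0 ≤ ε := by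
        have : (0:ℝ) < Q := by linarith
        simp only [hεdef]; positivity
      -- pow facts
      have hpow1 : (2:ℝ) ≤ 2 ^ k := by
        calc (2:ℝ) = 2 ^ 1 := (pow_one 2).symm
          _ ≤ 2 ^ k := pow_le_pow_right₀ one_le_two hk1
      have hpow2 : (2:ℝ) ^ k ≤ 2 ^ (k + 1) := pow_le_pow_right₀ one_le_two (by omega)
      -- ## the core differential inequality
      have hODE : ∀ s ∈ Set.Ioo (0:ℝ) T, ∀ x : ℝ,
          |pdx Ω T0 k (s, x)| ≤ K * |pdx S V k (s, x)| + ε := by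
        intro s hs x
        have hsIco : s ∈ Set.Ico 0 T := ⟨hs.1.le, hs.2⟩
        have hvts := hvt s hsIco
        have hvv : ContDiff ℝ (⊤ : ℕ∞) (fun y => V (s, y) * V (s, y)) := hvts.mul hvts
        have hfvv : ContDiff ℝ (⊤ : ℕ∞) (fun y => f y * (V (s, y) * V (s, y))) := hf.mul hvv
        set A1 : ℝ := 1 + 2 * (M - U s) * a with hA1def
        set A2 : ℝ := -((M - U s) * a) - 1 with hA2def
        set A3 : ℝ := -((M - U s) * α) with hA3def
        have hfun : (fun y => T0 (s, y)) = fun y => -((M - U s) * a)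
            + (A1 * V (s, y) + (A2 * (V (s, y) * V (s, y))
              + A3 * (f y * (V (s, y) * V (s, y))))) :=
          funext fun y => hT0poly s hs y
        -- decompose the iterated derivative
        have hitd : iteratedDeriv k (fun y => T0 (s, y)) x
            = A1 * iteratedDeriv k (fun y => V (s, y)) x
              + (A2 * iteratedDeriv k (fun y => V (s, y) * V (s, y)) x
                + A3 * iteratedDeriv k (fun y => f y * (V (s, y) * V (s, y))) x) := by
          rw [hfun, itd_const_add _ (by omega) x,
            itd_add (contDiff_const.mul hvts)
              ((contDiff_const.mul hvv).add (contDiff_const.mul hfvv)) k x,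
            itd_add (contDiff_const.mul hvv) (contDiff_const.mul hfvv) k x,
            itd_cmul hvts A1 k x, itd_cmul hvv A2 k x, itd_cmul hfvv A3 k x]
        set w : ℝ := |iteratedDeriv k (fun y => V (s, y)) x| with hwdef
        have hw0 : 0 ≤ w := abs_nonneg _
        have hBmb : ∀ j, j < k → ∀ y : ℝ, |iteratedDeriv j (fun y' => V (s, y')) y| ≤ Bm :=
          fun j hj y => hBm j (by omega) s hsIco y
        have hDvv : |iteratedDeriv k (fun y => V (s, y) * V (s, y)) x|
            ≤ 2 * Bm * w + 2 ^ k * Bm ^ 2 :=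
          iteratedDeriv_sq_bound hvts hk1 hBm1 hBmb x
        set R : ℝ := 2 * Bm * w + 2 ^ (k + 1) * Bm ^ 2 with hRdef
        have hBm0 : (0:ℝ) ≤ Bm := by linarith
        have hpowBm : (2:ℝ) ^ k * Bm ^ 2 ≤ 2 ^ (k+1) * Bm ^ 2 :=
          mul_le_mul_of_nonneg_right hpow2 (sq_nonneg Bm)
        have hR0 : 0 ≤ R := by
          have h1 : (0:ℝ) ≤ 2 ^ (k+1) * Bm ^ 2 := by positivity
          have h2 : (0:ℝ) ≤ 2 * Bm * w := by positivity
          simp only [hRdef]; linarith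
        have hDvvR : |iteratedDeriv k (fun y => V (s, y) * V (s, y)) x| ≤ R := by
          simp only [hRdef]; linarith
        have hvvall : ∀ j, j ≤ k → |iteratedDeriv j (fun y => V (s, y) * V (s, y)) x| ≤ R := by
          intro j hj
          rcases Nat.eq_zero_or_pos j with rfl | hj0
          · rw [iteratedDeriv_zero]
            have h1 : |V (s, x)| ≤ Bm := by
              have := hBm 0 (Nat.zero_le n) s hsIco x
              simpa using this
            rw [abs_mul]
            have h2 : |V (s, x)| * |V (s, x)| ≤ Bm ^ 2 := by nlinarith [abs_nonneg (V (s, x))]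
            have h3 : (2:ℝ) ≤ 2 ^ (k+1) := le_trans hpow1 hpow2
            simp only [hRdef]; nlinarith
          · rcases Nat.lt_or_ge j k with hjk | hjk
            · have hj1 : 1 ≤ j := hj0
              have hb := iteratedDeriv_sq_bound hvts hj1 hBm1
                (fun i hi y => hBmb i (by omega) y) x
              have h1 : |iteratedDeriv j (fun y' => V (s, y')) x| ≤ Bm := hBmb j hjk x
              have h2 : (2:ℝ) ^ j ≤ 2 ^ k := pow_le_pow_right₀ one_le_two (by omega)
              have h3 : (2:ℝ) ^ k + 2 ^ k = 2 ^ (k+1) := by ring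
              have h4 : (0:ℝ) ≤ 2 ^ j := by positivity
              simp only [hRdef]
              nlinarith [abs_nonneg (iteratedDeriv j (fun y' => V (s, y')) x)]
            · have hjeq : j = k := le_antisymm hj hjk
              rw [hjeq]; exact hDvvR
        have hDfvv : |iteratedDeriv k (fun y => f y * (V (s, y) * V (s, y))) x|
            ≤ 2 ^ k * Ff * R :=
          iteratedDeriv_mul_bound hf hvv k hR0 x (fun j hj => hFfb j hj x) hvvall
        -- coefficient bounds
        have hU0 := hmass0 s hsIco
        have hUM := hmassM s hsIco
        have hc0 : 0 ≤ M - U s := by simp only [hUdef]; linarith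
        have hcM : M - U s ≤ M := by simp only [hUdef]; linarith
        have hA1b : |A1| ≤ 1 + 2 * M * a := by
          rw [hA1def, abs_of_nonneg (by nlinarith)]; nlinarith
        have hA2b : |A2| ≤ M * a + 1 := by
          rw [hA2def, abs_of_nonpos (by nlinarith)]; nlinarith
        have hA3b : |A3| ≤ M * α := by
          rw [hA3def, abs_of_nonpos (by nlinarith)]; nlinarith
        -- put everything together
        rw [hTslice k s hs x, hGslice k s hsIco x, ← hwdef, hitd]
        have t1 := abs_add_le (A1 * iteratedDeriv k (fun y => V (s, y)) x)
          (A2 * iteratedDeriv k (fun y => V (s, y) * V (s, y)) x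
            + A3 * iteratedDeriv k (fun y => f y * (V (s, y) * V (s, y))) x)
        have t2 := abs_add_le (A2 * iteratedDeriv k (fun y => V (s, y) * V (s, y)) x)
          (A3 * iteratedDeriv k (fun y => f y * (V (s, y) * V (s, y))) x)
        simp only [abs_mul] at t1 t2
        rw [← hwdef] at t1
        have hMα : (0:ℝ) ≤ M * α := by positivity
        have m1 : |A1| * w ≤ (1 + 2 * M * a) * w := mul_le_mul_of_nonneg_right hA1b hw0
        have m2 : |A2| * |iteratedDeriv k (fun y => V (s, y) * V (s, y)) x|
            ≤ (M * a + 1) * R :=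
          mul_le_mul hA2b hDvvR (abs_nonneg _) (by positivity)
        have m3 : |A3| * |iteratedDeriv k (fun y => f y * (V (s, y) * V (s, y))) x|
            ≤ (M * α) * (2 ^ k * Ff * R) :=
          mul_le_mul hA3b hDfvv (abs_nonneg _) hMα
        have hfinal : (1 + 2 * M * a) * w + ((M * a + 1) * R + (M * α) * (2 ^ k * Ff * R))
            = K * w + ε := by
          simp only [hKdef, hεdef, hQdef, hRdef]
          ring
        linarith
      -- ## Gronwall argument for t ≥ τ
      set C2 : ℝ := (C1 + ε / K) * Real.exp (K * T) with hC2def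
      have hbound : ∀ t ∈ Set.Ico (0:ℝ) T, τ ≤ t → ∀ x : ℝ,
          |iteratedDeriv k (fun y => V (t, y)) x| ≤ C2 := by
        intro t ht hτt x
        have hIccS : ∀ s ∈ Set.Icc τ t, s ∈ Set.Ico (0:ℝ) T := fun s hs =>
          ⟨le_trans hτ0.le hs.1, lt_of_le_of_lt hs.2 ht.2⟩
        have hcont : ContinuousOn (fun s => pdx S V k (s, x)) (Set.Icc τ t) := by
          apply ContinuousOn.comp ((hGc k).continuousOn)
            (Continuous.continuousOn (continuous_id.prodMk continuous_const))
          exact fun s hs => hmemS s (hIccS s hs) x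
        have hder : ∀ s ∈ Set.Ico τ t, HasDerivWithinAt (fun s' => pdx S V k (s', x))
            (pdx Ω T0 k (s, x)) (Set.Ici s) s := by
          intro s hs
          have hsΩ : ((s, x) : ℝ × ℝ) ∈ Ω :=
            hmemΩ s ⟨lt_of_lt_of_le hτ0 hs.1, lt_trans hs.2 ht.2⟩ x
          have hdiff : DifferentiableAt ℝ (pdx S V k) (s, x) :=
            ((hGc k).contDiffAt (hSnhds _ hsΩ)).differentiableAt (by simp)
          have h := hasDerivAt_slice1 (p := (s, x)) hdiff
          rw [hswap k _ hsΩ] at h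
          exact (by simpa using h : HasDerivAt (fun s' => pdx S V k (s', x))
            (pdx Ω T0 k (s, x)) s).hasDerivWithinAt
        have hstart : ‖pdx S V k (τ, x)‖ ≤ C1 := by
          rw [Real.norm_eq_abs, hGslice k τ ⟨hτ0.le, hτT⟩ x]
          exact hinit τ hτ0.le (le_refl τ) x
        have hbd : ∀ s ∈ Set.Ico τ t, ‖pdx Ω T0 k (s, x)‖
            ≤ K * ‖pdx S V k (s, x)‖ + ε := by
          intro s hs
          rw [Real.norm_eq_abs, Real.norm_eq_abs]
          exact hODE s ⟨lt_of_lt_of_le hτ0 hs.1, lt_trans hs.2 ht.2⟩ x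
        have hgron := norm_le_gronwallBound_of_norm_deriv_right_le hcont hder hstart hbd
          t ⟨hτt, le_refl t⟩
        have hmono : gronwallBound C1 K ε (t - τ) ≤ C2 := by
          rw [hC2def]
          exact gronwallBound_le_of_mem hC10 hK0 hε0 (by linarith)
            (by simp only [hτdef]; linarith [ht.2])
        rw [Real.norm_eq_abs, hGslice k t ht x] at hgron
        linarith
      -- ## combine
      refine ⟨max Bm (max 1 (max C1 C2)), le_trans hBm1 (le_max_left _ _), ?_⟩
      intro j hj t ht x
      rcases Nat.lt_or_ge j k with hjk | hjk
      · exact le_trans (hBm j (by omega) t ht x) (le_max_left _ _)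
      · have hjeq : j = k := le_antisymm hj hjk
        rw [hjeq]
        rcases le_or_gt t τ with hcase | hcase
        · calc |iteratedDeriv k (fun y => V (t, y)) x| ≤ C1 := hinit t ht.1 hcase x
            _ ≤ max Bm (max 1 (max C1 C2)) :=
              le_trans (le_max_left _ _) (le_trans (le_max_right _ _) (le_max_right _ _))
        · calc |iteratedDeriv k (fun y => V (t, y)) x| ≤ C2 := hbound t ht hcase.le x
            _ ≤ max Bm (max 1 (max C1 C2)) :=
              le_trans (le_max_right _ _) (le_trans (le_max_right _ _) (le_max_right _ _))

  -- ## conclusion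
  intro k hk
  obtain ⟨B, hB1, hB⟩ := hclaim k
  refine ⟨B, ?_⟩
  intro t ht x
  have hrho : rho u t = fun y => Real.exp (-t) * V (t, y) := by
    funext y
    simp only [rho, hVdef, div_eq_mul_inv]
  rw [hrho, itd_cmul (hvt t ht) _ k x, abs_mul, abs_of_pos (Real.exp_pos _)]
  have h1 : Real.exp (-t) ≤ 1 := Real.exp_le_one_iff.2 (by linarith [ht.1])
  have h2 := hB k (le_refl k) t ht x
  nlinarith [abs_nonneg (iteratedDeriv k (fun y => V (t, y)) x)]
end

section
/- For all integers s ≥ 1 and 0 ≤ l ≤ s there exists a constant C > 0, depending only on s and l, such that for every C^∞ function u : ℝ → ℝ with u(x+1) = u(x) for all x, one has |∫₀¹ ∂ₓˡu(x) · ∂ₓ^{s−l}u(x) · ∂ₓˢu(x) dx| ≤ C · (∫₀¹ (∂ₓˢu(x))² dx) · sup over x of |u(x)|. -/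
open MeasureTheory Set intervalIntegral Filter Topology

/-- Derivative of `y ↦ |y|^q * y` for `q > 0`. -/
lemma hasDerivAt_abs_rpow_mul_self {q : ℝ} (hq : 0 < q) (x : ℝ) :
    HasDerivAt (fun y : ℝ => |y| ^ q * y) ((q + 1) * |x| ^ q) x := by
  rcases lt_trichotomy x 0 with hx | hx | hx
  · have h0 : HasDerivAt (fun y : ℝ => -y) (-1) x := (hasDerivAt_id x).neg
    have h2 : HasDerivAt (fun z : ℝ => z ^ (q + 1)) ((q + 1) * (-x) ^ (q + 1 - 1)) (-x) :=
      Real.hasDerivAt_rpow_const (Or.inl (by linarith))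
    have h3 : HasDerivAt (fun y : ℝ => -((-y) ^ (q + 1))) ((q + 1) * (-x) ^ q) x := by
      have := ((h2.comp x h0).neg)
      convert this using 1
      · rfl
      · rfl
      · rfl
      rw [add_sub_cancel_right]
      ring
    have hev : (fun y : ℝ => |y| ^ q * y) =ᶠ[nhds x] (fun y : ℝ => -((-y) ^ (q + 1))) := by
      filter_upwards [eventually_nhds_iff.mpr ⟨Iio 0, fun y hy => hy, isOpen_Iio, hx⟩] with y hy
      have hy' : y < 0 := hy
      rw [abs_of_neg hy', Real.rpow_add_one (by linarith : (-y) ≠ 0)]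
      ring
    have := h3.congr_of_eventuallyEq hev
    simpa [abs_of_neg hx] using this
  · subst hx
    rw [hasDerivAt_iff_tendsto_slope]
    have hev : (fun y : ℝ => |y| ^ q) =ᶠ[nhdsWithin 0 {(0:ℝ)}ᶜ] slope (fun y : ℝ => |y| ^ q * y) 0 := by
      filter_upwards [self_mem_nhdsWithin] with y hy
      have hy' : y ≠ 0 := hy
      simp [slope, hy']
      field_simp
    have hcont : ContinuousAt (fun y : ℝ => |y| ^ q) 0 := by
      have h1 : ContinuousAt (fun z : ℝ => z ^ q) (|(0:ℝ)|) := by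
        simpa using Real.continuousAt_rpow_const 0 q (Or.inr hq.le)
      exact h1.comp continuous_abs.continuousAt
    have h0 : ((q + 1) * |(0:ℝ)| ^ q) = |(0:ℝ)| ^ q := by
      simp [Real.zero_rpow hq.ne']
    rw [h0]
    exact (hcont.tendsto.mono_left nhdsWithin_le_nhds).congr' hev
  · have h2 : HasDerivAt (fun z : ℝ => z ^ (q + 1)) ((q + 1) * x ^ (q + 1 - 1)) x :=
      Real.hasDerivAt_rpow_const (Or.inl (by linarith))
    have hev : (fun y : ℝ => |y| ^ q * y) =ᶠ[nhds x] (fun y : ℝ => y ^ (q + 1)) := by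
      filter_upwards [eventually_nhds_iff.mpr ⟨Ioi 0, fun y hy => hy, isOpen_Ioi, hx⟩] with y hy
      have hy' : (0:ℝ) < y := hy
      rw [abs_of_pos hy', Real.rpow_add_one (by linarith : y ≠ 0)]
    have := h2.congr_of_eventuallyEq hev
    simpa [abs_of_pos hx, add_sub_cancel_right] using this

section Basic

variable {u : ℝ → ℝ}

lemma contDiff_iteratedDeriv (hu : ContDiff ℝ (⊤ : ℕ∞) u) (j : ℕ) :
    ContDiff ℝ (⊤ : ℕ∞) (iteratedDeriv j u) := by
  rw [iteratedDeriv_eq_iterate]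
  exact ContDiff.iterate_deriv j hu

lemma continuous_iteratedDeriv (hu : ContDiff ℝ (⊤ : ℕ∞) u) (j : ℕ) :
    Continuous (iteratedDeriv j u) :=
  (contDiff_iteratedDeriv hu j).continuous

lemma hasDerivAt_iteratedDeriv (hu : ContDiff ℝ (⊤ : ℕ∞) u) (j : ℕ) (x : ℝ) :
    HasDerivAt (iteratedDeriv j u) (iteratedDeriv (j + 1) u x) x := by
  rw [iteratedDeriv_succ]
  exact ((contDiff_iteratedDeriv hu j).differentiable (by norm_num)).differentiableAt.hasDerivAt

lemma periodic_iteratedDeriv_s9 (hper : Function.Periodic u 1) (j : ℕ) :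
    Function.Periodic (iteratedDeriv j u) 1 := by
  induction j with
  | zero => simpa [iteratedDeriv_zero] using hper
  | succ n ih =>
    intro x
    rw [iteratedDeriv_succ]
    have h1 : (fun y => iteratedDeriv n u (y + 1)) = iteratedDeriv n u := funext ih
    calc deriv (iteratedDeriv n u) (x + 1)
        = deriv (fun y => iteratedDeriv n u (y + 1)) x := (deriv_comp_add_const _ _ _).symm
      _ = deriv (iteratedDeriv n u) x := by rw [h1]

end Basic

/-- Bound by the sup over ℝ for a continuous periodic function. -/
lemma le_ciSup_abs_of_periodic {v : ℝ → ℝ} (hv : Continuous v) (hper : Function.Periodic v 1)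
    (x : ℝ) : |v x| ≤ ⨆ y : ℝ, |v y| := by
  have hper' : Function.Periodic (fun y => |v y|) 1 := fun y => by simp [hper y]
  have himg : (fun y => |v y|) '' Icc 0 (0 + 1) = range (fun y => |v y|) :=
    hper'.image_Icc one_pos 0
  have hbdd : BddAbove (range fun y => |v y|) := by
    rw [← himg]
    exact (isCompact_Icc.image (hv.abs)).bddAbove
  exact le_ciSup hbdd x

/-- Hölder inequality on `[0,1]` for continuous nonnegative functions. -/
lemma holder01 {f g : ℝ → ℝ} (hf : Continuous f) (hg : Continuous g)
    (hf0 : ∀ x, 0 ≤ f x) (hg0 : ∀ x, 0 ≤ g x) {p q : ℝ} (hpq : Real.HolderConjugate p q) :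
    ∫ x in (0:ℝ)..1, f x * g x
      ≤ (∫ x in (0:ℝ)..1, f x ^ p) ^ (1 / p) * (∫ x in (0:ℝ)..1, g x ^ q) ^ (1 / q) := by
  rw [intervalIntegral.integral_of_le zero_le_one, intervalIntegral.integral_of_le zero_le_one,
    intervalIntegral.integral_of_le zero_le_one]
  set μ := (volume : Measure ℝ).restrict (Ioc 0 1) with hμ
  haveI : IsFiniteMeasure μ := by
    constructor
    rw [hμ, Measure.restrict_apply_univ, Real.volume_Ioc]
    norm_num
  have hmem : ∀ (h : ℝ → ℝ), Continuous h → ∀ r : ℝ, MemLp h (ENNReal.ofReal r) μ := by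
    intro h hh r
    obtain ⟨C, hC⟩ : ∃ C, ∀ x ∈ Icc (0:ℝ) 1, ‖h x‖ ≤ C := by
      obtain ⟨C, hC⟩ := (isCompact_Icc (a := (0:ℝ)) (b := 1)).exists_bound_of_continuousOn
        hh.continuousOn
      exact ⟨C, hC⟩
    refine MemLp.of_bound hh.aestronglyMeasurable C ?_
    rw [hμ, ae_restrict_iff' measurableSet_Ioc]
    exact Eventually.of_forall fun x hx => hC x (Ioc_subset_Icc_self hx)
  exact integral_mul_le_Lp_mul_Lq_of_nonneg hpq
    (Eventually.of_forall hf0) (Eventually.of_forall hg0)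
    (hmem f hf p) (hmem g hg q)

section Chain

variable {b : ℕ → ℝ} {K : ℝ} {s : ℕ}

lemma chain_ratio (hK : 1 ≤ K) (hpos : ∀ j, j ≤ s → 0 < b j)
    (h : ∀ j, j + 2 ≤ s → b (j + 1) ^ 2 ≤ K * (b j * b (j + 2))) (i : ℕ) :
    ∀ j, i ≤ j → j + 1 ≤ s → b (i + 1) * b j ≤ K ^ (j - i) * (b i * b (j + 1)) := by
  intro j
  induction j with
  | zero =>
    intro hij hjs
    interval_cases i
    simp
    nlinarith [hpos 0 (by omega), hpos 1 hjs]
  | succ j ih =>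
    intro hij hjs
    rcases Nat.eq_or_lt_of_le hij with rfl | hlt
    · simp
      nlinarith [hpos (j+1) (by omega), hpos (j+2) (by omega)]
    · have hij' : i ≤ j := by omega
      have IH := ih hij' (by omega)
      have hlad := h j (by omega)
      have hbj := hpos j (by omega)
      have hbj1 := hpos (j + 1) (by omega)
      have hbj2 := hpos (j + 2) (by omega)
      have hbi := hpos i (by omega)
      have hbi1 := hpos (i + 1) (by omega)
      have hKpos : (0:ℝ) < K := lt_of_lt_of_le one_pos hK
      have hKpow : (0:ℝ) < K ^ (j - i) := pow_pos hKpos _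
      have key : (b (i + 1) * b (j + 1)) * (b j * b (j + 1))
          ≤ (K ^ (j + 1 - i) * (b i * b (j + 2))) * (b j * b (j + 1)) := by
        have e1 : (b (i + 1) * b (j + 1)) * (b j * b (j + 1))
            = (b (i + 1) * b j) * (b (j + 1) ^ 2) := by ring
        have e2 : j + 1 - i = (j - i) + 1 := by omega
        rw [e1, e2, pow_succ]
        calc (b (i + 1) * b j) * b (j + 1) ^ 2
            ≤ (K ^ (j - i) * (b i * b (j + 1))) * (K * (b j * b (j + 2))) := by
              apply mul_le_mul IH hlad (sq_nonneg _)
              positivity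
          _ = K ^ (j - i) * K * (b i * b (j + 2)) * (b j * b (j + 1)) := by ring
      exact le_of_mul_le_mul_right key (by positivity)

lemma chain_pos (hK : 1 ≤ K) (hpos : ∀ j, j ≤ s → 0 < b j)
    (h : ∀ j, j + 2 ≤ s → b (j + 1) ^ 2 ≤ K * (b j * b (j + 2))) :
    ∀ l, l ≤ s - l → b l * b (s - l) ≤ K ^ (l * s) * (b 0 * b s) := by
  intro l
  induction l with
  | zero => intro _; simp
  | succ l ih =>
    intro hl
    have hKpos : (0:ℝ) < K := lt_of_lt_of_le one_pos hK
    have h1 : l + 1 ≤ s - (l + 1) := hl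
    have hls : 2 * l + 2 ≤ s := by omega
    have hIH := ih (by omega)
    have hr := chain_ratio hK hpos h l (s - l - 1) (by omega) (by omega)
    have e1 : s - l - 1 + 1 = s - l := by omega
    have e2 : s - (l + 1) = s - l - 1 := by omega
    rw [e1] at hr
    have hb0 : 0 < b 0 := hpos 0 (by omega)
    have hbs : 0 < b s := hpos s le_rfl
    calc b (l + 1) * b (s - (l + 1))
        = b (l + 1) * b (s - l - 1) := by rw [e2]
      _ ≤ K ^ (s - l - 1 - l) * (b l * b (s - l)) := hr
      _ ≤ K ^ (s - l - 1 - l) * (K ^ (l * s) * (b 0 * b s)) := by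
          apply mul_le_mul_of_nonneg_left hIH (by positivity)
      _ = K ^ (s - l - 1 - l + l * s) * (b 0 * b s) := by rw [pow_add]; ring
      _ ≤ K ^ ((l + 1) * s) * (b 0 * b s) := by
          apply mul_le_mul_of_nonneg_right _ (by positivity)
          apply pow_le_pow_right₀ hK
          have : s - l - 1 - l ≤ s := by omega
          calc s - l - 1 - l + l * s ≤ s + l * s := by omega
            _ = (l + 1) * s := by ring
    
lemma chain_main (hs : 1 ≤ s) (hK : 1 ≤ K) (hb : ∀ j, 0 ≤ b j)
    (h : ∀ j, j + 2 ≤ s → b (j + 1) ^ 2 ≤ K * (b j * b (j + 2)))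
    (l : ℕ) (hl : l ≤ s) :
    b l * b (s - l) ≤ K ^ (s * s) * (b 0 * b s) := by
  have hKpos : (0:ℝ) < K := lt_of_lt_of_le one_pos hK
  have hKpow : (1:ℝ) ≤ K ^ (s * s) := one_le_pow₀ hK
  rcases eq_or_ne l 0 with rfl | hl0
  · simpa using le_mul_of_one_le_left (mul_nonneg (hb 0) (hb s)) hKpow
  rcases eq_or_ne l s with hls | hls
  · rw [hls, Nat.sub_self, mul_comm]
    exact le_mul_of_one_le_left (mul_nonneg (hb 0) (hb s)) hKpow
  have hl1 : 1 ≤ l := by omega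
  have hl2 : l ≤ s - 1 := by omega
  have hs2 : 2 ≤ s := by omega
  by_cases hall : ∀ j, j ≤ s → 0 < b j
  · rcases le_total l (s - l) with hc | hc
    · calc b l * b (s - l) ≤ K ^ (l * s) * (b 0 * b s) := chain_pos hK hall h l hc
        _ ≤ K ^ (s * s) * (b 0 * b s) := by
            apply mul_le_mul_of_nonneg_right _ (mul_nonneg (hb 0) (hb s))
            exact pow_le_pow_right₀ hK (by nlinarith)
    · have hsl : s - l ≤ s - (s - l) := by omega
      have := chain_pos hK hall h (s - l) hsl
      have e : s - (s - l) = l := by omega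
      rw [e] at this
      calc b l * b (s - l) = b (s - l) * b l := by ring
        _ ≤ K ^ ((s - l) * s) * (b 0 * b s) := this
        _ ≤ K ^ (s * s) * (b 0 * b s) := by
            apply mul_le_mul_of_nonneg_right _ (mul_nonneg (hb 0) (hb s))
            exact pow_le_pow_right₀ hK (by nlinarith [Nat.sub_le s l])
  · -- some b j is zero: show b l = 0
    push_neg at hall
    obtain ⟨j0, hj0s, hj0⟩ := hall
    have hj0' : b j0 = 0 := le_antisymm hj0 (hb j0)
    -- produce an interior zero
    have hint : ∃ j1, 1 ≤ j1 ∧ j1 ≤ s - 1 ∧ b j1 = 0 := by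
      rcases eq_or_ne j0 0 with h00 | h00
      · refine ⟨1, le_rfl, by omega, ?_⟩
        have hlad := h 0 (by omega)
        rw [h00] at hj0'
        rw [hj0', zero_mul, mul_zero] at hlad
        have h2 := sq_nonneg (b 1)
        have : b 1 ^ 2 = 0 := le_antisymm hlad (sq_nonneg _)
        exact pow_eq_zero_iff two_ne_zero |>.mp this
      rcases eq_or_ne j0 s with hS | hS
      · refine ⟨s - 1, by omega, le_rfl, ?_⟩
        have hlad := h (s - 2) (by omega)
        have e1 : s - 2 + 1 = s - 1 := by omega
        have e2 : s - 2 + 2 = s := by omega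
        rw [hS] at hj0'
        rw [e1, e2, hj0', mul_zero, mul_zero] at hlad
        have : b (s - 1) ^ 2 = 0 := le_antisymm hlad (sq_nonneg _)
        exact pow_eq_zero_iff two_ne_zero |>.mp this
      · exact ⟨j0, by omega, by omega, hj0'⟩
    obtain ⟨j1, hj11, hj1s, hj1z⟩ := hint
    -- downward propagation
    have down : ∀ d, 1 ≤ j1 - d → b (j1 - d) = 0 := by
      intro d
      induction d with
      | zero => intro _; simpa using hj1z
      | succ d ihd =>
        intro hd
        set i := j1 - (d + 1) with hi
        have hi1 : i + 1 = j1 - d := by omega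
        have hbi1 : b (i + 1) = 0 := by rw [hi1]; exact ihd (by omega)
        have hlad := h (i - 1) (by omega)
        have e1 : i - 1 + 1 = i := by omega
        have e2 : i - 1 + 2 = i + 1 := by omega
        rw [e1, e2, hbi1, mul_zero, mul_zero] at hlad
        have : b i ^ 2 = 0 := le_antisymm hlad (sq_nonneg _)
        exact pow_eq_zero_iff two_ne_zero |>.mp this
    -- upward propagation
    have up : ∀ d, j1 + d ≤ s - 1 → b (j1 + d) = 0 := by
      intro d
      induction d with
      | zero => intro _; simpa using hj1z
      | succ d ihd =>
        intro hd
        have hbid : b (j1 + d) = 0 := ihd (by omega)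
        have hlad := h (j1 + d) (by omega)
        rw [hbid, zero_mul, mul_zero] at hlad
        have hz : b (j1 + d + 1) ^ 2 = 0 := le_antisymm hlad (sq_nonneg _)
        have e : j1 + (d + 1) = j1 + d + 1 := by omega
        rw [e]
        exact pow_eq_zero_iff two_ne_zero |>.mp hz
    have hbl : b l = 0 := by
      rcases le_total l j1 with hc | hc
      · have := down (j1 - l) (by omega)
        have e : j1 - (j1 - l) = l := by omega
        rwa [e] at this
      · have := up (l - j1) (by omega)
        have e : j1 + (l - j1) = l := by omega
        rwa [e] at this
    rw [hbl, zero_mul]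
    exact mul_nonneg (pow_nonneg hKpos.le _) (mul_nonneg (hb 0) (hb s))

end Chain

lemma div_rpow_step {B c θ : ℝ} (hB : 0 ≤ B) (hθ : 0 < θ) (hc : 0 ≤ c)
    (h : B ≤ c * B ^ (1 - θ)) : B ^ θ ≤ c := by
  rcases hB.eq_or_lt with hB0 | hB0
  · rw [← hB0, Real.zero_rpow hθ.ne']
    exact hc
  · have hkey : B ^ θ * B ^ (1 - θ) ≤ c * B ^ (1 - θ) := by
      rw [← Real.rpow_add hB0]
      simpa using h
    exact le_of_mul_le_mul_right hkey (Real.rpow_pos_of_pos hB0 _)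

lemma mul_abs_rpow_self {p : ℝ} (hp : 2 < p) (y : ℝ) :
    y * (|y| ^ (p - 2) * y) = |y| ^ p := by
  rcases eq_or_ne y 0 with rfl | hy
  · simp [Real.zero_rpow (by linarith : p ≠ 0)]
  · have hy' : 0 < |y| := abs_pos.mpr hy
    calc y * (|y| ^ (p - 2) * y) = |y| ^ (p - 2) * y ^ 2 := by ring
      _ = |y| ^ (p - 2) * |y| ^ (2:ℝ) := by
          rw [Real.rpow_two, sq_abs]
      _ = |y| ^ (p - 2 + 2) := (Real.rpow_add hy' _ _).symm
      _ = |y| ^ p := by norm_num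

section Core

variable {u : ℝ → ℝ}

lemma ibp_bound (hu : ContDiff ℝ (⊤ : ℕ∞) u) (hper : Function.Periodic u 1)
    (j : ℕ) {p : ℝ} (hp : 2 < p) :
    ∫ x in (0:ℝ)..1, |iteratedDeriv (j+1) u x| ^ p
      ≤ (p - 1) * ∫ x in (0:ℝ)..1,
          |iteratedDeriv j u x| * (|iteratedDeriv (j+1) u x| ^ (p - 2) * |iteratedDeriv (j+2) u x|) := by
  set D : ℕ → ℝ → ℝ := fun k => iteratedDeriv k u with hD
  have hcont : ∀ k, Continuous (D k) := fun k => continuous_iteratedDeriv hu k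
  have hq : (0:ℝ) < p - 2 := by linarith
  set v : ℝ → ℝ := fun x => |D (j+1) x| ^ (p - 2) * D (j+1) x with hv
  set v' : ℝ → ℝ := fun x => (p - 1) * |D (j+1) x| ^ (p - 2) * D (j+2) x with hv'
  have hvd : ∀ x, HasDerivAt v (v' x) x := by
    intro x
    have h1 := hasDerivAt_abs_rpow_mul_self hq (D (j+1) x)
    have h2 := hasDerivAt_iteratedDeriv hu (j+1) x
    have := h1.comp x h2
    convert this using 1
    · rfl
    · rfl
    · rfl
    simp only [hv']
    ring_nf
    rfl
  have hcont_rpow : Continuous fun x => |D (j+1) x| ^ (p - 2) :=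
    ((hcont (j+1)).abs).rpow_const (fun x => Or.inr hq.le)
  have hv'cont : Continuous v' := by
    apply Continuous.mul
    · exact (continuous_const.mul hcont_rpow)
    · exact hcont (j+2)
  have hDd : ∀ x, HasDerivAt (D j) (D (j+1) x) x := fun x => hasDerivAt_iteratedDeriv hu j x
  have hsum : ∫ x in (0:ℝ)..1, (D (j+1) x * v x + D j x * v' x)
      = D j 1 * v 1 - D j 0 * v 0 := by
    apply intervalIntegral.integral_deriv_mul_eq_sub
      (fun x _ => hDd x) (fun x _ => hvd x)
      ((hcont (j+1)).intervalIntegrable 0 1) (hv'cont.intervalIntegrable 0 1)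
  have hperD : ∀ k, D k 1 = D k 0 := by
    intro k
    simpa using (periodic_iteratedDeriv_s9 hper k) 0
  have hbdry : D j 1 * v 1 - D j 0 * v 0 = 0 := by
    have : v 1 = v 0 := by simp only [hv, hperD (j+1)]
    rw [this, hperD j, sub_self]
  rw [hbdry] at hsum
  have hint1 : IntervalIntegrable (fun x => D (j+1) x * v x) volume 0 1 := by
    apply Continuous.intervalIntegrable
    exact (hcont (j+1)).mul (hcont_rpow.mul (hcont (j+1)))
  have hint2 : IntervalIntegrable (fun x => D j x * v' x) volume 0 1 := by
    apply Continuous.intervalIntegrable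
    exact (hcont j).mul hv'cont
  have hsplit : (∫ x in (0:ℝ)..1, D (j+1) x * v x) + (∫ x in (0:ℝ)..1, D j x * v' x) = 0 := by
    rw [← intervalIntegral.integral_add hint1 hint2]
    exact hsum
  have heq1 : (∫ x in (0:ℝ)..1, D (j+1) x * v x) = ∫ x in (0:ℝ)..1, |D (j+1) x| ^ p := by
    apply intervalIntegral.integral_congr
    intro x _
    exact mul_abs_rpow_self hp (D (j+1) x)
  have hmain : (∫ x in (0:ℝ)..1, |D (j+1) x| ^ p) = -(∫ x in (0:ℝ)..1, D j x * v' x) := by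
    rw [← heq1]; linarith
  rw [hmain]
  have habs : -(∫ x in (0:ℝ)..1, D j x * v' x)
      ≤ ∫ x in (0:ℝ)..1, |D j x * v' x| := by
    have h1 : |∫ x in (0:ℝ)..1, D j x * v' x| ≤ ∫ x in (0:ℝ)..1, |D j x * v' x| :=
      intervalIntegral.abs_integral_le_integral_abs zero_le_one
    have := neg_abs_le (∫ x in (0:ℝ)..1, D j x * v' x)
    linarith
  refine le_trans habs ?_
  rw [← intervalIntegral.integral_const_mul]
  apply intervalIntegral.integral_mono_on zero_le_one
  · exact (((hcont j).mul hv'cont).abs).intervalIntegrable 0 1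
  · apply Continuous.intervalIntegrable
    apply continuous_const.mul
    exact ((hcont j).abs).mul (hcont_rpow.mul ((hcont (j+2)).abs))
  · intro x _
    rw [abs_mul, hv']
    simp only
    rw [abs_mul, abs_mul, abs_of_nonneg (by linarith : (0:ℝ) ≤ p - 1),
      abs_of_nonneg (Real.rpow_nonneg (abs_nonneg _) _)]
    ring_nf
    exact le_of_eq (by simp only [hD]; ring)

end Core

noncomputable def Bint (u : ℝ → ℝ) (s j : ℕ) : ℝ :=
  ∫ x in (0:ℝ)..1, |iteratedDeriv j u x| ^ ((2*(s:ℝ))/(j:ℝ))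

noncomputable def bnorm (u : ℝ → ℝ) (s j : ℕ) : ℝ :=
  if j = 0 then ⨆ x, |u x| else (Bint u s j) ^ ((j:ℝ)/(2*(s:ℝ)))

lemma Bint_nonneg (u : ℝ → ℝ) (s j : ℕ) : 0 ≤ Bint u s j := by
  apply intervalIntegral.integral_nonneg zero_le_one
  intro x _
  exact Real.rpow_nonneg (abs_nonneg _) _

lemma bnorm_nonneg (u : ℝ → ℝ) (s j : ℕ) : 0 ≤ bnorm u s j := by
  unfold bnorm
  split
  · exact Real.iSup_nonneg (fun x => abs_nonneg _)
  · exact Real.rpow_nonneg (Bint_nonneg u s j) _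

section Ladder

variable {u : ℝ → ℝ}

lemma bnorm_ladder (hu : ContDiff ℝ (⊤ : ℕ∞) u) (hper : Function.Periodic u 1)
    {s j : ℕ} (hj : j + 2 ≤ s) :
    bnorm u s (j+1) ^ 2 ≤ (2*(s:ℝ)) * (bnorm u s j * bnorm u s (j+2)) := by
  set D : ℕ → ℝ → ℝ := fun k => iteratedDeriv k u with hD
  have hcont : ∀ k, Continuous (D k) := fun k => continuous_iteratedDeriv hu k
  set sr := (s:ℝ) with hsr
  set jr := (j:ℝ) with hjr
  have hsr2 : jr + 2 ≤ sr := by simp only [hjr, hsr]; exact_mod_cast hj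
  have hjr0 : 0 ≤ jr := Nat.cast_nonneg j
  have hsrpos : 0 < sr := by linarith
  set p : ℝ := 2*sr/(jr+1) with hp
  have hp2 : 2 < p := by
    rw [hp, lt_div_iff₀ (by linarith : (0:ℝ) < jr + 1)]
    linarith
  have hppos : 0 < p := by linarith
  -- casts
  have hc1 : ((j+1:ℕ):ℝ) = jr + 1 := by push_cast; ring
  have hc2 : ((j+2:ℕ):ℝ) = jr + 2 := by push_cast; ring
  -- A = ∫ |D (j+1)|^p
  have hA : Bint u s (j+1) = ∫ x in (0:ℝ)..1, |D (j+1) x| ^ p := by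
    unfold Bint
    rw [hc1]
  set A := Bint u s (j+1) with hAdef
  have hAnn : 0 ≤ A := Bint_nonneg u s (j+1)
  -- IBP bound
  have h1 : A ≤ (p - 1) * ∫ x in (0:ℝ)..1,
      |D j x| * (|D (j+1) x| ^ (p - 2) * |D (j+2) x|) := by
    rw [hA]; exact ibp_bound hu hper j hp2
  -- continuity of pieces
  have hcr : Continuous fun x => |D (j+1) x| ^ (p-2) :=
    ((hcont (j+1)).abs).rpow_const (fun x => Or.inr (by linarith))
  have hconj1 : Real.HolderConjugate (p/(p-2)) (p/2) := by
    rw [Real.holderConjugate_iff]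
    constructor
    · rw [lt_div_iff₀ (by linarith : (0:ℝ) < p - 2)]; linarith
    · rw [inv_div, inv_div]
      field_simp
      ring
  -- outer Hölder (applies for all j)
  have houter : ∫ x in (0:ℝ)..1, (|D (j+1) x| ^ (p-2)) * (|D j x| * |D (j+2) x|)
      ≤ A ^ ((p-2)/p) * (∫ x in (0:ℝ)..1, (|D j x| * |D (j+2) x|) ^ (p/2)) ^ (2/p) := by
    have h := holder01 (f := fun x => |D (j+1) x| ^ (p-2))
      (g := fun x => |D j x| * |D (j+2) x|) hcr (((hcont j).abs).mul ((hcont (j+2)).abs))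
      (fun x => Real.rpow_nonneg (abs_nonneg _) _)
      (fun x => mul_nonneg (abs_nonneg _) (abs_nonneg _)) hconj1
    have e1 : ∀ x : ℝ, ((|D (j+1) x| ^ (p-2)) ^ (p/(p-2))) = |D (j+1) x| ^ p := by
      intro x
      rw [← Real.rpow_mul (abs_nonneg _)]
      congr 1
      field_simp
      exact div_self (show p - 2 ≠ 0 by linarith)
    have e2 : (∫ x in (0:ℝ)..1, (|D (j+1) x| ^ (p-2)) ^ (p/(p-2)))
        = ∫ x in (0:ℝ)..1, |D (j+1) x| ^ p := by
      apply intervalIntegral.integral_congr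
      intro x _; exact e1 x
    rw [e2] at h
    have e3 : 1/(p/(p-2)) = (p-2)/p := one_div_div _ _
    have e4 : 1/(p/2) = 2/p := one_div_div _ _
    rw [e3, e4] at h
    rw [hA]
    exact h
  -- rewrite integrand of h1
  have h1' : A ≤ (p - 1) * ∫ x in (0:ℝ)..1,
      (|D (j+1) x| ^ (p-2)) * (|D j x| * |D (j+2) x|) := by
    refine le_trans h1 (le_of_eq ?_)
    congr 1
    apply intervalIntegral.integral_congr
    intro x _
    ring
  set G : ℝ := (∫ x in (0:ℝ)..1, (|D j x| * |D (j+2) x|) ^ (p/2)) ^ (2/p) with hG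
  have hInn : 0 ≤ ∫ x in (0:ℝ)..1, (|D j x| * |D (j+2) x|) ^ (p/2) := by
    apply intervalIntegral.integral_nonneg zero_le_one
    intro x _
    exact Real.rpow_nonneg (mul_nonneg (abs_nonneg _) (abs_nonneg _)) _
  have hGnn : 0 ≤ G := Real.rpow_nonneg hInn _
  have h2 : A ≤ (p - 1) * (A ^ ((p-2)/p) * G) :=
    le_trans h1' (by
      apply mul_le_mul_of_nonneg_left houter (by linarith : (0:ℝ) ≤ p - 1))
  -- G ≤ bnorm j * bnorm (j+2)
  have hbj2 : bnorm u s (j+2) = (Bint u s (j+2)) ^ (((j+2:ℕ):ℝ)/(2*sr)) := by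
    rw [bnorm, if_neg (by omega : ¬ (j+2) = 0)]
  have hGle : G ≤ bnorm u s j * bnorm u s (j+2) := by
    rcases Nat.eq_zero_or_pos j with hj0 | hjpos
    · -- j = 0 case
      have hjr00 : jr = 0 := by rw [hjr, hj0]; simp
      have hDj : D j = u := by rw [hD, hj0]; exact iteratedDeriv_zero
      set M := ⨆ x : ℝ, |u x| with hM
      have hMle : ∀ x, |D j x| ≤ M := by
        intro x
        rw [hDj]
        exact le_ciSup_abs_of_periodic (hu.continuous) hper x
      have hMnn : 0 ≤ M := le_trans (abs_nonneg _) (hMle 0)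
      have hp2sr : p = 2*sr := by rw [hp, hjr00]; norm_num
      have hhalf : (0:ℝ) ≤ p/2 := by positivity
      have hmono : (∫ x in (0:ℝ)..1, (|D j x| * |D (j+2) x|) ^ (p/2))
          ≤ M ^ (p/2) * ∫ x in (0:ℝ)..1, |D (j+2) x| ^ (p/2) := by
        rw [← intervalIntegral.integral_const_mul]
        apply intervalIntegral.integral_mono_on zero_le_one
        · apply Continuous.intervalIntegrable
          exact (((hcont j).abs).mul ((hcont (j+2)).abs)).rpow_const
            (fun x => Or.inr hhalf)
        · apply Continuous.intervalIntegrable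
          exact continuous_const.mul (((hcont (j+2)).abs).rpow_const (fun x => Or.inr hhalf))
        · intro x _
          rw [← Real.mul_rpow hMnn (abs_nonneg _)]
          apply Real.rpow_le_rpow (mul_nonneg (abs_nonneg _) (abs_nonneg _)) _ hhalf
          exact mul_le_mul_of_nonneg_right (hMle x) (abs_nonneg _)
      have hB2 : (∫ x in (0:ℝ)..1, |D (j+2) x| ^ (p/2)) = Bint u s (j+2) := by
        have he : p/2 = 2*(s:ℝ)/((j+2:ℕ):ℝ) := by
          rw [hc2, hp, hjr00]
          rw [zero_add, div_one, zero_add]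
        rw [he]
        rfl
      have hB2nn : 0 ≤ Bint u s (j+2) := Bint_nonneg u s (j+2)
      have hGle2 : G ≤ (M ^ (p/2) * Bint u s (j+2)) ^ (2/p) := by
        rw [hG]
        apply Real.rpow_le_rpow hInn _ (by positivity)
        rw [hB2] at hmono
        exact hmono
      have hexp1 : (M ^ (p/2)) ^ (2/p) = M := by
        rw [← Real.rpow_mul hMnn]
        rw [show p/2 * (2/p) = 1 by field_simp]
        exact Real.rpow_one M
      have hfin : (M ^ (p/2) * Bint u s (j+2)) ^ (2/p)
          = M * (Bint u s (j+2)) ^ (2/p) := by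
        rw [Real.mul_rpow (Real.rpow_nonneg hMnn _) hB2nn, hexp1]
      have hbnj : bnorm u s j = M := by rw [bnorm, if_pos hj0]
      have hexp2 : (Bint u s (j+2)) ^ (2/p) = bnorm u s (j+2) := by
        rw [hbj2]
        congr 1
        rw [hc2, hp, hjr00]
        rw [zero_add, div_one, zero_add]
      calc G ≤ (M ^ (p/2) * Bint u s (j+2)) ^ (2/p) := hGle2
        _ = M * (Bint u s (j+2)) ^ (2/p) := hfin
        _ = bnorm u s j * bnorm u s (j+2) := by rw [hbnj, hexp2]
    · -- j ≥ 1 case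
      have hjr1 : (1:ℝ) ≤ jr := by rw [hjr]; exact_mod_cast hjpos
      have hjrpos : (0:ℝ) < jr := by linarith
      set al : ℝ := 2*(jr+1)/jr with hal
      set be : ℝ := 2*(jr+1)/(jr+2) with hbe
      have hconj2 : Real.HolderConjugate al be := by
        rw [Real.holderConjugate_iff]
        constructor
        · rw [hal, lt_div_iff₀ hjrpos]; linarith
        · rw [hal, hbe, inv_div, inv_div]
          field_simp
          ring
      have hhalf : (0:ℝ) ≤ p/2 := by positivity
      have hf : Continuous fun x => |D j x| ^ (p/2) :=
        ((hcont j).abs).rpow_const (fun x => Or.inr hhalf)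
      have hg : Continuous fun x => |D (j+2) x| ^ (p/2) :=
        ((hcont (j+2)).abs).rpow_const (fun x => Or.inr hhalf)
      have hsplitm : (∫ x in (0:ℝ)..1, (|D j x| * |D (j+2) x|) ^ (p/2))
          = ∫ x in (0:ℝ)..1, (|D j x| ^ (p/2)) * (|D (j+2) x| ^ (p/2)) := by
        apply intervalIntegral.integral_congr
        intro x _
        exact Real.mul_rpow (abs_nonneg _) (abs_nonneg _)
      have hH := holder01 hf hg (fun x => Real.rpow_nonneg (abs_nonneg _) _)
        (fun x => Real.rpow_nonneg (abs_nonneg _) _) hconj2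
      have hpj : p/2 * al = 2*sr/jr := by
        rw [hal, hp]
        field_simp
      have hpj2 : p/2 * be = 2*sr/(jr+2) := by
        rw [hbe, hp]
        field_simp
      have e1 : (∫ x in (0:ℝ)..1, (|D j x| ^ (p/2)) ^ al) = Bint u s j := by
        have hpt : ∀ x:ℝ, (|D j x| ^ (p/2)) ^ al = |D j x| ^ ((2*(s:ℝ))/(j:ℝ)) := by
          intro x
          rw [← Real.rpow_mul (abs_nonneg _), hpj]
        rw [intervalIntegral.integral_congr (fun x _ => hpt x)]
        rfl
      have e2 : (∫ x in (0:ℝ)..1, (|D (j+2) x| ^ (p/2)) ^ be) = Bint u s (j+2) := by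
        have hpt : ∀ x:ℝ, (|D (j+2) x| ^ (p/2)) ^ be = |D (j+2) x| ^ ((2*(s:ℝ))/((j+2:ℕ):ℝ)) := by
          intro x
          rw [← Real.rpow_mul (abs_nonneg _), hpj2, hc2]
        rw [intervalIntegral.integral_congr (fun x _ => hpt x)]
        rfl
      rw [e1, e2] at hH
      have hBj : 0 ≤ Bint u s j := Bint_nonneg u s j
      have hBj2 : 0 ≤ Bint u s (j+2) := Bint_nonneg u s (j+2)
      have hGle2 : G ≤ ((Bint u s j) ^ (1/al) * (Bint u s (j+2)) ^ (1/be)) ^ (2/p) := by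
        rw [hG]
        apply Real.rpow_le_rpow hInn _ (by positivity)
        rw [hsplitm]
        exact hH
      have hsplit2 : ((Bint u s j) ^ (1/al) * (Bint u s (j+2)) ^ (1/be)) ^ (2/p)
          = (Bint u s j) ^ (1/al * (2/p)) * (Bint u s (j+2)) ^ (1/be * (2/p)) := by
        rw [Real.mul_rpow (Real.rpow_nonneg hBj _) (Real.rpow_nonneg hBj2 _),
          ← Real.rpow_mul hBj, ← Real.rpow_mul hBj2]
      have hexpj : 1/al * (2/p) = (j:ℝ)/(2*(s:ℝ)) := by
        rw [hal, hp]
        field_simp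
        exact (mul_div_cancel_left₀ _ (ne_of_gt hsrpos)).symm
      have hexpj2 : 1/be * (2/p) = ((j+2:ℕ):ℝ)/(2*(s:ℝ)) := by
        rw [hbe, hp, hc2]
        field_simp
        exact (div_self (ne_of_gt hsrpos)).symm
      have hbnj : bnorm u s j = (Bint u s j) ^ ((j:ℝ)/(2*(s:ℝ))) := by
        rw [bnorm, if_neg (by omega : ¬ j = 0)]
      calc G ≤ ((Bint u s j) ^ (1/al) * (Bint u s (j+2)) ^ (1/be)) ^ (2/p) := hGle2
        _ = (Bint u s j) ^ (1/al * (2/p)) * (Bint u s (j+2)) ^ (1/be * (2/p)) := hsplit2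
        _ = bnorm u s j * bnorm u s (j+2) := by
            rw [hexpj, hexpj2, hbnj, hbj2]
  -- combine everything
  have hbnn : 0 ≤ bnorm u s j * bnorm u s (j+2) :=
    mul_nonneg (bnorm_nonneg _ _ _) (bnorm_nonneg _ _ _)
  have hApow : (0:ℝ) ≤ A ^ ((p-2)/p) := Real.rpow_nonneg hAnn _
  have h3 : A ≤ ((p-1) * (bnorm u s j * bnorm u s (j+2))) * A ^ (1 - 2/p) := by
    have he : 1 - 2/p = (p-2)/p := by field_simp
    rw [he]
    calc A ≤ (p-1) * (A^((p-2)/p) * G) := h2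
      _ ≤ (p-1) * (A^((p-2)/p) * (bnorm u s j * bnorm u s (j+2))) := by
          apply mul_le_mul_of_nonneg_left _ (by linarith : (0:ℝ) ≤ p - 1)
          exact mul_le_mul_of_nonneg_left hGle hApow
      _ = ((p-1) * (bnorm u s j * bnorm u s (j+2))) * A ^ ((p-2)/p) := by ring
  have h4 : A ^ (2/p) ≤ (p-1) * (bnorm u s j * bnorm u s (j+2)) :=
    div_rpow_step hAnn (by positivity : (0:ℝ) < 2/p)
      (mul_nonneg (by linarith : (0:ℝ) ≤ p - 1) hbnn) h3
  have hb1 : bnorm u s (j+1) ^ 2 = A ^ (2/p) := by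
    rw [bnorm, if_neg (by omega : ¬ j+1 = 0), ← hAdef]
    rw [← Real.rpow_natCast (A ^ (((j+1:ℕ):ℝ)/(2*(s:ℝ)))) 2, ← Real.rpow_mul hAnn]
    congr 1
    rw [hc1, hp]
    push_cast
    field_simp
    ring
    exact mul_inv_cancel₀ (ne_of_gt hsrpos)
  rw [hb1]
  refine le_trans h4 (mul_le_mul_of_nonneg_right ?_ hbnn)
  have hple : p ≤ 2*sr := by
    rw [hp, div_le_iff₀ (by linarith : (0:ℝ) < jr + 1)]
    nlinarith
  linarith

end Ladder

/-- trilinear Gagliardo–Nirenberg-type estimate for smooth 1-periodic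
functions: `|∫ ∂ₓˡu ∂ₓ^{s-l}u ∂ₓˢu| ≤ C (∫ (∂ₓˢu)²) ‖u‖_{L^∞}`. -/
theorem trilinear_gagliardo_nirenberg
    (s l : ℕ) (hs : 1 ≤ s) (hl : l ≤ s) :
    ∃ C : ℝ, 0 < C ∧ ∀ u : ℝ → ℝ, ContDiff ℝ (⊤ : ℕ∞) u → (∀ x, u (x + 1) = u x) →
      |∫ x in (0:ℝ)..1,
          iteratedDeriv l u x * iteratedDeriv (s - l) u x * iteratedDeriv s u x|
        ≤ C * (∫ x in (0:ℝ)..1, (iteratedDeriv s u x) ^ 2) * (⨆ x : ℝ, |u x|) := by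
  have hsr : (0:ℝ) < (s:ℝ) := by exact_mod_cast hs
  have hs1 : (1:ℝ) ≤ (s:ℝ) := by exact_mod_cast hs
  have hK1 : (1:ℝ) ≤ 2*(s:ℝ) := by linarith
  have hCpos : (0:ℝ) < (2*(s:ℝ))^(s*s) := pow_pos (by linarith) _
  refine ⟨(2*(s:ℝ))^(s*s), hCpos, ?_⟩
  intro u hu hperh
  have hper : Function.Periodic u 1 := hperh
  have hcont : ∀ k, Continuous (iteratedDeriv k u) := fun k => continuous_iteratedDeriv hu k
  set M := ⨆ x : ℝ, |u x| with hM
  have hMle : ∀ x, |u x| ≤ M := fun x => le_ciSup_abs_of_periodic hu.continuous hper x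
  have hMnn : 0 ≤ M := le_trans (abs_nonneg _) (hMle 0)
  set I := ∫ x in (0:ℝ)..1, (iteratedDeriv s u x)^2 with hI
  have hI2nn : 0 ≤ I :=
    intervalIntegral.integral_nonneg zero_le_one (fun x _ => sq_nonneg _)
  have hCge1 : (1:ℝ) ≤ (2*(s:ℝ))^(s*s) := one_le_pow₀ hK1
  have hCnn := mul_nonneg (sub_nonneg.2 hCge1) (mul_nonneg hI2nn hMnn)
  rcases eq_or_ne l 0 with rfl | hl0
  · simp only [Nat.sub_zero, iteratedDeriv_zero]
    calc |∫ x in (0:ℝ)..1, u x * iteratedDeriv s u x * iteratedDeriv s u x|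
        ≤ ∫ x in (0:ℝ)..1, |u x * iteratedDeriv s u x * iteratedDeriv s u x| :=
          intervalIntegral.abs_integral_le_integral_abs zero_le_one
      _ ≤ ∫ x in (0:ℝ)..1, M * (iteratedDeriv s u x)^2 := by
          apply intervalIntegral.integral_mono_on zero_le_one
          · exact ((hu.continuous.mul (hcont s)).mul (hcont s)).abs.intervalIntegrable 0 1
          · exact (continuous_const.mul ((hcont s).pow 2)).intervalIntegrable 0 1
          · intro x _
            have he : |u x * iteratedDeriv s u x * iteratedDeriv s u x|
                = |u x| * (iteratedDeriv s u x)^2 := by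
              rw [abs_mul, abs_mul, ← sq_abs (iteratedDeriv s u x)]
              ring
            rw [he]
            exact mul_le_mul_of_nonneg_right (hMle x) (sq_nonneg _)
      _ = M * I := intervalIntegral.integral_const_mul _ _
      _ ≤ (2*(s:ℝ))^(s*s) * I * M := by nlinarith [hCnn]
  rcases eq_or_ne l s with hls | hls
  · rw [hls, Nat.sub_self, iteratedDeriv_zero]
    calc |∫ x in (0:ℝ)..1, iteratedDeriv s u x * u x * iteratedDeriv s u x|
        ≤ ∫ x in (0:ℝ)..1, |iteratedDeriv s u x * u x * iteratedDeriv s u x| :=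
          intervalIntegral.abs_integral_le_integral_abs zero_le_one
      _ ≤ ∫ x in (0:ℝ)..1, M * (iteratedDeriv s u x)^2 := by
          apply intervalIntegral.integral_mono_on zero_le_one
          · exact (((hcont s).mul hu.continuous).mul (hcont s)).abs.intervalIntegrable 0 1
          · exact (continuous_const.mul ((hcont s).pow 2)).intervalIntegrable 0 1
          · intro x _
            have he : |iteratedDeriv s u x * u x * iteratedDeriv s u x|
                = |u x| * (iteratedDeriv s u x)^2 := by
              rw [abs_mul, abs_mul, ← sq_abs (iteratedDeriv s u x)]
              ring
            rw [he]
            exact mul_le_mul_of_nonneg_right (hMle x) (sq_nonneg _)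
      _ = M * I := intervalIntegral.integral_const_mul _ _
      _ ≤ (2*(s:ℝ))^(s*s) * I * M := by nlinarith [hCnn]
  -- main case 1 ≤ l ≤ s - 1
  have hl1 : 1 ≤ l := by omega
  have hlt : l < s := by omega
  have hslpos : 1 ≤ s - l := by omega
  set lr := (l:ℝ) with hlr
  have hlrpos : (0:ℝ) < lr := by rw [hlr]; exact_mod_cast hl1
  have hcast : ((s-l:ℕ):ℝ) = (s:ℝ) - lr := by
    rw [hlr]
    exact Nat.cast_sub hl
  have hslr : (0:ℝ) < (s:ℝ) - lr := by
    rw [hlr]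
    have : (l:ℝ) < (s:ℝ) := by exact_mod_cast hlt
    linarith
  set F := fun x => |iteratedDeriv l u x| with hF
  set G := fun x => |iteratedDeriv (s-l) u x| with hG
  set H := fun x => |iteratedDeriv s u x| with hH
  have hFc : Continuous F := (hcont l).abs
  have hGc : Continuous G := (hcont (s-l)).abs
  have hHc : Continuous H := (hcont s).abs
  have hFnn : ∀ x, 0 ≤ F x := fun x => abs_nonneg _
  have hGnn : ∀ x, 0 ≤ G x := fun x => abs_nonneg _
  have hHnn : ∀ x, 0 ≤ H x := fun x => abs_nonneg _
  -- Step A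
  have hstepA : |∫ x in (0:ℝ)..1,
      iteratedDeriv l u x * iteratedDeriv (s - l) u x * iteratedDeriv s u x|
      ≤ ∫ x in (0:ℝ)..1, (F x * G x) * H x := by
    refine le_trans (intervalIntegral.abs_integral_le_integral_abs zero_le_one) (le_of_eq ?_)
    apply intervalIntegral.integral_congr
    intro x _
    simp only [hF, hG, hH, abs_mul]
  -- Step B : Cauchy-Schwarz
  have hconj2 : Real.HolderConjugate 2 2 := Real.holderConjugate_iff.mpr ⟨one_lt_two, by norm_num⟩
  have hstepB := holder01 (hFc.mul hGc) hHc (fun x => mul_nonneg (hFnn x) (hGnn x)) hHnn hconj2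
  -- second factor equals I^(1/2)
  have hHsq : (∫ x in (0:ℝ)..1, H x ^ (2:ℝ)) = I := by
    apply intervalIntegral.integral_congr
    intro x _
    simp only [hH]
    rw [Real.rpow_two, sq_abs]
  rw [hHsq] at hstepB
  -- Step C+D : Hölder on the squared product
  have hconjsl : Real.HolderConjugate ((s:ℝ)/lr) ((s:ℝ)/((s:ℝ)-lr)) := by
    rw [Real.holderConjugate_iff]
    constructor
    · rw [lt_div_iff₀ hlrpos]
      linarith
    · rw [inv_div, inv_div]
      field_simp
      ring
  have hstepD := holder01 (f := fun x => F x ^ (2:ℝ)) (g := fun x => G x ^ (2:ℝ))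
    (hFc.rpow_const (fun x => Or.inr (by norm_num)))
    (hGc.rpow_const (fun x => Or.inr (by norm_num)))
    (fun x => Real.rpow_nonneg (hFnn x) _) (fun x => Real.rpow_nonneg (hGnn x) _) hconjsl
  have hCeq : (∫ x in (0:ℝ)..1, (F x * G x) ^ (2:ℝ))
      = ∫ x in (0:ℝ)..1, (F x ^ (2:ℝ)) * (G x ^ (2:ℝ)) := by
    apply intervalIntegral.integral_congr
    intro x _
    exact Real.mul_rpow (hFnn x) (hGnn x)
  have heF : (∫ x in (0:ℝ)..1, (F x ^ (2:ℝ)) ^ ((s:ℝ)/lr)) = Bint u s l := by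
    have hpt : ∀ x:ℝ, (F x ^ (2:ℝ)) ^ ((s:ℝ)/lr)
        = |iteratedDeriv l u x| ^ ((2*(s:ℝ))/(l:ℝ)) := by
      intro x
      simp only [hF]
      rw [← Real.rpow_mul (abs_nonneg _)]
      congr 1
      rw [hlr]
      exact (mul_div_assoc 2 _ _).symm
    rw [intervalIntegral.integral_congr (fun x _ => hpt x)]
    rfl
  have heG : (∫ x in (0:ℝ)..1, (G x ^ (2:ℝ)) ^ ((s:ℝ)/((s:ℝ)-lr))) = Bint u s (s-l) := by
    have hpt : ∀ x:ℝ, (G x ^ (2:ℝ)) ^ ((s:ℝ)/((s:ℝ)-lr))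
        = |iteratedDeriv (s-l) u x| ^ ((2*(s:ℝ))/((s-l:ℕ):ℝ)) := by
      intro x
      simp only [hG]
      rw [← Real.rpow_mul (abs_nonneg _)]
      congr 1
      rw [hcast]
      exact (mul_div_assoc 2 _ _).symm
    rw [intervalIntegral.integral_congr (fun x _ => hpt x)]
    rfl
  rw [heF, heG] at hstepD
  have hBl : 0 ≤ Bint u s l := Bint_nonneg u s l
  have hBsl : 0 ≤ Bint u s (s-l) := Bint_nonneg u s (s-l)
  have hstepD' : (∫ x in (0:ℝ)..1, (F x * G x) ^ (2:ℝ))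
      ≤ (Bint u s l) ^ (1/((s:ℝ)/lr)) * (Bint u s (s-l)) ^ (1/((s:ℝ)/((s:ℝ)-lr))) := by
    rw [hCeq]
    exact hstepD
  -- raise to 1/2 and identify with bnorm
  have hprodnn : 0 ≤ ∫ x in (0:ℝ)..1, (F x * G x) ^ (2:ℝ) :=
    intervalIntegral.integral_nonneg zero_le_one
      (fun x _ => Real.rpow_nonneg (mul_nonneg (hFnn x) (hGnn x)) _)
  have hstepE : (∫ x in (0:ℝ)..1, (F x * G x) ^ (2:ℝ)) ^ ((1:ℝ)/2)
      ≤ bnorm u s l * bnorm u s (s-l) := by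
    refine le_trans (Real.rpow_le_rpow hprodnn hstepD' (by norm_num)) (le_of_eq ?_)
    rw [Real.mul_rpow (Real.rpow_nonneg hBl _) (Real.rpow_nonneg hBsl _),
      ← Real.rpow_mul hBl, ← Real.rpow_mul hBsl]
    rw [bnorm, if_neg (by omega : ¬ l = 0), bnorm, if_neg (by omega : ¬ (s-l) = 0)]
    congr 1
    · congr 1
      rw [one_div_div, hlr, div_mul_div_comm, mul_one, mul_comm (s:ℝ) 2]
    · congr 1
      rw [one_div_div, hcast, div_mul_div_comm, mul_one, mul_comm (s:ℝ) 2]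
  -- b s and I
  have hbs : bnorm u s s = I ^ ((1:ℝ)/2) := by
    rw [bnorm, if_neg (by omega : ¬ s = 0)]
    have hBs : Bint u s s = I := by
      unfold Bint
      apply intervalIntegral.integral_congr
      intro x _
      change |iteratedDeriv s u x| ^ (2*(s:ℝ)/(s:ℝ)) = iteratedDeriv s u x ^ 2
      rw [show 2*(s:ℝ)/(s:ℝ) = (2:ℝ) by field_simp, Real.rpow_two, sq_abs]
    rw [hBs]
    congr 1
    field_simp
  -- chain lemma
  have hchain := chain_main hs hK1 (bnorm_nonneg u s)
    (fun j hj => bnorm_ladder hu hper hj) l hl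
  -- put everything together
  have hfinal : |∫ x in (0:ℝ)..1,
      iteratedDeriv l u x * iteratedDeriv (s - l) u x * iteratedDeriv s u x|
      ≤ (bnorm u s l * bnorm u s (s-l)) * (I ^ ((1:ℝ)/2)) := by
    refine le_trans hstepA (le_trans hstepB ?_)
    exact mul_le_mul_of_nonneg_right hstepE (Real.rpow_nonneg hI2nn _)
  have hb0 : bnorm u s 0 = M := by rw [bnorm, if_pos rfl]
  have hIhalf : (I ^ ((1:ℝ)/2)) * (I ^ ((1:ℝ)/2)) = I := by
    rw [← Real.rpow_add' hI2nn (by norm_num)]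
    norm_num
  calc |∫ x in (0:ℝ)..1,
      iteratedDeriv l u x * iteratedDeriv (s - l) u x * iteratedDeriv s u x|
      ≤ (bnorm u s l * bnorm u s (s-l)) * (I ^ ((1:ℝ)/2)) := hfinal
    _ ≤ ((2*(s:ℝ))^(s*s) * (bnorm u s 0 * bnorm u s s)) * (I ^ ((1:ℝ)/2)) :=
        mul_le_mul_of_nonneg_right hchain (Real.rpow_nonneg hI2nn _)
    _ = (2*(s:ℝ))^(s*s) * I * M := by
        rw [hb0, hbs]
        calc ((2*(s:ℝ))^(s*s) * (M * I ^ ((1:ℝ)/2))) * I ^ ((1:ℝ)/2)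
            = (2*(s:ℝ))^(s*s) * (I ^ ((1:ℝ)/2) * I ^ ((1:ℝ)/2)) * M := by ring
          _ = (2*(s:ℝ))^(s*s) * I * M := by rw [hIhalf]
end

section
/- There exists a constant C > 0, depending only on a, α, M and sup|f|, such that for every T ∈ (0,∞] and every admissible solution u of the 1D diffusion equation on [0,T), one has ∫₀¹ u(t,x)² dx ≤ max( ∫₀¹ u(0,x)² dx , C ) for all t ∈ [0,T); in particular the L² norm of u(t,·) is bounded uniformly in time. -/
open MeasureTheory Set

set_option maxHeartbeats 1000000

private lemma slice_deriv_x {w : ℝ × ℝ → ℝ} {Ω : Set (ℝ × ℝ)} (hΩ : IsOpen Ω)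
    (hw : DifferentiableOn ℝ w Ω) {t x : ℝ} (hp : (t, x) ∈ Ω) :
    HasDerivAt (fun y => w (t, y)) (fderiv ℝ w (t, x) (0, 1)) x := by
  have hd : DifferentiableAt ℝ w (t, x) := (hw (t, x) hp).differentiableAt (hΩ.mem_nhds hp)
  have hL : HasDerivAt (fun y : ℝ => ((t, y) : ℝ × ℝ)) ((0 : ℝ), (1 : ℝ)) x :=
    (hasDerivAt_const x t).prodMk (hasDerivAt_id x)
  exact hd.hasFDerivAt.comp_hasDerivAt x hL

private lemma slice_deriv_t {w : ℝ × ℝ → ℝ} {Ω : Set (ℝ × ℝ)} (hΩ : IsOpen Ω)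
    (hw : DifferentiableOn ℝ w Ω) {t x : ℝ} (hp : (t, x) ∈ Ω) :
    HasDerivAt (fun s => w (s, x)) (fderiv ℝ w (t, x) (1, 0)) t := by
  have hd : DifferentiableAt ℝ w (t, x) := (hw (t, x) hp).differentiableAt (hΩ.mem_nhds hp)
  have hL : HasDerivAt (fun s : ℝ => ((s, x) : ℝ × ℝ)) ((1 : ℝ), (0 : ℝ)) t :=
    (hasDerivAt_id t).prodMk (hasDerivAt_const t x)
  exact hd.hasFDerivAt.comp_hasDerivAt t hL

private lemma young_PQ {P E Q : ℝ} (hP : 0 ≤ P) (hE : 0 ≤ E) (hQ : 0 ≤ Q)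
    (h : ∀ l : ℝ, 0 < l → 2 * P ≤ l * E + Q / l) : P ^ 2 ≤ E * Q := by
  rcases eq_or_lt_of_le hP with h0 | hP0
  · rw [← h0]; simpa using mul_nonneg hE hQ
  rcases eq_or_lt_of_le hE with hE0 | hE0
  · exfalso
    have hQ1 : 2 * P ≤ Q := by
      have := h 1 one_pos; rw [← hE0] at this; simpa using this
    have hQpos : 0 < Q := by linarith
    have h2 := h (Q / P) (by positivity)
    rw [← hE0] at h2
    have h3 : Q / (Q / P) = P := by field_simp
    rw [h3] at h2
    simp only [mul_zero, zero_add] at h2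
    linarith
  · have h2 := h (P / E) (by positivity)
    have h3 : P / E * E = P := div_mul_cancel₀ P hE0.ne'
    rw [h3] at h2
    have h4 : P ≤ Q / (P / E) := by linarith
    have h5 : Q / (P / E) = Q * E / P := by rw [div_div_eq_mul_div]
    rw [h5] at h4
    have h6 : P * P ≤ Q * E := (le_div_iff₀ hP0).mp h4
    nlinarith [h6]

private lemma barrier_lemma {E : ℝ → ℝ} {τ C : ℝ} (hτ : 0 < τ)
    (hcont : ContinuousOn E (Icc 0 τ))
    (hderiv : ∀ t ∈ Ioo 0 τ, C ≤ E t → ∃ e, HasDerivAt E e t ∧ e ≤ -1) :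
    E τ ≤ max (E 0) C := by
  by_contra hcon
  push_neg at hcon
  set B := max (E 0) C with hB
  have hE0B : E 0 ≤ B := le_max_left _ _
  have hCB : C ≤ B := le_max_right _ _
  set A := {t | t ∈ Icc 0 τ ∧ E t ≤ B} with hA
  have hA0 : (0 : ℝ) ∈ A := ⟨⟨le_refl 0, hτ.le⟩, hE0B⟩
  have hAne : A.Nonempty := ⟨0, hA0⟩
  have hAbdd : BddAbove A := ⟨τ, fun t ht => ht.1.2⟩
  have hAclosed : IsClosed A := by
    have : A = Icc 0 τ ∩ E ⁻¹' (Iic B) := by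
      ext t; simp only [hA, mem_setOf_eq, mem_inter_iff, mem_preimage, mem_Iic]
    rw [this]
    exact ContinuousOn.preimage_isClosed_of_isClosed hcont isClosed_Icc isClosed_Iic
  set s := sSup A with hs
  have hsA : s ∈ A := hAclosed.csSup_mem hAne hAbdd
  have hsτ : s < τ := by
    rcases lt_or_eq_of_le hsA.1.2 with h | h
    · exact h
    · exfalso; rw [h] at hsA; linarith [hsA.2]
  have hgt : ∀ t ∈ Ioc s τ, B < E t := by
    intro t ht
    by_contra hle
    push_neg at hle
    have : t ∈ A := ⟨⟨le_trans hsA.1.1 ht.1.le, ht.2⟩, hle⟩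
    exact absurd (le_csSup hAbdd this) (not_le.2 ht.1)
  have hanti : StrictAntiOn E (Icc s τ) := by
    apply strictAntiOn_of_deriv_neg (convex_Icc s τ)
      (hcont.mono (Icc_subset_Icc hsA.1.1 le_rfl))
    intro x hx
    rw [interior_Icc] at hx
    have hx' : x ∈ Ioo 0 τ := ⟨lt_of_le_of_lt hsA.1.1 hx.1, hx.2⟩
    have hEx : C ≤ E x := le_of_lt (lt_of_le_of_lt hCB (hgt x ⟨hx.1, hx.2.le⟩))
    obtain ⟨e, he, hle⟩ := hderiv x hx' hEx
    rw [he.deriv]; linarith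
  have : E τ < E s := hanti ⟨le_rfl, hsτ.le⟩ ⟨hsτ.le, le_rfl⟩ hsτ
  linarith [hsA.2]

private lemma key_ineq (a M α F E S P Q I3 U ψ : ℝ) (ha : 0 < a) (hM : 0 < M) (hα : 0 ≤ α) (hF : 0 ≤ F)
    (hU0 : 0 ≤ U) (hUM : U ≤ M) (hψ : |ψ| ≤ F * M)
    (hI30 : 0 ≤ I3) (hI3 : I3 ≤ S * E) (hS0 : 0 ≤ S) (hES : E ≤ S * M)
    (hS2 : S ^ 2 ≤ M ^ 2 + 2 * P) (hP0 : 0 ≤ P) (hQ0 : 0 ≤ Q) (hPQ : P ^ 2 ≤ E * Q)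
    (hEC : 1 + 3 * M ^ 2 + 34 * a * M ^ 4 + 2 * α * F * M ^ 2 ≤ E) :
    2 * (M - U) * (a * I3 + α * ψ) - 2 * E - 2 * Q ≤ -1 := by
  have habs := abs_le.1 hψ
  have hM2 : (0:ℝ) ≤ M ^ 2 := sq_nonneg M
  have hM4 : (0:ℝ) ≤ M ^ 4 := by positivity
  have haM4 : (0:ℝ) ≤ a * M ^ 4 := by positivity
  have hαF : (0:ℝ) ≤ 2 * α * F * M ^ 2 := by positivity
  have hE1 : (1:ℝ) ≤ E := by nlinarith
  have hE0 : (0:ℝ) < E := by linarith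
  have hA : 2 * (M - U) * (a * I3 + α * ψ) ≤ 2 * a * M * I3 + 2 * α * F * M ^ 2 := by
    nlinarith [mul_nonneg hα (mul_nonneg hF hM.le), mul_nonneg (sub_nonneg.2 hUM) hU0,
      mul_nonneg hα hF, mul_nonneg (mul_nonneg ha.le hU0) hI30,
      mul_nonneg (mul_nonneg hα (sub_nonneg.2 hUM)) (sub_nonneg.2 habs.2),
      mul_nonneg (mul_nonneg hα hU0) (sub_nonneg.2 habs.2)]
  have hB : 2 * a * M * I3 ≤ a * M ^ 4 + 2 * a * M ^ 2 * P + a * E ^ 2 := by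
    nlinarith [sq_nonneg (M * S - E), mul_pos ha hM, mul_nonneg (mul_nonneg ha.le hM.le) (sub_nonneg.2 hI3),
      mul_nonneg (mul_nonneg ha.le hM2) (sub_nonneg.2 hS2)]
  have hE2 : E ^ 2 ≤ S ^ 2 * M ^ 2 := by
    have h := mul_le_mul hES hES hE0.le (by positivity : (0:ℝ) ≤ S * M)
    nlinarith [h]
  have hPlow : E ^ 2 - M ^ 4 ≤ 2 * M ^ 2 * P := by
    have h := mul_le_mul_of_nonneg_right hS2 hM2
    nlinarith [hE2, h]
  have hME : M ^ 2 ≤ E := by nlinarith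
  have hEM : 2 * M ^ 4 ≤ E ^ 2 := by
    nlinarith [mul_le_mul_of_nonneg_left hME hM2, mul_le_mul hME hME hM2 hE0.le]
  have haME : a * M ^ 4 * E ≤ E ^ 2 - M ^ 4 := by
    have h1 : a * M ^ 4 + M ^ 2 ≤ E := by nlinarith
    have h2 := mul_le_mul_of_nonneg_right h1 hE0.le
    nlinarith [h2, mul_le_mul_of_nonneg_left hME hM2]
  set c : ℝ := a * M ^ 4 + 2 * α * F * M ^ 2 + 1 with hc
  have hc2E : c ≤ 2 * E := by simp only [hc]; nlinarith
  have hE16 : 16 * a * M ^ 4 ≤ E := by nlinarith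
  have hA1 : (0:ℝ) ≤ 2 * (2*M^2*P - (E^2 - M^4)) * (2*M^2*P + (E^2 - M^4) - 2*a*M^4*E) := by
    have h1 : (0:ℝ) ≤ 2*M^2*P - (E^2 - M^4) := by linarith
    have h2 : (0:ℝ) ≤ 2*M^2*P + (E^2 - M^4) - 2*a*M^4*E := by linarith
    positivity
  have hA2 : (0:ℝ) ≤ 2 * (E^2/2 - M^4) * (3*E^2/2 - M^4) := by
    have h1 : (0:ℝ) ≤ E^2/2 - M^4 := by linarith
    have h2 : (0:ℝ) ≤ 3*E^2/2 - M^4 := by linarith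
    positivity
  have hA3 : (0:ℝ) ≤ (E^3/2) * (E - 16*a*M^4) := by
    have h1 : (0:ℝ) ≤ E^3 := by positivity
    have h2 : (0:ℝ) ≤ E - 16*a*M^4 := by linarith
    positivity
  have hA4 : (0:ℝ) ≤ 4*M^4*E*(2*E - c) := by
    have h2 : (0:ℝ) ≤ 2*E - c := by linarith
    positivity
  have hA5 : (0:ℝ) ≤ 4*a*M^8*E := by positivity
  have hMain4 : E * (c + a * E ^ 2 + 2 * a * M ^ 2 * P) * (4 * M ^ 4) ≤ (2 * P ^ 2 + 2 * E ^ 2) * (4 * M ^ 4) := by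
    simp only [hc]; nlinarith [hA1, hA2, hA3, hA4, hA5]
  have hMain : E * (c + a * E ^ 2 + 2 * a * M ^ 2 * P) ≤ 2 * P ^ 2 + 2 * E ^ 2 := by
    have h4 : (0:ℝ) < 4 * M ^ 4 := by positivity
    exact le_of_mul_le_mul_right hMain4 h4
  have hfin : c + a * E ^ 2 + 2 * a * M ^ 2 * P ≤ 2 * Q + 2 * E := by
    have hQ : 2 * P ^ 2 ≤ 2 * (E * Q) := by linarith
    have : E * (c + a * E ^ 2 + 2 * a * M ^ 2 * P) ≤ E * (2 * Q + 2 * E) := by nlinarith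
    exact le_of_mul_le_mul_left this hE0
  simp only [hc] at hfin
  linarith [hA, hB]

/-- uniform-in-time `L²` bound for the 1D equation with diffusion,
with a constant depending only on `a, α, M` and `sup |f|`. -/
theorem L2_uniform_bound_1d_diffusion
    (a α M F : ℝ) (ha : 0 < a) (hα : 0 ≤ α) (hM : 0 < M) :
    ∃ C : ℝ, 0 < C ∧ ∀ f : ℝ → ℝ, ContDiff ℝ (⊤ : ℕ∞) f → (∀ x, f (x + 1) = f x) →
      (⨆ x : ℝ, |f x|) ≤ F →
      ∀ T : EReal, 0 < T →
      ∀ u : ℝ → ℝ → ℝ,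
        ContDiffOn ℝ (⊤ : ℕ∞) (fun p : ℝ × ℝ => u p.1 p.2)
          {p : ℝ × ℝ | 0 ≤ p.1 ∧ (p.1 : EReal) < T} →
        (∀ t : ℝ, 0 ≤ t → (t : EReal) < T → ∀ x, u t (x + 1) = u t x) →
        (∀ t : ℝ, 0 ≤ t → (t : EReal) < T → ∀ x, 0 ≤ u t x) →
        (∀ t : ℝ, 0 ≤ t → (t : EReal) < T → 0 ≤ ∫ x in (0:ℝ)..1, u t x) →
        (∀ t : ℝ, 0 ≤ t → (t : EReal) < T → (∫ x in (0:ℝ)..1, u t x) ≤ M) →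
        (∀ t : ℝ, 0 ≤ t → (t : EReal) < T → ∀ x,
          derivWithin (fun s => u s x) (Set.Ici 0) t
            = (a * u t x ^ 2 + α * f x) * (M - ∫ y in (0:ℝ)..1, u t y) - u t x + iteratedDeriv 2 (u t) x) →
        ∀ t : ℝ, 0 ≤ t → (t : EReal) < T →
          (∫ x in (0:ℝ)..1, (u t x) ^ 2)
            ≤ max (∫ x in (0:ℝ)..1, (u 0 x) ^ 2) C := by
  have hCpos : 0 < 1 + 3 * M ^ 2 + 34 * a * M ^ 4 + 2 * α * |F| * M ^ 2 := by
    have h1 : (0:ℝ) ≤ 34 * a * M ^ 4 := by positivity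
    have h2 : (0:ℝ) ≤ 2 * α * |F| * M ^ 2 :=
      mul_nonneg (mul_nonneg (by linarith) (abs_nonneg F)) (sq_nonneg M)
    nlinarith [sq_nonneg M]
  refine ⟨1 + 3 * M ^ 2 + 34 * a * M ^ 4 + 2 * α * |F| * M ^ 2, hCpos, ?_⟩
  intro f hf hfper hfF T hT u hu hper hpos hU0 hUM hPDE τ hτ0 hτT
  set C : ℝ := 1 + 3 * M ^ 2 + 34 * a * M ^ 4 + 2 * α * |F| * M ^ 2 with hCdef
  have hfc : Continuous f := hf.continuous
  -- global bound for |f|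
  obtain ⟨b, hb⟩ := isCompact_Icc.exists_bound_of_continuousOn
    (hfc.continuousOn : ContinuousOn f (Icc (0:ℝ) 1))
  have hbf : ∀ x : ℝ, |f x| ≤ b := by
    intro x
    have hper1 : Function.Periodic f 1 := hfper
    have h2 := hper1.sub_int_mul_eq (x := x) ⌊x⌋
    have h3 : f (Int.fract x) = f x := by
      rw [Int.fract]; simpa using h2
    rw [← h3]
    have h4 : Int.fract x ∈ Icc (0:ℝ) 1 := ⟨Int.fract_nonneg x, (Int.fract_lt_one x).le⟩
    simpa using hb _ h4
  have hbddA : BddAbove (range fun x : ℝ => |f x|) := ⟨b, by rintro y ⟨x, rfl⟩; exact hbf x⟩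
  have hfb : ∀ x, |f x| ≤ F := fun x => le_trans (le_ciSup hbddA x) hfF
  have hF0 : 0 ≤ F := le_trans (abs_nonneg (f 0)) (hfb 0)
  have hCdef' : C = 1 + 3 * M ^ 2 + 34 * a * M ^ 4 + 2 * α * F * M ^ 2 := by
    rw [hCdef, abs_of_nonneg hF0]
  -- a real time τ' beyond τ but below T
  obtain ⟨τ', hττ'E, hτ'T⟩ := EReal.exists_between_coe_real hτT
  have hττ' : τ < τ' := EReal.coe_lt_coe_iff.mp hττ'E
  have hin : ∀ s : ℝ, s < τ' → (s : EReal) < T :=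
    fun s hs => lt_trans (EReal.coe_lt_coe_iff.mpr hs) hτ'T
  have hslice : ∀ s : ℝ, 0 ≤ s → s < τ' → ContDiff ℝ (⊤ : ℕ∞) (u s) := by
    intro s hs0 hsτ'
    rw [← contDiffOn_univ]
    have hmap : MapsTo (fun x : ℝ => ((s, x) : ℝ × ℝ)) univ
        {p : ℝ × ℝ | 0 ≤ p.1 ∧ (p.1 : EReal) < T} := fun x _ => ⟨hs0, hin s hsτ'⟩
    exact hu.comp ((contDiff_const.prodMk contDiff_id).contDiffOn) hmap
  rcases eq_or_lt_of_le hτ0 with h0τ | hτpos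
  · rw [← h0τ]; exact le_max_left _ _
  have hτ'pos : 0 < τ' := lt_trans hτpos hττ'
  -- continuity of the energy on [0, τ]
  have hEcont : ContinuousOn (fun s => ∫ x in (0:ℝ)..1, (u s x) ^ 2) (Icc 0 τ) := by
    have hKS : (Icc (0:ℝ) τ ×ˢ Icc (0:ℝ) 1) ⊆ {p : ℝ × ℝ | 0 ≤ p.1 ∧ (p.1 : EReal) < T} :=
      fun p hp => ⟨hp.1.1, hin p.1 (lt_of_le_of_lt hp.1.2 hττ')⟩
    obtain ⟨K, hK⟩ := (isCompact_Icc.prod isCompact_Icc).exists_bound_of_continuousOn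
      (hu.continuousOn.mono hKS)
    intro t₀ ht₀
    apply intervalIntegral.continuousWithinAt_of_dominated_interval
      (bound := fun _ : ℝ => K ^ 2)
    · filter_upwards [self_mem_nhdsWithin] with s hs
      exact ((hslice s hs.1 (lt_of_le_of_lt hs.2 hττ')).continuous.pow 2).aestronglyMeasurable
    · filter_upwards [self_mem_nhdsWithin] with s hs
      apply Filter.Eventually.of_forall
      intro x hx
      have hx' : x ∈ Icc (0:ℝ) 1 := by
        rw [uIoc_of_le (zero_le_one)] at hx; exact ⟨hx.1.le, hx.2⟩
      have hKb := hK (s, x) ⟨hs, hx'⟩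
      have habs : |u s x| ≤ K := by simpa [Real.norm_eq_abs] using hKb
      have habs0 : (0:ℝ) ≤ |u s x| := abs_nonneg _
      calc ‖(u s x) ^ 2‖ = |u s x| ^ 2 := by rw [Real.norm_eq_abs, abs_pow]
        _ ≤ K ^ 2 := by nlinarith
    · exact intervalIntegrable_const
    · apply Filter.Eventually.of_forall
      intro x _
      have hmap : MapsTo (fun s : ℝ => ((s, x) : ℝ × ℝ)) (Icc 0 τ)
          {p : ℝ × ℝ | 0 ≤ p.1 ∧ (p.1 : EReal) < T} :=
        fun s hs => ⟨hs.1, hin s (lt_of_le_of_lt hs.2 hττ')⟩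
      have hcs : ContinuousOn (fun s => u s x) (Icc 0 τ) :=
        hu.continuousOn.comp ((continuous_id.prodMk continuous_const).continuousOn) hmap
      exact ((hcs t₀ ht₀).pow 2)
  -- the differential inequality
  -- open-set machinery
  have hΩo : IsOpen (Ioo (0:ℝ) τ' ×ˢ (univ : Set ℝ)) := isOpen_Ioo.prod isOpen_univ
  have hΩS : (Ioo (0:ℝ) τ' ×ˢ (univ : Set ℝ)) ⊆ {p : ℝ × ℝ | 0 ≤ p.1 ∧ (p.1 : EReal) < T} :=
    fun p hp => ⟨hp.1.1.le, hin p.1 hp.1.2⟩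
  have hvΩ : ContDiffOn ℝ (⊤ : ℕ∞) (fun p : ℝ × ℝ => u p.1 p.2) (Ioo (0:ℝ) τ' ×ˢ (univ : Set ℝ)) :=
    hu.mono hΩS
  have hvd : DifferentiableOn ℝ (fun p : ℝ × ℝ => u p.1 p.2) (Ioo (0:ℝ) τ' ×ˢ (univ : Set ℝ)) :=
    hvΩ.differentiableOn (by simp)
  set vx : ℝ × ℝ → ℝ := fun p => fderiv ℝ (fun q : ℝ × ℝ => u q.1 q.2) p (0, 1) with hvxdef
  have hvx_cd : ContDiffOn ℝ (⊤ : ℕ∞) vx (Ioo (0:ℝ) τ' ×ˢ (univ : Set ℝ)) :=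
    (hvΩ.fderiv_of_isOpen hΩo (by exact_mod_cast le_top)).clm_apply contDiffOn_const
  set vxx : ℝ × ℝ → ℝ := fun p => fderiv ℝ vx p (0, 1) with hvxxdef
  have hvxx_cd : ContDiffOn ℝ (⊤ : ℕ∞) vxx (Ioo (0:ℝ) τ' ×ˢ (univ : Set ℝ)) :=
    (hvx_cd.fderiv_of_isOpen hΩo (by exact_mod_cast le_top)).clm_apply contDiffOn_const
  have hux : ∀ t, t ∈ Ioo 0 τ' → ∀ x, HasDerivAt (u t) (vx (t, x)) x :=
    fun t ht x => slice_deriv_x hΩo hvd (Set.mk_mem_prod ht (mem_univ x))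
  have huxx : ∀ t, t ∈ Ioo 0 τ' → ∀ x, HasDerivAt (fun y => vx (t, y)) (vxx (t, x)) x :=
    fun t ht x =>
      slice_deriv_x hΩo (hvx_cd.differentiableOn (by simp)) (Set.mk_mem_prod ht (mem_univ x))
  have hderiv_ut : ∀ t, t ∈ Ioo 0 τ' → deriv (u t) = fun x => vx (t, x) :=
    fun t ht => funext fun x => (hux t ht x).deriv
  have hitd : ∀ t, t ∈ Ioo 0 τ' → ∀ x, iteratedDeriv 2 (u t) x = vxx (t, x) := by
    intro t ht x
    have h1 : iteratedDeriv 2 (u t) = deriv (deriv (u t)) := by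
      rw [iteratedDeriv_succ, iteratedDeriv_one]
    rw [h1, hderiv_ut t ht]
    exact (huxx t ht x).deriv
  have hut : ∀ t, t ∈ Ioo 0 τ' → ∀ x, HasDerivAt (fun s => u s x)
      ((a * u t x ^ 2 + α * f x) * (M - ∫ y in (0:ℝ)..1, u t y) - u t x + vxx (t, x)) t := by
    intro t ht x
    have h1 : HasDerivAt (fun s => u s x)
        (fderiv ℝ (fun q : ℝ × ℝ => u q.1 q.2) (t, x) (1, 0)) t :=
      slice_deriv_t hΩo hvd (Set.mk_mem_prod ht (mem_univ x))
    have h2 : derivWithin (fun s => u s x) (Ici 0) t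
        = fderiv ℝ (fun q : ℝ × ℝ => u q.1 q.2) (t, x) (1, 0) :=
      h1.hasDerivWithinAt.derivWithin (uniqueDiffOn_Ici 0 t ht.1.le)
    have h3 := hPDE t ht.1.le (hin t ht.2) x
    rw [h2, hitd t ht x] at h3
    rw [h3] at h1
    exact h1
  have hsq : ∀ t, t ∈ Ioo 0 τ' → ∀ x, HasDerivAt (fun s => (u s x) ^ 2)
      (2 * u t x * ((a * u t x ^ 2 + α * f x) * (M - ∫ y in (0:ℝ)..1, u t y) - u t x + vxx (t, x))) t := by
    intro t ht x
    have h := (hut t ht x).fun_pow 2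
    refine h.congr_deriv ?_
    push_cast
    ring
  have hvx_scont : ∀ t, t ∈ Ioo 0 τ' → Continuous (fun x => vx (t, x)) :=
    fun t ht => hvx_cd.continuousOn.comp_continuous
      (continuous_const.prodMk continuous_id) (fun x => Set.mk_mem_prod ht (mem_univ x))
  have hvxx_scont : ∀ t, t ∈ Ioo 0 τ' → Continuous (fun x => vxx (t, x)) :=
    fun t ht => hvxx_cd.continuousOn.comp_continuous
      (continuous_const.prodMk continuous_id) (fun x => Set.mk_mem_prod ht (mem_univ x))
  have hderiv : ∀ t ∈ Ioo 0 τ, C ≤ (∫ x in (0:ℝ)..1, (u t x) ^ 2) →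
      ∃ e, HasDerivAt (fun s => ∫ x in (0:ℝ)..1, (u s x) ^ 2) e t ∧ e ≤ -1 := by
    intro t₀ ht₀ hCE
    have ht₀' : t₀ ∈ Ioo 0 τ' := ⟨ht₀.1, lt_trans ht₀.2 hττ'⟩
    refine ⟨∫ x in (0:ℝ)..1, 2 * u t₀ x * ((a * u t₀ x ^ 2 + α * f x)
      * (M - ∫ y in (0:ℝ)..1, u t₀ y) - u t₀ x + vxx (t₀, x)), ?_, ?_⟩
    · -- differentiation under the integral sign
      have hεpos : 0 < min (t₀ / 2) ((τ' - t₀) / 2) :=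
        lt_min (by linarith [ht₀'.1]) (by linarith [ht₀'.2])
      set ε := min (t₀ / 2) ((τ' - t₀) / 2) with hεdef
      have hε1 : ε ≤ t₀ / 2 := min_le_left _ _
      have hε2 : ε ≤ (τ' - t₀) / 2 := min_le_right _ _
      have hball : ∀ s ∈ Metric.ball t₀ ε, s ∈ Ioo 0 τ' ∧ s ∈ Icc (t₀ - ε) (t₀ + ε) := by
        intro s hs
        rw [Metric.mem_ball, Real.dist_eq, abs_lt] at hs
        exact ⟨⟨by linarith [ht₀'.1], by linarith [ht₀'.2]⟩, ⟨by linarith, by linarith⟩⟩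
      have hKcΩ : Icc (t₀ - ε) (t₀ + ε) ×ˢ Icc (0:ℝ) 1 ⊆ Ioo (0:ℝ) τ' ×ˢ (univ : Set ℝ) := by
        rintro ⟨s, x⟩ ⟨hs, -⟩
        refine Set.mk_mem_prod ⟨?_, ?_⟩ (mem_univ x)
        · have := hs.1; linarith [ht₀'.1]
        · have := hs.2; linarith [ht₀'.2]
      obtain ⟨K0, hK0⟩ := (isCompact_Icc.prod isCompact_Icc).exists_bound_of_continuousOn
        (hvΩ.continuousOn.mono hKcΩ)
      obtain ⟨K2, hK2⟩ := (isCompact_Icc.prod isCompact_Icc).exists_bound_of_continuousOn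
        (hvxx_cd.continuousOn.mono hKcΩ)
      have ht₀mem : ((t₀, (0:ℝ)) : ℝ × ℝ) ∈ Icc (t₀ - ε) (t₀ + ε) ×ˢ Icc (0:ℝ) 1 :=
        Set.mk_mem_prod ⟨by linarith, by linarith⟩ ⟨le_rfl, zero_le_one⟩
      have hK0nn : 0 ≤ K0 := le_trans (norm_nonneg _) (hK0 _ ht₀mem)
      have hK2nn : 0 ≤ K2 := le_trans (norm_nonneg _) (hK2 _ ht₀mem)
      have hcu : Continuous (u t₀) := (hslice t₀ ht₀'.1.le ht₀'.2).continuous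
      have hGc : Continuous (fun x => (a * u t₀ x ^ 2 + α * f x)
          * (M - ∫ y in (0:ℝ)..1, u t₀ y) - u t₀ x + vxx (t₀, x)) :=
        ((((continuous_const.mul (hcu.pow 2)).add (continuous_const.mul hfc)).mul
          continuous_const).sub hcu).add (hvxx_scont t₀ ht₀')
      refine (intervalIntegral.hasDerivAt_integral_of_dominated_loc_of_deriv_le (Metric.ball_mem_nhds t₀ hεpos)
        (F := fun s x => (u s x) ^ 2)
        (F' := fun s x => 2 * u s x * ((a * u s x ^ 2 + α * f x)
          * (M - ∫ y in (0:ℝ)..1, u s y) - u s x + vxx (s, x)))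
        (bound := fun _ => 2 * K0 * ((a * K0 ^ 2 + α * F) * M + K0 + K2))
        ?_ ?_ ?_ ?_ ?_ ?_).2
      · filter_upwards [Ioo_mem_nhds ht₀'.1 ht₀'.2] with s hs
        exact ((hslice s hs.1.le hs.2).continuous.pow 2).aestronglyMeasurable
      · exact (hcu.pow 2).intervalIntegrable 0 1
      · exact ((continuous_const.mul hcu).mul hGc).aestronglyMeasurable
      · apply Filter.Eventually.of_forall
        intro x hx s hs
        obtain ⟨hsΩ', hsIcc⟩ := hball s hs
        have hx' : x ∈ Icc (0:ℝ) 1 := by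
          rw [uIoc_of_le (zero_le_one)] at hx; exact ⟨hx.1.le, hx.2⟩
        have hmem : ((s, x) : ℝ × ℝ) ∈ Icc (t₀ - ε) (t₀ + ε) ×ˢ Icc (0:ℝ) 1 :=
          Set.mk_mem_prod hsIcc hx'
        have hu_b : |u s x| ≤ K0 := by
          simpa [Real.norm_eq_abs] using hK0 _ hmem
        have hvxx_b : |vxx (s, x)| ≤ K2 := by
          simpa [Real.norm_eq_abs] using hK2 _ hmem
        have hU1 := hU0 s hsΩ'.1.le (hin s hsΩ'.2)
        have hU2 := hUM s hsΩ'.1.le (hin s hsΩ'.2)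
        have hMU : |M - ∫ y in (0:ℝ)..1, u s y| ≤ M := abs_le.2 ⟨by linarith, by linarith⟩
        have hf_b := hfb x
        have hA' : |a * u s x ^ 2 + α * f x| ≤ a * K0 ^ 2 + α * F := by
          have h1 : |a * u s x ^ 2| = a * u s x ^ 2 := by
            rw [abs_of_nonneg]; positivity
          have h2 : u s x ^ 2 ≤ K0 ^ 2 := by
            rw [← sq_abs]; exact pow_le_pow_left₀ (abs_nonneg _) hu_b 2
          have h3 : |α * f x| ≤ α * F := by
            rw [abs_mul, abs_of_nonneg hα]
            exact mul_le_mul_of_nonneg_left hf_b hα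
          calc |a * u s x ^ 2 + α * f x| ≤ |a * u s x ^ 2| + |α * f x| := abs_add_le _ _
            _ ≤ a * K0 ^ 2 + α * F := by rw [h1]; nlinarith [h3]
        have hAM : |(a * u s x ^ 2 + α * f x) * (M - ∫ y in (0:ℝ)..1, u s y)|
            ≤ (a * K0 ^ 2 + α * F) * M := by
          rw [abs_mul]
          exact mul_le_mul hA' hMU (abs_nonneg _) (by positivity)
        have hGb : |(a * u s x ^ 2 + α * f x) * (M - ∫ y in (0:ℝ)..1, u s y)
            - u s x + vxx (s, x)| ≤ (a * K0 ^ 2 + α * F) * M + K0 + K2 := by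
          have e1 := abs_le.1 hAM
          have e2 := abs_le.1 hu_b
          have e3 := abs_le.1 hvxx_b
          exact abs_le.2 ⟨by linarith, by linarith⟩
        rw [Real.norm_eq_abs]
        calc |2 * u s x * ((a * u s x ^ 2 + α * f x) * (M - ∫ y in (0:ℝ)..1, u s y)
              - u s x + vxx (s, x))|
            = 2 * |u s x| * |(a * u s x ^ 2 + α * f x) * (M - ∫ y in (0:ℝ)..1, u s y)
              - u s x + vxx (s, x)| := by
              rw [abs_mul, abs_mul]; norm_num
          _ ≤ 2 * K0 * ((a * K0 ^ 2 + α * F) * M + K0 + K2) := by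
              have := mul_le_mul hu_b hGb (abs_nonneg _) hK0nn
              nlinarith [this]
      · exact intervalIntegrable_const
      · apply Filter.Eventually.of_forall
        intro x hx s hs
        exact hsq s (hball s hs).1 x
    · -- the estimate e ≤ -1
      have ht0 : 0 ≤ t₀ := ht₀'.1.le
      have htT : (t₀ : EReal) < T := hin t₀ ht₀'.2
      have hcu : Continuous (u t₀) := (hslice t₀ ht0 ht₀'.2).continuous
      have hcgx : Continuous (fun x => vx (t₀, x)) := hvx_scont t₀ ht₀'
      have hcvxx : Continuous (fun x => vxx (t₀, x)) := hvxx_scont t₀ ht₀'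
      have hupos : ∀ x, 0 ≤ u t₀ x := hpos t₀ ht0 htT
      have hU1 : 0 ≤ ∫ y in (0:ℝ)..1, u t₀ y := hU0 t₀ ht0 htT
      have hU2 : (∫ y in (0:ℝ)..1, u t₀ y) ≤ M := hUM t₀ ht0 htT
      have hiu : IntervalIntegrable (u t₀) volume 0 1 := hcu.intervalIntegrable 0 1
      have hiu2 : IntervalIntegrable (fun x => (u t₀ x) ^ 2) volume 0 1 :=
        (hcu.pow 2).intervalIntegrable 0 1
      have hiu3 : IntervalIntegrable (fun x => (u t₀ x) ^ 3) volume 0 1 :=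
        (hcu.pow 3).intervalIntegrable 0 1
      have hifu : IntervalIntegrable (fun x => f x * u t₀ x) volume 0 1 :=
        (hfc.mul hcu).intervalIntegrable 0 1
      have higx2 : IntervalIntegrable (fun x => (vx (t₀, x)) ^ 2) volume 0 1 :=
        (hcgx.pow 2).intervalIntegrable 0 1
      have hiuvxx : IntervalIntegrable (fun x => u t₀ x * vxx (t₀, x)) volume 0 1 :=
        (hcu.mul hcvxx).intervalIntegrable 0 1
      have hiabs : IntervalIntegrable (fun x => |u t₀ x * vx (t₀, x)|) volume 0 1 :=
        (hcu.mul hcgx).abs.intervalIntegrable 0 1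
      -- integration by parts
      have hibp : (∫ x in (0:ℝ)..1, u t₀ x * vxx (t₀, x))
          = - ∫ x in (0:ℝ)..1, (vx (t₀, x)) ^ 2 := by
        have hD : ∀ x ∈ uIcc (0:ℝ) 1, HasDerivAt (fun y => u t₀ y * vx (t₀, y))
            (vx (t₀, x) * vx (t₀, x) + u t₀ x * vxx (t₀, x)) x :=
          fun x _ => (hux t₀ ht₀' x).mul (huxx t₀ ht₀' x)
        have hint : IntervalIntegrable
            (fun x => vx (t₀, x) * vx (t₀, x) + u t₀ x * vxx (t₀, x)) volume 0 1 :=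
          ((hcgx.mul hcgx).add (hcu.mul hcvxx)).intervalIntegrable 0 1
        have h0 := intervalIntegral.integral_eq_sub_of_hasDerivAt hD hint
        have hper0 : u t₀ 1 = u t₀ 0 := by
          have := hper t₀ ht0 htT 0; simpa using this
        have hvxper : vx (t₀, 1) = vx (t₀, 0) := by
          have hgp : (fun x => u t₀ (x + 1)) = u t₀ := funext (hper t₀ ht0 htT)
          have h1 : deriv (fun x => u t₀ (x + 1)) 0 = deriv (u t₀) (0 + 1) :=
            deriv_comp_add_const _ _ _
          rw [hgp] at h1
          norm_num at h1
          have h2 := hderiv_ut t₀ ht₀'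
          rw [h2] at h1
          exact h1.symm
        rw [hper0, hvxper, sub_self] at h0
        rw [intervalIntegral.integral_add ((show Continuous fun x => vx (t₀, x) * vx (t₀, x) from hcgx.mul hcgx).intervalIntegrable 0 1)
          ((show Continuous fun x => u t₀ x * vxx (t₀, x) from hcu.mul hcvxx).intervalIntegrable 0 1)] at h0
        have hsq' : (∫ x in (0:ℝ)..1, vx (t₀, x) * vx (t₀, x))
            = ∫ x in (0:ℝ)..1, (vx (t₀, x)) ^ 2 :=
          intervalIntegral.integral_congr (fun x _ => by ring)
        rw [hsq'] at h0
        linarith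
      -- extrema of u t₀ on [0,1]
      obtain ⟨xm, hxm, hxmax⟩ :=
        isCompact_Icc.exists_isMaxOn (Set.nonempty_Icc.2 zero_le_one) hcu.continuousOn
      obtain ⟨xn, hxn, hxmin⟩ :=
        isCompact_Icc.exists_isMinOn (Set.nonempty_Icc.2 zero_le_one) hcu.continuousOn
      have hS0 : 0 ≤ u t₀ xm := hupos xm
      have hminM : u t₀ xn ≤ M := by
        by_contra hcon
        push_neg at hcon
        have hmono : ∀ x ∈ Icc (0:ℝ) 1, u t₀ xn ≤ u t₀ x := fun x hx => hxmin hx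
        have hmi := intervalIntegral.integral_mono_on zero_le_one
          (intervalIntegrable_const) hiu hmono
        simp only [intervalIntegral.integral_const, smul_eq_mul, sub_zero, one_mul] at hmi
        linarith
      -- gradient-type bound for the square of the max
      have hsqb : ∀ p q : ℝ, p ∈ Icc (0:ℝ) 1 → q ∈ Icc (0:ℝ) 1 →
          (u t₀ q) ^ 2 ≤ (u t₀ p) ^ 2 + 2 * ∫ x in (0:ℝ)..1, |u t₀ x * vx (t₀, x)| := by
        intro p q hp hq
        have hD : ∀ x ∈ uIcc p q, HasDerivAt (fun y => (u t₀ y) ^ 2)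
            (2 * u t₀ x * vx (t₀, x)) x := by
          intro x _
          have h := (hux t₀ ht₀' x).fun_pow 2
          refine h.congr_deriv ?_
          push_cast
          ring
        have hint2 : IntervalIntegrable (fun x => 2 * u t₀ x * vx (t₀, x)) volume p q :=
          ((continuous_const.mul hcu).mul hcgx).intervalIntegrable p q
        have hkey := intervalIntegral.integral_eq_sub_of_hasDerivAt hD hint2
        have hintabs : IntervalIntegrable (fun x => |2 * u t₀ x * vx (t₀, x)|) volume 0 1 :=
          ((continuous_const.mul hcu).mul hcgx).abs.intervalIntegrable 0 1
        have hnn : 0 ≤ᵐ[volume.restrict (Ioc (0:ℝ) 1)] fun x => |2 * u t₀ x * vx (t₀, x)| :=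
          Filter.Eventually.of_forall fun x => abs_nonneg _
        have habs1 : |∫ x in p..q, 2 * u t₀ x * vx (t₀, x)|
            ≤ ∫ x in (0:ℝ)..1, |2 * u t₀ x * vx (t₀, x)| := by
          rcases le_total p q with hpq | hpq
          · calc |∫ x in p..q, 2 * u t₀ x * vx (t₀, x)|
                ≤ ∫ x in p..q, |2 * u t₀ x * vx (t₀, x)| :=
                  intervalIntegral.abs_integral_le_integral_abs hpq
              _ ≤ ∫ x in (0:ℝ)..1, |2 * u t₀ x * vx (t₀, x)| :=
                  intervalIntegral.integral_mono_interval hp.1 hpq hq.2 hnn hintabs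
          · rw [intervalIntegral.integral_symm]
            rw [abs_neg]
            calc |∫ x in q..p, 2 * u t₀ x * vx (t₀, x)|
                ≤ ∫ x in q..p, |2 * u t₀ x * vx (t₀, x)| :=
                  intervalIntegral.abs_integral_le_integral_abs hpq
              _ ≤ ∫ x in (0:ℝ)..1, |2 * u t₀ x * vx (t₀, x)| :=
                  intervalIntegral.integral_mono_interval hq.1 hpq hp.2 hnn hintabs
        have h2 : (u t₀ q) ^ 2 - (u t₀ p) ^ 2 ≤ |∫ x in p..q, 2 * u t₀ x * vx (t₀, x)| := by
          rw [hkey] at *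
          exact le_abs_self _
        have h3 : (∫ x in (0:ℝ)..1, |2 * u t₀ x * vx (t₀, x)|)
            = 2 * ∫ x in (0:ℝ)..1, |u t₀ x * vx (t₀, x)| := by
          rw [← intervalIntegral.integral_const_mul]
          apply intervalIntegral.integral_congr
          intro x _
          simp only []
          rw [show 2 * u t₀ x * vx (t₀, x) = 2 * (u t₀ x * vx (t₀, x)) by ring, abs_mul, abs_two]
        linarith
      -- the main quantities
      have hE0' : 0 ≤ ∫ x in (0:ℝ)..1, (u t₀ x) ^ 2 :=
        intervalIntegral.integral_nonneg zero_le_one (fun x _ => sq_nonneg _)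
      have hQ0' : 0 ≤ ∫ x in (0:ℝ)..1, (vx (t₀, x)) ^ 2 :=
        intervalIntegral.integral_nonneg zero_le_one (fun x _ => sq_nonneg _)
      have hP0' : 0 ≤ ∫ x in (0:ℝ)..1, |u t₀ x * vx (t₀, x)| :=
        intervalIntegral.integral_nonneg zero_le_one (fun x _ => abs_nonneg _)
      have hI30' : 0 ≤ ∫ x in (0:ℝ)..1, (u t₀ x) ^ 3 :=
        intervalIntegral.integral_nonneg zero_le_one (fun x _ => pow_nonneg (hupos x) 3)
      have hES' : (∫ x in (0:ℝ)..1, (u t₀ x) ^ 2) ≤ u t₀ xm * M := by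
        have hm1 : ∀ x ∈ Icc (0:ℝ) 1, (u t₀ x) ^ 2 ≤ u t₀ xm * u t₀ x := by
          intro x hx
          nlinarith [mul_nonneg (sub_nonneg.2 (hxmax hx)) (hupos x)]
        have := intervalIntegral.integral_mono_on zero_le_one hiu2
          ((show Continuous fun x => u t₀ xm * u t₀ x from continuous_const.mul hcu).intervalIntegrable 0 1) hm1
        rw [intervalIntegral.integral_const_mul] at this
        calc (∫ x in (0:ℝ)..1, (u t₀ x) ^ 2) ≤ u t₀ xm * ∫ y in (0:ℝ)..1, u t₀ y := this
          _ ≤ u t₀ xm * M := mul_le_mul_of_nonneg_left hU2 hS0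
      have hI3S : (∫ x in (0:ℝ)..1, (u t₀ x) ^ 3)
          ≤ u t₀ xm * ∫ x in (0:ℝ)..1, (u t₀ x) ^ 2 := by
        have hm1 : ∀ x ∈ Icc (0:ℝ) 1, (u t₀ x) ^ 3 ≤ u t₀ xm * (u t₀ x) ^ 2 := by
          intro x hx
          nlinarith [mul_nonneg (sub_nonneg.2 (hxmax hx)) (sq_nonneg (u t₀ x))]
        have := intervalIntegral.integral_mono_on zero_le_one hiu3
          ((show Continuous fun x => u t₀ xm * u t₀ x ^ 2 from continuous_const.mul (hcu.pow 2)).intervalIntegrable 0 1) hm1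
        rwa [intervalIntegral.integral_const_mul] at this
      have hψb : |∫ x in (0:ℝ)..1, f x * u t₀ x| ≤ F * M := by
        have h1 : |∫ x in (0:ℝ)..1, f x * u t₀ x| ≤ ∫ x in (0:ℝ)..1, |f x * u t₀ x| :=
          intervalIntegral.abs_integral_le_integral_abs zero_le_one
        have h2 : ∀ x ∈ Icc (0:ℝ) 1, |f x * u t₀ x| ≤ F * u t₀ x := by
          intro x _
          rw [abs_mul, abs_of_nonneg (hupos x)]
          exact mul_le_mul_of_nonneg_right (hfb x) (hupos x)
        have h3 := intervalIntegral.integral_mono_on (μ := volume) zero_le_one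
          ((hfc.mul hcu).abs.intervalIntegrable 0 1)
          ((show Continuous fun x => F * u t₀ x from continuous_const.mul hcu).intervalIntegrable 0 1) h2
        rw [intervalIntegral.integral_const_mul] at h3
        calc |∫ x in (0:ℝ)..1, f x * u t₀ x| ≤ F * ∫ y in (0:ℝ)..1, u t₀ y := le_trans h1 h3
          _ ≤ F * M := mul_le_mul_of_nonneg_left hU2 hF0
      have hSsq : (u t₀ xm) ^ 2 ≤ M ^ 2 + 2 * ∫ x in (0:ℝ)..1, |u t₀ x * vx (t₀, x)| := by
        have h1 := hsqb xn xm hxn hxm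
        have h2 : (u t₀ xn) ^ 2 ≤ M ^ 2 := by nlinarith [hupos xn]
        linarith
      -- Cauchy–Schwarz via Young
      have hyoung : ∀ l : ℝ, 0 < l →
          2 * (∫ x in (0:ℝ)..1, |u t₀ x * vx (t₀, x)|)
            ≤ l * (∫ x in (0:ℝ)..1, (u t₀ x) ^ 2) + (∫ x in (0:ℝ)..1, (vx (t₀, x)) ^ 2) / l := by
        intro l hl
        have hpt : ∀ x ∈ Icc (0:ℝ) 1, 2 * |u t₀ x * vx (t₀, x)|
            ≤ l * (u t₀ x) ^ 2 + (vx (t₀, x)) ^ 2 / l := by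
          intro x _
          rw [abs_mul]
          have h1 : 2 * l * (|u t₀ x| * |vx (t₀, x)|) ≤ l ^ 2 * (u t₀ x) ^ 2 + (vx (t₀, x)) ^ 2 := by
            nlinarith [sq_nonneg (l * |u t₀ x| - |vx (t₀, x)|), sq_abs (u t₀ x),
              sq_abs (vx (t₀, x))]
          have h2 : 2 * (|u t₀ x| * |vx (t₀, x)|) ≤ (l ^ 2 * (u t₀ x) ^ 2 + (vx (t₀, x)) ^ 2) / l := by
            rw [le_div_iff₀ hl]
            nlinarith [h1]
          have h3 : (l ^ 2 * (u t₀ x) ^ 2 + (vx (t₀, x)) ^ 2) / l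
              = l * (u t₀ x) ^ 2 + (vx (t₀, x)) ^ 2 / l := by
            field_simp
          linarith
        have hconst2 : Continuous (fun x => 2 * |u t₀ x * vx (t₀, x)|) :=
          continuous_const.mul (hcu.mul hcgx).abs
        have hrhsc : Continuous (fun x => l * (u t₀ x) ^ 2 + (vx (t₀, x)) ^ 2 / l) :=
          (continuous_const.mul (hcu.pow 2)).add ((hcgx.pow 2).div_const l)
        have hmono := intervalIntegral.integral_mono_on (μ := volume) zero_le_one
          (hconst2.intervalIntegrable 0 1) (hrhsc.intervalIntegrable 0 1) hpt
        rw [intervalIntegral.integral_const_mul] at hmono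
        rw [intervalIntegral.integral_add
          ((show Continuous fun x => l * u t₀ x ^ 2 from continuous_const.mul (hcu.pow 2)).intervalIntegrable 0 1)
          ((show Continuous fun x => vx (t₀, x) ^ 2 / l from (hcgx.pow 2).div_const l).intervalIntegrable 0 1),
          intervalIntegral.integral_const_mul, intervalIntegral.integral_div] at hmono
        exact hmono
      have hPQ := young_PQ hP0' hE0' hQ0' hyoung
      -- rewrite the integral as the energy-dissipation identity
      have hEC' : 1 + 3 * M ^ 2 + 34 * a * M ^ 4 + 2 * α * F * M ^ 2
          ≤ ∫ x in (0:ℝ)..1, (u t₀ x) ^ 2 := by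
        rw [← hCdef']; exact hCE
      have hsplit : (∫ x in (0:ℝ)..1, 2 * u t₀ x * ((a * u t₀ x ^ 2 + α * f x)
            * (M - ∫ y in (0:ℝ)..1, u t₀ y) - u t₀ x + vxx (t₀, x)))
          = 2 * (M - ∫ y in (0:ℝ)..1, u t₀ y)
              * (a * (∫ x in (0:ℝ)..1, (u t₀ x) ^ 3) + α * ∫ x in (0:ℝ)..1, f x * u t₀ x)
            - 2 * (∫ x in (0:ℝ)..1, (u t₀ x) ^ 2)
            - 2 * ∫ x in (0:ℝ)..1, (vx (t₀, x)) ^ 2 := by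
        have hfun : (fun x => 2 * u t₀ x * ((a * u t₀ x ^ 2 + α * f x)
              * (M - ∫ y in (0:ℝ)..1, u t₀ y) - u t₀ x + vxx (t₀, x)))
            = fun x => (2 * a * (M - ∫ y in (0:ℝ)..1, u t₀ y)) * (u t₀ x) ^ 3
              + ((2 * α * (M - ∫ y in (0:ℝ)..1, u t₀ y)) * (f x * u t₀ x)
                + ((-2) * (u t₀ x) ^ 2 + 2 * (u t₀ x * vxx (t₀, x)))) :=
          funext fun x => by ring
        rw [hfun]
        rw [intervalIntegral.integral_add (hiu3.const_mul _)
          ((hifu.const_mul _).add ((hiu2.const_mul _).add (hiuvxx.const_mul _)))]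
        rw [intervalIntegral.integral_add (hifu.const_mul _)
          ((hiu2.const_mul _).add (hiuvxx.const_mul _))]
        rw [intervalIntegral.integral_add (hiu2.const_mul _) (hiuvxx.const_mul _)]
        rw [intervalIntegral.integral_const_mul, intervalIntegral.integral_const_mul,
          intervalIntegral.integral_const_mul, intervalIntegral.integral_const_mul]
        rw [hibp]
        ring
      rw [hsplit]
      exact key_ineq a M α F _ _ _ _ _ _ _ ha hM hα hF0 hU1 hU2 hψb hI30' hI3S hS0 hES' hSsq
        hP0' hQ0' hPQ hEC' 
  exact barrier_lemma hτpos hEcont hderiv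
end
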